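/- arXiv:2210.06532 — 6 statements merged into one kernel-verified Lean document; each statement's English description precedes it below -/
import Mathlib

section
/- For every Borel probability measure ρ on ℝ^d and every integer N ≥ 2 one has C_N(ρ) ≤ C_{N+1}(ρ), and for every v ∈ C_0(ℝ^d) one has M_{N+1}(v) ≤ M_N(v). (The sequence of multimarginal costs is nondecreasing in the number of marginals, and the dual functionals M_N are nonincreasing in N.) -/
open MeasureTheory ENNReal Filter Topology
open scoped ZeroAtInfty

noncomputable section

/-- The pairwise interaction cost `c_N` on `(ℝ^d)^N`. -/
def pairCost (d : ℕ) (ℓ : ℝ → ℝ≥0∞) (N : ℕ)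
    (x : Fin N → EuclideanSpace ℝ (Fin d)) : ℝ≥0∞ :=
  (2 / ((N : ℝ≥0∞) * ((N : ℝ≥0∞) - 1))) *
    ∑ i : Fin N, ∑ j : Fin N, if i < j then ℓ (dist (x i) (x j)) else 0

/-- The set `Π_N(ρ)` of multimarginal transport plans. -/
def couplings (d : ℕ) (N : ℕ) (ρ : Measure (EuclideanSpace ℝ (Fin d))) :
    Set (Measure (Fin N → EuclideanSpace ℝ (Fin d))) :=
  {P | IsProbabilityMeasure P ∧ ∀ i : Fin N, P.map (fun x => x i) = ρ}

/-- The multimarginal optimal transport cost `C_N(ρ)`. -/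
def CN (d : ℕ) (ℓ : ℝ → ℝ≥0∞) (N : ℕ) (ρ : Measure (EuclideanSpace ℝ (Fin d))) : ℝ≥0∞ :=
  ⨅ P ∈ couplings d N ρ, ∫⁻ x, pairCost d ℓ N x ∂P

/-- `S_N v (x) = (1/N) ∑ v(x_j)`. -/
def SN (d : ℕ) (N : ℕ) (v : EuclideanSpace ℝ (Fin d) → ℝ)
    (x : Fin N → EuclideanSpace ℝ (Fin d)) : ℝ :=
  (∑ i, v (x i)) / N

/-- The dual functional `M_N(v) = sup_x (S_N v (x) - c_N(x))`, as an extended real. -/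
def MN (d : ℕ) (ℓ : ℝ → ℝ≥0∞) (N : ℕ) (v : EuclideanSpace ℝ (Fin d) → ℝ) : EReal :=
  ⨆ x : Fin N → EuclideanSpace ℝ (Fin d),
    ((SN d N v x : ℝ) : EReal) - ((pairCost d ℓ N x : ℝ≥0∞) : EReal)

/-- `M_∞(v) = inf_{N ≥ 2} M_N(v)`. -/
def Minf (d : ℕ) (ℓ : ℝ → ℝ≥0∞) (v : EuclideanSpace ℝ (Fin d) → ℝ) : EReal :=
  ⨅ N : ℕ, ⨅ _ : 2 ≤ N, MN d ℓ N v

/-- The relaxed multimarginal cost `overline{C_N}`, defined by biconjugation. -/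
def relCN (d : ℕ) (ℓ : ℝ → ℝ≥0∞) (N : ℕ)
    (ρ : Measure (EuclideanSpace ℝ (Fin d))) : EReal :=
  ⨆ v : C₀(EuclideanSpace ℝ (Fin d), ℝ),
    ((∫ x, v x ∂ρ : ℝ) : EReal) - MN d ℓ N (fun x => v x)

/-- The limit functional `C_∞`, Fenchel conjugate of `M_∞`. -/
def Cinf (d : ℕ) (ℓ : ℝ → ℝ≥0∞) (ρ : Measure (EuclideanSpace ℝ (Fin d))) : EReal :=
  ⨆ v : C₀(EuclideanSpace ℝ (Fin d), ℝ),
    ((∫ x, v x ∂ρ : ℝ) : EReal) - Minf d ℓ (fun x => v x)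

/-- The direct interaction energy `D(ρ) = ∬ ℓ(|x-y|) dρ dρ`. -/
def Denergy (d : ℕ) (ℓ : ℝ → ℝ≥0∞) (ρ : Measure (EuclideanSpace ℝ (Fin d))) : ℝ≥0∞ :=
  ∫⁻ p : EuclideanSpace ℝ (Fin d) × EuclideanSpace ℝ (Fin d),
    ℓ (dist p.1 p.2) ∂(ρ.prod ρ)

/-- The convolution potential `u_ρ(x) = ∫ ℓ(|x-y|) dρ(y)`. -/
def uPot (d : ℕ) (ℓ : ℝ → ℝ≥0∞) (ρ : Measure (EuclideanSpace ℝ (Fin d)))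
    (x : EuclideanSpace ℝ (Fin d)) : ℝ≥0∞ :=
  ∫⁻ y, ℓ (dist x y) ∂ρ

/-- `n_ε(B)`: the maximal cardinality of an `ε`-separated subset of `B`. -/
def packNum (d : ℕ) (ε : ℝ) (B : Set (EuclideanSpace ℝ (Fin d))) : ℕ :=
  sSup {n : ℕ | ∃ s : Finset (EuclideanSpace ℝ (Fin d)), ↑s ⊆ B ∧ s.card = n ∧
    ∀ x ∈ s, ∀ y ∈ s, x ≠ y → ε ≤ dist x y}

/-- The cube `Q_a = [-a/2, a/2]^d`. -/
def cube (d : ℕ) (a : ℝ) : Set (EuclideanSpace ℝ (Fin d)) :=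
  {x | ∀ i, |x i| ≤ a / 2}

/-- The packing constant `γ_d = inf_{k ≥ 1} S(Q_k)/k^d`. -/
def gammaPack (d : ℕ) : ℝ :=
  ⨅ k : ℕ, (packNum d 1 (cube d ((k + 1 : ℕ) : ℝ)) : ℝ) / ((k + 1 : ℕ) : ℝ) ^ d


section AuxLemmas

lemma sum_succAbove_erase {M : Type*} [AddCommMonoid M] {N : ℕ}
    (k : Fin (N + 1)) (g : Fin (N + 1) → M) :
    ∑ a : Fin N, g (k.succAbove a) = ∑ i ∈ Finset.univ.erase k, g i := by
  have himg : Finset.univ.erase k = Finset.image k.succAbove Finset.univ := by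
    ext i
    simp [Fin.exists_succAbove_eq_iff, eq_comm]
  rw [himg, Finset.sum_image (fun a _ b _ h => Fin.succAbove_right_injective h)]

lemma erase_sum_eq_ite {M : Type*} [AddCommMonoid M] {N : ℕ}
    (k : Fin (N + 1)) (g : Fin (N + 1) → M) :
    ∑ i ∈ Finset.univ.erase k, g i = ∑ i : Fin (N + 1), if i ≠ k then g i else 0 := by
  rw [← Finset.sum_filter]
  congr 1
  ext i
  simp [Finset.mem_erase]

lemma sum_succAbove_single {M : Type*} [AddCommMonoid M] {N : ℕ}
    (g : Fin (N + 1) → M) :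
    ∑ k : Fin (N + 1), ∑ a : Fin N, g (k.succAbove a) = N • ∑ i, g i := by
  calc ∑ k : Fin (N + 1), ∑ a : Fin N, g (k.succAbove a)
      = ∑ k : Fin (N + 1), ∑ i : Fin (N + 1), if i ≠ k then g i else 0 := by
        refine Finset.sum_congr rfl fun k _ => ?_
        rw [sum_succAbove_erase k g, erase_sum_eq_ite]
    _ = ∑ i : Fin (N + 1), ∑ k : Fin (N + 1), if i ≠ k then g i else 0 := Finset.sum_comm
    _ = ∑ i : Fin (N + 1), N • g i := by
        refine Finset.sum_congr rfl fun i _ => ?_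
        rw [← Finset.sum_filter, Finset.sum_const]
        congr 1
        have h1 : Finset.univ.filter (fun k => i ≠ k) = Finset.univ.erase i := by
          ext k
          simp [Finset.mem_erase, ne_comm]
        rw [h1, Finset.card_erase_of_mem (Finset.mem_univ i)]
        simp
    _ = N • ∑ i, g i := (Finset.smul_sum).symm

lemma sum_succAbove_pair {M : Type*} [AddCommMonoid M] {N : ℕ}
    (F : Fin (N + 1) → Fin (N + 1) → M) (hF : ∀ i, F i i = 0) :
    ∑ k : Fin (N + 1), ∑ a : Fin N, ∑ b : Fin N, F (k.succAbove a) (k.succAbove b)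
      = (N - 1) • ∑ i : Fin (N + 1), ∑ j : Fin (N + 1), F i j := by
  calc ∑ k : Fin (N + 1), ∑ a : Fin N, ∑ b : Fin N, F (k.succAbove a) (k.succAbove b)
      = ∑ k : Fin (N + 1), ∑ i : Fin (N + 1), ∑ j : Fin (N + 1),
          if i ≠ k then (if j ≠ k then F i j else 0) else 0 := by
        refine Finset.sum_congr rfl fun k _ => ?_
        calc ∑ a : Fin N, ∑ b : Fin N, F (k.succAbove a) (k.succAbove b)
            = ∑ a : Fin N, ∑ j ∈ Finset.univ.erase k, F (k.succAbove a) j :=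
              Finset.sum_congr rfl fun a _ => sum_succAbove_erase k _
          _ = ∑ i ∈ Finset.univ.erase k, ∑ j ∈ Finset.univ.erase k, F i j :=
              sum_succAbove_erase k (fun i => ∑ j ∈ Finset.univ.erase k, F i j)
          _ = ∑ i ∈ Finset.univ.erase k, ∑ j : Fin (N + 1), if j ≠ k then F i j else 0 :=
              Finset.sum_congr rfl fun i _ => erase_sum_eq_ite k (F i)
          _ = ∑ i : Fin (N + 1), if i ≠ k then
                (∑ j : Fin (N + 1), if j ≠ k then F i j else 0) else 0 :=
              erase_sum_eq_ite k
                (fun i => ∑ j : Fin (N + 1), if j ≠ k then F i j else 0)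
          _ = _ := by
              refine Finset.sum_congr rfl fun i _ => ?_
              split_ifs with h
              · rfl
              · exact Finset.sum_const_zero.symm
    _ = ∑ i : Fin (N + 1), ∑ j : Fin (N + 1), ∑ k : Fin (N + 1),
          if i ≠ k then (if j ≠ k then F i j else 0) else 0 := by
        rw [Finset.sum_comm]
        exact Finset.sum_congr rfl fun i _ => Finset.sum_comm
    _ = ∑ i : Fin (N + 1), ∑ j : Fin (N + 1), (N - 1) • F i j := by
        refine Finset.sum_congr rfl fun i _ => Finset.sum_congr rfl fun j _ => ?_
        by_cases hij : i = j
        · subst hij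
          simp [hF]
        · calc ∑ k : Fin (N + 1), (if i ≠ k then (if j ≠ k then F i j else 0) else 0)
              = ∑ k : Fin (N + 1), (if i ≠ k ∧ j ≠ k then F i j else 0) := by
                refine Finset.sum_congr rfl fun k _ => ?_
                by_cases h1 : i = k <;> by_cases h2 : j = k <;> simp [h1, h2]
            _ = ∑ k ∈ Finset.univ.filter (fun k => i ≠ k ∧ j ≠ k), F i j :=
                (Finset.sum_filter _ _).symm
            _ = (N - 1) • F i j := by
                rw [Finset.sum_const]
                congr 1
                have h1 : Finset.univ.filter (fun k => i ≠ k ∧ j ≠ k)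
                    = (Finset.univ.erase i).erase j := by
                  ext k
                  simp only [Finset.mem_filter, Finset.mem_univ, true_and, Finset.mem_erase,
                    and_true]
                  constructor
                  · rintro ⟨h1, h2⟩; exact ⟨fun h => h2 h.symm, fun h => h1 h.symm⟩
                  · rintro ⟨h1, h2⟩; exact ⟨fun h => h2 h.symm, fun h => h1 h.symm⟩
                rw [h1, Finset.card_erase_of_mem, Finset.card_erase_of_mem (Finset.mem_univ i)]
                · simp
                · exact Finset.mem_erase.2 ⟨fun h => hij h.symm, Finset.mem_univ j⟩
    _ = (N - 1) • ∑ i : Fin (N + 1), ∑ j : Fin (N + 1), F i j := by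
        rw [Finset.smul_sum]
        exact Finset.sum_congr rfl fun i _ => (Finset.smul_sum).symm

lemma ennreal_aux (a b c : ℝ≥0∞) (ha0 : a ≠ 0) (hat : a ≠ ⊤) (hb0 : b ≠ 0) (hbt : b ≠ ⊤)
    (hc0 : c ≠ 0) (hct : c ≠ ⊤) : 2 / (b * a) * a = c * (2 / (c * b)) := by
  calc 2 / (b * a) * a = 2 * (b⁻¹ * a⁻¹) * a := by
        rw [div_eq_mul_inv, ENNReal.mul_inv (Or.inl hb0) (Or.inl hbt)]
    _ = 2 * b⁻¹ * (a⁻¹ * a) := by ring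
    _ = 2 * b⁻¹ := by rw [ENNReal.inv_mul_cancel ha0 hat, mul_one]
    _ = (c * c⁻¹) * (2 * b⁻¹) := by rw [ENNReal.mul_inv_cancel hc0 hct, one_mul]
    _ = c * (2 * (c⁻¹ * b⁻¹)) := by ring
    _ = c * (2 / (c * b)) := by
        rw [← ENNReal.mul_inv (Or.inl hc0) (Or.inl hct), ← div_eq_mul_inv]

lemma ennreal_const_identity {N : ℕ} (hN : 2 ≤ N) :
    (2 / ((N : ℝ≥0∞) * ((N : ℝ≥0∞) - 1))) * ((N - 1 : ℕ) : ℝ≥0∞)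
      = ((N : ℝ≥0∞) + 1) *
        (2 / (((N + 1 : ℕ) : ℝ≥0∞) * (((N + 1 : ℕ) : ℝ≥0∞) - 1))) := by
  have hcast : ((N - 1 : ℕ) : ℝ≥0∞) = (N : ℝ≥0∞) - 1 := by
    rw [ENNReal.natCast_sub]; norm_num
  have hcast2 : (((N + 1 : ℕ) : ℝ≥0∞)) = (N : ℝ≥0∞) + 1 := by push_cast; ring
  have hNsub : ((N : ℝ≥0∞) + 1) - 1 = (N : ℝ≥0∞) := ENNReal.add_sub_cancel_right one_ne_top
  rw [hcast, hcast2, hNsub]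
  refine ennreal_aux _ _ _ ?_ ?_ ?_ ?_ ?_ ?_
  · rw [← hcast]
    simp only [ne_eq, Nat.cast_eq_zero]
    omega
  · rw [← hcast]
    exact ENNReal.natCast_ne_top _
  · simp only [ne_eq, Nat.cast_eq_zero]
    omega
  · exact ENNReal.natCast_ne_top _
  · intro h
    have := add_eq_zero.mp h
    simp at this
  · simp [ENNReal.add_eq_top]

lemma pairCost_succAbove_sum (d : ℕ) (ℓ : ℝ → ℝ≥0∞) {N : ℕ} (hN : 2 ≤ N)
    (x : Fin (N + 1) → EuclideanSpace ℝ (Fin d)) :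
    ∑ k : Fin (N + 1), pairCost d ℓ N (fun a => x (k.succAbove a))
      = ((N : ℝ≥0∞) + 1) * pairCost d ℓ (N + 1) x := by
  set F : Fin (N + 1) → Fin (N + 1) → ℝ≥0∞ :=
    fun i j => if i < j then ℓ (dist (x i) (x j)) else 0 with hFdef
  have hF0 : ∀ i, F i i = 0 := fun i => by simp [hFdef]
  unfold pairCost
  rw [← Finset.mul_sum]
  have hT : ∑ k : Fin (N + 1), ∑ a : Fin N, ∑ b : Fin N,
      (if a < b then ℓ (dist (x (k.succAbove a)) (x (k.succAbove b))) else 0)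
        = ((N - 1 : ℕ)) • ∑ i : Fin (N + 1), ∑ j : Fin (N + 1), F i j := by
    have : ∀ (k : Fin (N+1)) (a b : Fin N),
        (if a < b then ℓ (dist (x (k.succAbove a)) (x (k.succAbove b))) else 0)
          = F (k.succAbove a) (k.succAbove b) := by
      intro k a b
      rw [hFdef]
      simp only [Fin.succAbove_lt_succAbove_iff]
    simp only [this]
    exact sum_succAbove_pair F hF0
  rw [hT, nsmul_eq_mul, ← mul_assoc, ennreal_const_identity hN, mul_assoc]

lemma measurable_pairCost (d : ℕ) {ℓ : ℝ → ℝ≥0∞}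
    (hl : LowerSemicontinuousOn ℓ (Set.Ici 0)) (N : ℕ) :
    Measurable (pairCost d ℓ N) := by
  have hres : LowerSemicontinuous (fun r : Set.Ici (0 : ℝ) => ℓ r) := by
    intro r y hy
    have h2 := hl r r.2 y hy
    rw [nhds_subtype_eq_comap_nhdsWithin]
    exact h2.comap _
  have hm : Measurable (fun r : Set.Ici (0 : ℝ) => ℓ r) := hres.measurable
  refine Measurable.const_mul ?_ _
  refine Finset.measurable_sum _ fun i _ => Finset.measurable_sum _ fun j _ => ?_
  by_cases hij : i < j
  · simp only [if_pos hij]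
    have hcont : Continuous fun x : Fin N → EuclideanSpace ℝ (Fin d) =>
        (⟨dist (x i) (x j), dist_nonneg⟩ : Set.Ici (0 : ℝ)) :=
      ((continuous_apply i).dist (continuous_apply j)).subtype_mk _
    exact hm.comp hcont.measurable
  · simp only [if_neg hij]
    exact measurable_const

lemma SN_succAbove_sum (d : ℕ) {N : ℕ} (hN : 2 ≤ N) (v : EuclideanSpace ℝ (Fin d) → ℝ)
    (x : Fin (N + 1) → EuclideanSpace ℝ (Fin d)) :
    ∑ k : Fin (N + 1), SN d N v (fun a => x (k.succAbove a))
      = ((N : ℝ) + 1) * SN d (N + 1) v x := by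
  have hN0 : (N : ℝ) ≠ 0 := Nat.cast_ne_zero.2 (by omega)
  have hN1 : ((N : ℝ) + 1) ≠ 0 := by positivity
  unfold SN
  rw [← Finset.sum_div, sum_succAbove_single (fun i => v (x i)), nsmul_eq_mul]
  push_cast
  field_simp

end AuxLemmas

/-- monotonicity of `C_N` in `N` and of `M_N` (nonincreasing). -/
theorem statement_0 (d : ℕ) (hd : 1 ≤ d) (ℓ : ℝ → ℝ≥0∞)
    (hl_lsc : LowerSemicontinuousOn ℓ (Set.Ici 0))
    (hl0 : 0 < ℓ 0)
    (hl_decay : Filter.Tendsto ℓ Filter.atTop (nhds 0))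
    (N : ℕ) (hN : 2 ≤ N)
    (ρ : Measure (EuclideanSpace ℝ (Fin d))) (hρ : IsProbabilityMeasure ρ)
    (v : C₀(EuclideanSpace ℝ (Fin d), ℝ)) :
    CN d ℓ N ρ ≤ CN d ℓ (N + 1) ρ ∧
      MN d ℓ (N + 1) (fun x => v x) ≤ MN d ℓ N (fun x => v x) := by
  have hc : ∀ M : ℕ, Measurable (pairCost d ℓ M) := fun M => measurable_pairCost d hl_lsc M
  constructor
  · -- CN is nondecreasing
    refine le_iInf₂ fun P hP => ?_
    obtain ⟨hPprob, hPmarg⟩ := hP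
    have hπ : ∀ k : Fin (N + 1),
        Measurable fun (x : Fin (N + 1) → EuclideanSpace ℝ (Fin d)) (a : Fin N) =>
          x (k.succAbove a) :=
      fun k => measurable_pi_lambda _ fun a => measurable_pi_apply _
    have hk : ∀ k : Fin (N + 1),
        CN d ℓ N ρ ≤ ∫⁻ x, pairCost d ℓ N (fun a => x (k.succAbove a)) ∂P := by
      intro k
      have hQ : P.map (fun x a => x (k.succAbove a)) ∈ couplings d N ρ := by
        refine ⟨Measure.isProbabilityMeasure_map (hπ k).aemeasurable, fun i => ?_⟩
        rw [Measure.map_map (measurable_pi_apply i) (hπ k)]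
        exact hPmarg (k.succAbove i)
      have h1 : CN d ℓ N ρ ≤ ∫⁻ y, pairCost d ℓ N y ∂(P.map (fun x a => x (k.succAbove a))) :=
        iInf₂_le _ hQ
      rwa [lintegral_map (hc N) (hπ k)] at h1
    have hsum : ∑ k : Fin (N + 1), ∫⁻ x, pairCost d ℓ N (fun a => x (k.succAbove a)) ∂P
        = ((N : ℝ≥0∞) + 1) * ∫⁻ x, pairCost d ℓ (N + 1) x ∂P := by
      have hmeas : ∀ k : Fin (N + 1),
          Measurable fun x : Fin (N + 1) → EuclideanSpace ℝ (Fin d) =>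
            pairCost d ℓ N (fun a => x (k.succAbove a)) := fun k => (hc N).comp (hπ k)
      rw [← lintegral_finset_sum _ (fun k _ => hmeas k),
        ← lintegral_const_mul _ (hc (N + 1))]
      exact lintegral_congr fun x => pairCost_succAbove_sum d ℓ hN x
    have hmain : ((N : ℝ≥0∞) + 1) * CN d ℓ N ρ
        ≤ ((N : ℝ≥0∞) + 1) * ∫⁻ x, pairCost d ℓ (N + 1) x ∂P := by
      rw [← hsum]
      calc ((N : ℝ≥0∞) + 1) * CN d ℓ N ρ = ∑ _k : Fin (N + 1), CN d ℓ N ρ := by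
            rw [Finset.sum_const, Finset.card_univ, Fintype.card_fin, nsmul_eq_mul]
            push_cast
            ring
        _ ≤ _ := Finset.sum_le_sum fun k _ => hk k
    refine (ENNReal.mul_le_mul_iff_right ?_ ?_).mp hmain
    · intro h
      have := add_eq_zero.mp h
      simp at this
    · simp [ENNReal.add_eq_top]
  · -- MN is nonincreasing
    refine iSup_le fun x => ?_
    by_cases hx : pairCost d ℓ (N + 1) x = ⊤
    · rw [hx, EReal.coe_ennreal_top, EReal.sub_top]
      exact bot_le
    · have hid := pairCost_succAbove_sum d ℓ hN x
      have hNt : ((N : ℝ≥0∞) + 1) ≠ ⊤ := by simp [ENNReal.add_eq_top]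
      have hfin : ∀ k : Fin (N + 1), pairCost d ℓ N (fun a => x (k.succAbove a)) ≠ ⊤ := by
        intro k hk
        have htop : ∑ k : Fin (N + 1), pairCost d ℓ N (fun a => x (k.succAbove a)) = ⊤ :=
          ENNReal.sum_eq_top.2 ⟨k, Finset.mem_univ k, hk⟩
        rw [hid] at htop
        rcases ENNReal.mul_eq_top.mp htop with h | h
        · exact hx h.2
        · exact hNt h.1
      have hcoe : ∀ (c : ℝ≥0∞), c ≠ ⊤ → ((c.toReal : ℝ) : EReal) = (c : EReal) := by
        intro c hct
        rw [← EReal.toReal_coe_ennreal (x := c)]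
        exact EReal.coe_toReal (by simpa using hct) (EReal.coe_ennreal_ne_bot c)
      set B : ℝ := SN d (N + 1) (fun y => v y) x - (pairCost d ℓ (N + 1) x).toReal with hB
      set A : Fin (N + 1) → ℝ := fun k =>
        SN d N (fun y => v y) (fun a => x (k.succAbove a))
          - (pairCost d ℓ N (fun a => x (k.succAbove a))).toReal with hA
      have hsumA : ∑ _k : Fin (N + 1), B ≤ ∑ k : Fin (N + 1), A k := by
        have h1 : ∑ k : Fin (N + 1), A k = ((N : ℝ) + 1) * B := by
          rw [hA, Finset.sum_sub_distrib, SN_succAbove_sum d hN _ x]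
          have h2 : ∑ k : Fin (N + 1), (pairCost d ℓ N (fun a => x (k.succAbove a))).toReal
              = ((N : ℝ) + 1) * (pairCost d ℓ (N + 1) x).toReal := by
            rw [← ENNReal.toReal_sum (fun k _ => hfin k), hid, ENNReal.toReal_mul]
            congr 1
            try simp
          rw [h2, hB]
          try ring
        rw [Finset.sum_const, Finset.card_univ, Fintype.card_fin, nsmul_eq_mul, h1]
        push_cast
        exact le_of_eq rfl
      obtain ⟨k, -, hkB⟩ := Finset.exists_le_of_sum_le Finset.univ_nonempty hsumA
      calc ((SN d (N + 1) (fun y => v y) x : ℝ) : EReal) - (pairCost d ℓ (N + 1) x : EReal)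
          = ((B : ℝ) : EReal) := by
            rw [hB, EReal.coe_sub, hcoe _ hx]
        _ ≤ ((A k : ℝ) : EReal) := EReal.coe_le_coe_iff.2 hkB
        _ = ((SN d N (fun y => v y) (fun a => x (k.succAbove a)) : ℝ) : EReal)
              - (pairCost d ℓ N (fun a => x (k.succAbove a)) : EReal) := by
            rw [hA, EReal.coe_sub, hcoe _ (hfin k)]
        _ ≤ MN d ℓ N (fun y => v y) :=
            le_iSup (fun z : Fin N → EuclideanSpace ℝ (Fin d) =>
              ((SN d N (fun y => v y) z : ℝ) : EReal) - ((pairCost d ℓ N z : ℝ≥0∞) : EReal))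
              (fun a => x (k.succAbove a))

end
end

section
/- For every v ∈ C_0(ℝ^d) and every integer N ≥ 2: (i) sup{∫ v dρ − C_N(ρ) : ρ a Borel probability measure on ℝ^d} = M_N(v), i.e. the Fenchel conjugate of C_N equals M_N; (ii) M_N(v) = M_N(v₊), where v₊ = max(v,0); (iii) (1/N)·sup v₊ ≤ M_N(v) ≤ sup v₊. In particular M_N(v) ≥ 0. -/
open MeasureTheory ENNReal Filter Topology
open scoped ZeroAtInfty

noncomputable section

/- ### Auxiliary lemmas -/

lemma double_pair_sum {N : ℕ} (F : Fin N → Fin N → ℝ≥0∞) (hF : ∀ i j, F i j = F j i) :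
    2 * ∑ i, ∑ j, (if i < j then F i j else 0) = ∑ i, ∑ j, (if i ≠ j then F i j else 0) := by
  have h1 : ∑ i, ∑ j, (if j < i then F i j else 0) = ∑ i, ∑ j, (if i < j then F i j else 0) := by
    rw [Finset.sum_comm]
    refine Finset.sum_congr rfl fun i _ => Finset.sum_congr rfl fun j _ => ?_
    simp [hF i j]
  rw [two_mul]
  nth_rewrite 2 [← h1]
  rw [← Finset.sum_add_distrib]
  refine Finset.sum_congr rfl fun i _ => ?_
  rw [← Finset.sum_add_distrib]
  refine Finset.sum_congr rfl fun j _ => ?_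
  rcases lt_trichotomy i j with h | h | h
  · simp [h, h.ne, not_lt.2 h.le]
  · simp [h]
  · simp [h, h.ne', not_lt.2 h.le]

lemma pair_sum_comp {N : ℕ} (F : Fin N → Fin N → ℝ≥0∞) (hF : ∀ i j, F i j = F j i)
    (e : Fin N ≃ Fin N) :
    ∑ i, ∑ j, (if i < j then F (e i) (e j) else 0) = ∑ i, ∑ j, (if i < j then F i j else 0) := by
  have h2 := double_pair_sum (fun i j => F (e i) (e j)) (fun i j => hF _ _)
  have h3 := double_pair_sum F hF
  refine (ENNReal.mul_right_inj two_ne_zero ENNReal.ofNat_ne_top).mp ?_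
  rw [h2, h3]
  have : ∀ i j : Fin N, (if i ≠ j then F (e i) (e j) else 0)
      = (fun a b => if a ≠ b then F a b else 0) (e i) (e j) := by
    intro i j
    by_cases h : i = j
    · simp [h]
    · simp only [ne_eq, h, not_false_iff, if_true, EmbeddingLike.apply_eq_iff_eq]
  simp_rw [this]
  exact Fintype.sum_equiv e _ _ fun i => Fintype.sum_equiv e _ _ fun j => rfl

lemma pairCost_comp_equiv (d : ℕ) (ℓ : ℝ → ℝ≥0∞) (N : ℕ)
    (x : Fin N → EuclideanSpace ℝ (Fin d)) (e : Fin N ≃ Fin N) :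
    pairCost d ℓ N (x ∘ e) = pairCost d ℓ N x := by
  unfold pairCost
  congr 1
  exact pair_sum_comp (fun i j => ℓ (dist (x i) (x j)))
    (fun i j => by show ℓ (dist (x i) (x j)) = ℓ (dist (x j) (x i)); rw [dist_comm]) e

lemma measurable_ell_dist (d : ℕ) (ℓ : ℝ → ℝ≥0∞)
    (hl_lsc : LowerSemicontinuousOn ℓ (Set.Ici 0)) (N : ℕ) (i j : Fin N) :
    Measurable (fun x : Fin N → EuclideanSpace ℝ (Fin d) => ℓ (dist (x i) (x j))) := by
  have hlsc : LowerSemicontinuous (fun p : Set.Ici (0:ℝ) => ℓ p) := by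
    intro p y hy
    have h := hl_lsc p p.2 y hy
    rw [← map_nhds_subtype_val p] at h
    exact h
  have hg : Measurable (fun p : Set.Ici (0:ℝ) => ℓ p) := hlsc.measurable
  have hd : Measurable (fun x : Fin N → EuclideanSpace ℝ (Fin d) =>
      (⟨dist (x i) (x j), dist_nonneg⟩ : Set.Ici (0:ℝ))) :=
    Measurable.subtype_mk (((measurable_pi_apply i).dist (measurable_pi_apply j)))
  exact hg.comp hd

lemma pairCost_measurable (d : ℕ) (ℓ : ℝ → ℝ≥0∞)
    (hl_lsc : LowerSemicontinuousOn ℓ (Set.Ici 0)) (N : ℕ) :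
    Measurable (pairCost d ℓ N) := by
  apply Measurable.const_mul
  apply Finset.measurable_sum
  intro i _
  apply Finset.measurable_sum
  intro j _
  by_cases h : i < j
  · simpa [h] using measurable_ell_dist d ℓ hl_lsc N i j
  · simp [h]

lemma v_small_far (d : ℕ) (v : C₀(EuclideanSpace ℝ (Fin d), ℝ)) {ε : ℝ} (hε : 0 < ε) :
    ∃ R : ℝ, ∀ z : EuclideanSpace ℝ (Fin d), R ≤ ‖z‖ → |v z| ≤ ε := by
  have h := Metric.tendsto_nhds.mp v.zero_at_infty' ε hε
  obtain ⟨K, hK, hKs⟩ := Filter.mem_cocompact.mp h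
  obtain ⟨R, hR⟩ := hK.isBounded.subset_closedBall 0
  refine ⟨R + 1, fun z hz => ?_⟩
  have hzK : z ∉ K := by
    intro hzK
    have := hR hzK
    rw [Metric.mem_closedBall, dist_zero_right] at this
    linarith
  have := hKs hzK
  simp only [Set.mem_setOf_eq, dist_zero_right, Real.norm_eq_abs] at this
  exact le_of_lt this

lemma ell_small_far (ℓ : ℝ → ℝ≥0∞) (hl_decay : Tendsto ℓ atTop (nhds 0))
    {δ : ℝ≥0∞} (hδ : 0 < δ) : ∃ R : ℝ, ∀ r : ℝ, R ≤ r → ℓ r ≤ δ := by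
  have h : ℓ ⁻¹' Set.Iio δ ∈ atTop := hl_decay (Iio_mem_nhds hδ)
  rw [Filter.mem_atTop_sets] at h
  obtain ⟨R, hR⟩ := h
  exact ⟨R, fun r hr => le_of_lt (hR r hr)⟩

lemma move_points (d : ℕ) (hd : 1 ≤ d) (ℓ : ℝ → ℝ≥0∞)
    (hl_decay : Tendsto ℓ atTop (nhds 0))
    (v : C₀(EuclideanSpace ℝ (Fin d), ℝ)) (N : ℕ)
    (x : Fin N → EuclideanSpace ℝ (Fin d)) (S : Finset (Fin N))
    {ε : ℝ} (hε : 0 < ε) {δ : ℝ≥0∞} (hδ : 0 < δ) :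
    ∃ x' : Fin N → EuclideanSpace ℝ (Fin d),
      (∀ i, i ∉ S → x' i = x i) ∧ (∀ i ∈ S, |v (x' i)| ≤ ε) ∧
      (∀ i j, i ≠ j → (i ∈ S ∨ j ∈ S) → ℓ (dist (x' i) (x' j)) ≤ δ) := by
  obtain ⟨R₁, hR₁⟩ := v_small_far d v hε
  obtain ⟨R₂, hR₂⟩ := ell_small_far ℓ hl_decay hδ
  set e0 : EuclideanSpace ℝ (Fin d) := EuclideanSpace.single (⟨0, hd⟩ : Fin d) (1:ℝ) with he0def
  have he0 : ‖e0‖ = 1 := by rw [he0def, EuclideanSpace.norm_single]; norm_num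
  have hsum_nonneg : 0 ≤ ∑ i, ‖x i‖ := Finset.sum_nonneg fun i _ => norm_nonneg _
  set C : ℝ := |R₁| + |R₂| + 1 + ∑ i, ‖x i‖ with hCdef
  set T : ℝ := |R₂| + 1 with hTdef
  have hT0 : 0 < T := by have h2 := abs_nonneg R₂; simp only [hTdef]; linarith
  have hCpos : 0 < C := by have h1 := abs_nonneg R₁; have h2 := abs_nonneg R₂; simp only [hCdef]; linarith
  set a : Fin N → ℝ := fun i => C + (i : ℕ) * T with hadef
  have ha_pos : ∀ i, 0 < a i := fun i => by
    have : (0:ℝ) ≤ (i : ℕ) * T := mul_nonneg (Nat.cast_nonneg _) hT0.le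
    simp only [hadef]; linarith
  set x' : Fin N → EuclideanSpace ℝ (Fin d) :=
    fun i => if i ∈ S then (a i) • e0 else x i with hx'def
  have hnorm : ∀ i ∈ S, ‖x' i‖ = a i := by
    intro i hi
    simp only [hx'def, if_pos hi, norm_smul, he0, mul_one, Real.norm_eq_abs,
      abs_of_pos (ha_pos i)]
  refine ⟨x', fun i hi => by simp [hx'def, hi], ?_, ?_⟩
  · intro i hi
    apply hR₁
    rw [hnorm i hi]
    have h1 : |R₁| ≤ C := by simp only [hCdef]; have := abs_nonneg R₂; linarith
    have h2 : (0:ℝ) ≤ (i : ℕ) * T := mul_nonneg (Nat.cast_nonneg _) hT0.le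
    calc R₁ ≤ |R₁| := le_abs_self _
      _ ≤ C := h1
      _ ≤ a i := by simp only [hadef]; linarith
  · intro i j hij hmem
    -- suffices: R₂ ≤ dist (x' i) (x' j)
    apply hR₂
    have hxj_le : ∀ j : Fin N, ‖x j‖ ≤ ∑ i, ‖x i‖ := fun j =>
      Finset.single_le_sum (fun i _ => norm_nonneg (x i)) (Finset.mem_univ j)
    have key : ∀ i j : Fin N, i ∈ S → j ∉ S → R₂ ≤ dist (x' i) (x' j) := by
      intro i j hi hj
      have h1 : ‖x' i‖ - ‖x' j‖ ≤ dist (x' i) (x' j) := by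
        rw [dist_eq_norm]; exact norm_sub_norm_le _ _
      have h2 : ‖x' j‖ = ‖x j‖ := by simp [hx'def, hj]
      have h3 : a i ≥ C := by
        have : (0:ℝ) ≤ (i : ℕ) * T := mul_nonneg (Nat.cast_nonneg _) hT0.le
        simp only [hadef]; linarith
      have h4 := hxj_le j
      have h5 := le_abs_self R₂
      rw [hnorm i hi, h2] at h1
      simp only [hCdef] at h3
      have := abs_nonneg R₁
      linarith
    rcases hmem with hi | hj
    · by_cases hj : j ∈ S
      · -- both moved
        have : dist (x' i) (x' j) = |a i - a j| := by
          simp only [hx'def, if_pos hi, if_pos hj, dist_eq_norm, ← sub_smul, norm_smul, he0,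
            mul_one, Real.norm_eq_abs]
        rw [this]
        have hij' : ((i:ℕ):ℝ) ≠ ((j:ℕ):ℝ) := by
          exact_mod_cast fun h => hij (Fin.ext (by exact_mod_cast h))
        have h6 : (1:ℝ) ≤ |((i:ℕ):ℝ) - ((j:ℕ):ℝ)| := by
          rcases lt_or_gt_of_ne (fun h => hij' h : ((i:ℕ):ℝ) ≠ ((j:ℕ):ℝ)) with h | h
          · have : (i:ℕ) < (j:ℕ) := by exact_mod_cast h
            have : ((i:ℕ):ℝ) + 1 ≤ ((j:ℕ):ℝ) := by exact_mod_cast this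
            rw [abs_sub_comm, abs_of_nonneg (by linarith)]; linarith
          · have : (j:ℕ) < (i:ℕ) := by exact_mod_cast h
            have : ((j:ℕ):ℝ) + 1 ≤ ((i:ℕ):ℝ) := by exact_mod_cast this
            rw [abs_of_nonneg (by linarith)]; linarith
        have h7 : a i - a j = (((i:ℕ):ℝ) - ((j:ℕ):ℝ)) * T := by
          simp only [hadef]; ring
        rw [h7, abs_mul, abs_of_pos hT0]
        have h8 : |R₂| ≤ T := by simp only [hTdef]; linarith
        have h5 := le_abs_self R₂
        nlinarith [abs_nonneg (((i:ℕ):ℝ) - ((j:ℕ):ℝ))]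
      · exact key i j hi hj
    · by_cases hi : i ∈ S
      · -- both moved case handled above? i ∈ S covered by first branch... need symmetric
        have : dist (x' i) (x' j) = |a i - a j| := by
          simp only [hx'def, if_pos hi, if_pos hj, dist_eq_norm, ← sub_smul, norm_smul, he0,
            mul_one, Real.norm_eq_abs]
        rw [this]
        have hij' : ((i:ℕ):ℝ) ≠ ((j:ℕ):ℝ) := by
          exact_mod_cast fun h => hij (Fin.ext (by exact_mod_cast h))
        have h6 : (1:ℝ) ≤ |((i:ℕ):ℝ) - ((j:ℕ):ℝ)| := by
          rcases lt_or_gt_of_ne (fun h => hij' h : ((i:ℕ):ℝ) ≠ ((j:ℕ):ℝ)) with h | h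
          · have : (i:ℕ) < (j:ℕ) := by exact_mod_cast h
            have : ((i:ℕ):ℝ) + 1 ≤ ((j:ℕ):ℝ) := by exact_mod_cast this
            rw [abs_sub_comm, abs_of_nonneg (by linarith)]; linarith
          · have : (j:ℕ) < (i:ℕ) := by exact_mod_cast h
            have : ((j:ℕ):ℝ) + 1 ≤ ((i:ℕ):ℝ) := by exact_mod_cast this
            rw [abs_of_nonneg (by linarith)]; linarith
        have h7 : a i - a j = (((i:ℕ):ℝ) - ((j:ℕ):ℝ)) * T := by
          simp only [hadef]; ring
        rw [h7, abs_mul, abs_of_pos hT0]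
        have h8 : |R₂| ≤ T := by simp only [hTdef]; linarith
        have h5 := le_abs_self R₂
        nlinarith [abs_nonneg (((i:ℕ):ℝ) - ((j:ℕ):ℝ))]
      · rw [dist_comm]; exact key j i hj hi


lemma empirical (d : ℕ) (ℓ : ℝ → ℝ≥0∞)
    (hl_lsc : LowerSemicontinuousOn ℓ (Set.Ici 0)) (N : ℕ) (hN : 2 ≤ N)
    (x : Fin N → EuclideanSpace ℝ (Fin d)) :
    ∃ ρ : Measure (EuclideanSpace ℝ (Fin d)), IsProbabilityMeasure ρ ∧
      (∀ v : C₀(EuclideanSpace ℝ (Fin d), ℝ), ∫ z, v z ∂ρ = (∑ i, v (x i)) / N) ∧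
      CN d ℓ N ρ ≤ pairCost d ℓ N x := by
  haveI : NeZero N := ⟨by omega⟩
  have hN0 : ((N:ℝ≥0∞)) ≠ 0 := by exact_mod_cast (by omega : N ≠ 0)
  have hNt : ((N:ℝ≥0∞)) ≠ ⊤ := ENNReal.natCast_ne_top N
  set ρ : Measure (EuclideanSpace ℝ (Fin d)) :=
    ((N:ℝ≥0∞)⁻¹) • ∑ i : Fin N, Measure.dirac (x i) with hρdef
  have hρuniv : ρ Set.univ = 1 := by
    rw [hρdef, Measure.smul_apply, Measure.finset_sum_apply]
    simp only [Measure.dirac_apply' _ MeasurableSet.univ, Set.indicator_univ,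
      Pi.one_apply, Finset.sum_const, Finset.card_univ, Fintype.card_fin, nsmul_eq_mul, mul_one]
    simp [ENNReal.inv_mul_cancel hN0 hNt]
  have hρprob : IsProbabilityMeasure ρ := ⟨hρuniv⟩
  set P : Measure (Fin N → EuclideanSpace ℝ (Fin d)) :=
    ((N:ℝ≥0∞)⁻¹) • ∑ k : Fin N, Measure.dirac (fun j => x (j + k)) with hPdef
  have hPuniv : IsProbabilityMeasure P := by
    constructor
    rw [hPdef, Measure.smul_apply, Measure.finset_sum_apply]
    simp only [Measure.dirac_apply' _ MeasurableSet.univ, Set.indicator_univ,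
      Pi.one_apply, Finset.sum_const, Finset.card_univ, Fintype.card_fin, nsmul_eq_mul, mul_one]
    simp [ENNReal.inv_mul_cancel hN0 hNt]
  have hmarg : ∀ i : Fin N, P.map (fun y => y i) = ρ := by
    intro i
    refine Measure.ext fun s hs => ?_
    rw [Measure.map_apply (measurable_pi_apply i) hs, hPdef, hρdef,
      Measure.smul_apply, Measure.smul_apply, Measure.finset_sum_apply, Measure.finset_sum_apply]
    congr 1
    have hps : MeasurableSet ((fun y : Fin N → EuclideanSpace ℝ (Fin d) => y i) ⁻¹' s) :=
      measurable_pi_apply i hs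
    have step : ∀ k : Fin N,
        Measure.dirac (fun j => x (j + k)) ((fun y : Fin N → EuclideanSpace ℝ (Fin d) => y i) ⁻¹' s)
          = Measure.dirac (x (i + k)) s := by
      intro k
      rw [Measure.dirac_apply' _ hps, Measure.dirac_apply' _ hs]
      classical
      rw [Set.indicator_apply, Set.indicator_apply]
      have : ((fun j => x (j + k)) ∈ (fun y : Fin N → EuclideanSpace ℝ (Fin d) => y i) ⁻¹' s)
          ↔ x (i + k) ∈ s := Iff.rfl
      simp only [this, Pi.one_apply]
    simp_rw [step]
    exact Fintype.sum_equiv (Equiv.addLeft i) _ _ fun k => rfl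
  refine ⟨ρ, hρprob, ?_, ?_⟩
  · intro v
    have hint : ∀ i : Fin N, Integrable (fun z => v z) (Measure.dirac (x i)) :=
      fun i => by
        have := (v.toBCF).integrable (μ := Measure.dirac (x i))
        exact this
    rw [hρdef, integral_smul_measure, integral_finset_sum_measure (fun i _ => hint i)]
    simp only [integral_dirac]
    rw [ENNReal.toReal_inv]
    simp [div_eq_inv_mul]
  · have hPmem : P ∈ couplings d N ρ := ⟨hPuniv, hmarg⟩
    have h1 : CN d ℓ N ρ ≤ ∫⁻ y, pairCost d ℓ N y ∂P := by
      exact biInf_le _ hPmem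
    refine h1.trans ?_
    rw [hPdef, lintegral_smul_measure, lintegral_finset_sum_measure]
    have step : ∀ k : Fin N,
        ∫⁻ y, pairCost d ℓ N y ∂(Measure.dirac (fun j => x (j + k)))
          = pairCost d ℓ N x := by
      intro k
      rw [lintegral_dirac' _ (pairCost_measurable d ℓ hl_lsc N)]
      have : (fun j => x (j + k)) = x ∘ (Equiv.addRight k) := by
        funext j; simp
      rw [this, pairCost_comp_equiv]
    simp_rw [step]
    simp only [Finset.sum_const, Finset.card_univ, Fintype.card_fin, nsmul_eq_mul]
    rw [smul_eq_mul, ← mul_assoc, ENNReal.inv_mul_cancel hN0 hNt, one_mul]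


lemma ereal_coe_ennreal_eq {c : ℝ≥0∞} (hc : c ≠ ⊤) :
    ((c : EReal)) = ((c.toReal : ℝ) : EReal) := by
  have hne_top : (c : EReal) ≠ ⊤ := by simpa [EReal.coe_ennreal_eq_top_iff] using hc
  have hne_bot : (c : EReal) ≠ ⊥ :=
    ne_of_gt (lt_of_lt_of_le (EReal.bot_lt_coe 0) (EReal.coe_ennreal_nonneg c))
  rw [← EReal.coe_toReal hne_top hne_bot, EReal.toReal_coe_ennreal]

lemma coef_le_one (N : ℕ) (hN : 2 ≤ N) :
    (2 / ((N : ℝ≥0∞) * ((N : ℝ≥0∞) - 1))) ≤ 1 := by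
  apply ENNReal.div_le_of_le_mul
  rw [one_mul]
  have h1 : ((N * (N - 1) : ℕ) : ℝ≥0∞) = (N : ℝ≥0∞) * ((N : ℝ≥0∞) - 1) := by
    push_cast [Nat.cast_sub (by omega : 1 ≤ N)]
    ring
  rw [← h1]
  exact_mod_cast (by nlinarith [Nat.sub_add_cancel (by omega : 1 ≤ N)] : 2 ≤ N * (N - 1))

lemma mn_lower_bound (d : ℕ) (hd : 1 ≤ d) (ℓ : ℝ → ℝ≥0∞)
    (hl_decay : Tendsto ℓ atTop (nhds 0)) (N : ℕ) (hN : 2 ≤ N)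
    (v : C₀(EuclideanSpace ℝ (Fin d), ℝ))
    (x : Fin N → EuclideanSpace ℝ (Fin d)) (S : Finset (Fin N))
    {ε : ℝ} (hε : 0 < ε) (K : ℝ≥0∞)
    (hK : (2 / ((N : ℝ≥0∞) * ((N : ℝ≥0∞) - 1))) *
      (∑ i : Fin N, ∑ j : Fin N,
        if i < j ∧ i ∉ S ∧ j ∉ S then ℓ (dist (x i) (x j)) else 0) ≤ K)
    (hKt : K ≠ ⊤) :
    ((((∑ i ∈ Sᶜ, v (x i)) - N * ε) / N - (K.toReal + N ^ 2 * ε) : ℝ) : EReal)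
      ≤ MN d ℓ N (fun z => v z) := by
  classical
  have hN0 : (0:ℝ) < N := by exact_mod_cast (by omega : 0 < N)
  have hδ : (0:ℝ≥0∞) < ENNReal.ofReal ε := ENNReal.ofReal_pos.2 hε
  obtain ⟨x', hkeep, hsmall, hfar⟩ := move_points d hd ℓ hl_decay v N x S hε hδ
  set δ := ENNReal.ofReal ε with hδdef
  have hSN : ((∑ i ∈ Sᶜ, v (x i)) - N * ε) / N ≤ SN d N (fun z => v z) x' := by
    unfold SN
    rw [div_le_div_iff_of_pos_right hN0]
    rw [← Finset.sum_add_sum_compl S (fun i => v (x' i))]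
    have h1 : ∑ i ∈ Sᶜ, v (x' i) = ∑ i ∈ Sᶜ, v (x i) :=
      Finset.sum_congr rfl fun i hi => by rw [hkeep i (Finset.mem_compl.mp hi)]
    have h2 : -((N:ℝ) * ε) ≤ ∑ i ∈ S, v (x' i) := by
      have h3 : ∑ i ∈ S, (-ε) ≤ ∑ i ∈ S, v (x' i) :=
        Finset.sum_le_sum fun i hi => by
          have := hsmall i hi; rw [abs_le] at this; exact this.1
      rw [Finset.sum_const] at h3
      rw [nsmul_eq_mul] at h3
      have h4 : (S.card : ℝ) ≤ N := by
        exact_mod_cast Finset.card_le_card (Finset.subset_univ S) |>.trans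
          (le_of_eq (by simp))
      nlinarith [hε]
    rw [h1]
    linarith
  have hcost : pairCost d ℓ N x' ≤ K + (N:ℝ≥0∞) ^ 2 * δ := by
    unfold pairCost
    have hterm : ∀ i j : Fin N, (if i < j then ℓ (dist (x' i) (x' j)) else 0)
        ≤ (if i < j ∧ i ∉ S ∧ j ∉ S then ℓ (dist (x i) (x j)) else 0) + δ := by
      intro i j
      by_cases hij : i < j
      · by_cases hS : i ∉ S ∧ j ∉ S
        · rw [if_pos hij, if_pos ⟨hij, hS⟩, hkeep i hS.1, hkeep j hS.2]
          exact le_self_add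
        · have hmem : i ∈ S ∨ j ∈ S := by tauto
          rw [if_pos hij, if_neg (by tauto)]
          exact le_add_of_nonneg_of_le zero_le (hfar i j (ne_of_lt hij) hmem)
      · rw [if_neg hij]; exact zero_le
    have hsum : ∑ i : Fin N, ∑ j : Fin N, (if i < j then ℓ (dist (x' i) (x' j)) else 0)
        ≤ (∑ i : Fin N, ∑ j : Fin N,
            if i < j ∧ i ∉ S ∧ j ∉ S then ℓ (dist (x i) (x j)) else 0)
          + (N:ℝ≥0∞) ^ 2 * δ := by
      calc ∑ i : Fin N, ∑ j : Fin N, (if i < j then ℓ (dist (x' i) (x' j)) else 0)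
          ≤ ∑ i : Fin N, ∑ j : Fin N,
            ((if i < j ∧ i ∉ S ∧ j ∉ S then ℓ (dist (x i) (x j)) else 0) + δ) :=
            Finset.sum_le_sum fun i _ => Finset.sum_le_sum fun j _ => hterm i j
        _ = (∑ i : Fin N, ∑ j : Fin N,
            if i < j ∧ i ∉ S ∧ j ∉ S then ℓ (dist (x i) (x j)) else 0)
          + (N:ℝ≥0∞) ^ 2 * δ := by
            simp_rw [Finset.sum_add_distrib, Finset.sum_const, Finset.card_univ,
              Fintype.card_fin, nsmul_eq_mul]
            congr 1
            rw [pow_two]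
            ring
    calc (2 / ((N : ℝ≥0∞) * ((N : ℝ≥0∞) - 1))) *
        ∑ i : Fin N, ∑ j : Fin N, (if i < j then ℓ (dist (x' i) (x' j)) else 0)
        ≤ (2 / ((N : ℝ≥0∞) * ((N : ℝ≥0∞) - 1))) *
          ((∑ i : Fin N, ∑ j : Fin N,
            if i < j ∧ i ∉ S ∧ j ∉ S then ℓ (dist (x i) (x j)) else 0)
            + (N:ℝ≥0∞) ^ 2 * δ) := mul_le_mul_right hsum _
      _ ≤ K + (N:ℝ≥0∞) ^ 2 * δ := by
          rw [mul_add]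
          refine add_le_add hK ?_
          calc (2 / ((N : ℝ≥0∞) * ((N : ℝ≥0∞) - 1))) * ((N:ℝ≥0∞) ^ 2 * δ)
              ≤ 1 * ((N:ℝ≥0∞) ^ 2 * δ) := mul_le_mul_left (coef_le_one N hN) _
            _ = (N:ℝ≥0∞) ^ 2 * δ := one_mul _
  have hfin : K + (N:ℝ≥0∞) ^ 2 * δ ≠ ⊤ :=
    ENNReal.add_ne_top.2 ⟨hKt, ENNReal.mul_ne_top
      (pow_ne_top (ENNReal.natCast_ne_top N)) ENNReal.ofReal_ne_top⟩
  have h1 : ((SN d N (fun z => v z) x' : ℝ) : EReal)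
      - ((pairCost d ℓ N x' : ℝ≥0∞) : EReal) ≤ MN d ℓ N (fun z => v z) :=
    le_iSup (fun y => ((SN d N (fun z => v z) y : ℝ) : EReal)
      - ((pairCost d ℓ N y : ℝ≥0∞) : EReal)) x'
  refine le_trans ?_ h1
  have h2 : ((pairCost d ℓ N x' : ℝ≥0∞) : EReal) ≤ ((K + (N:ℝ≥0∞) ^ 2 * δ : ℝ≥0∞) : EReal) :=
    EReal.coe_ennreal_le_coe_ennreal_iff.2 hcost
  have htr : (K + (N:ℝ≥0∞) ^ 2 * δ).toReal = K.toReal + (N:ℝ) ^ 2 * ε := by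
    rw [ENNReal.toReal_add hKt (ENNReal.mul_ne_top
      (pow_ne_top (ENNReal.natCast_ne_top N)) ENNReal.ofReal_ne_top),
      ENNReal.toReal_mul, ENNReal.toReal_pow]
    simp [ENNReal.toReal_ofReal hε.le]
  calc ((((∑ i ∈ Sᶜ, v (x i)) - N * ε) / N - (K.toReal + N ^ 2 * ε) : ℝ) : EReal)
      ≤ ((SN d N (fun z => v z) x' - (K + (N:ℝ≥0∞) ^ 2 * δ).toReal : ℝ) : EReal) := by
        rw [EReal.coe_le_coe_iff, htr]
        have := hSN
        linarith
    _ = ((SN d N (fun z => v z) x' : ℝ) : EReal)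
        - ((K + (N:ℝ≥0∞) ^ 2 * δ : ℝ≥0∞) : EReal) := by
        rw [ereal_coe_ennreal_eq hfin, ← EReal.coe_sub]
    _ ≤ ((SN d N (fun z => v z) x' : ℝ) : EReal)
        - ((pairCost d ℓ N x' : ℝ≥0∞) : EReal) := EReal.sub_le_sub le_rfl h2



lemma le_of_forall_sub_le' {g : EReal} {c : ℝ}
    (h : ∀ ε : ℝ, 0 < ε → ((c - ε : ℝ) : EReal) ≤ g) : (c : EReal) ≤ g := by
  by_contra hc
  push_neg at hc
  obtain ⟨r, hr1, hr2⟩ := EReal.exists_between_coe_real hc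
  have hrc : r < c := by exact_mod_cast hr2
  have h2 := h (c - r) (by linarith)
  rw [show c - (c - r) = r by ring] at h2
  exact absurd (lt_of_le_of_lt h2 hr1) (lt_irrefl _)

lemma mn_le_bound (d : ℕ) (ℓ : ℝ → ℝ≥0∞) (N : ℕ) (hN : 2 ≤ N)
    (w : EuclideanSpace ℝ (Fin d) → ℝ) (B : ℝ) (hw : ∀ y, w y ≤ B) :
    MN d ℓ N w ≤ (B : EReal) := by
  have hN0 : (0:ℝ) < N := by exact_mod_cast (by omega : 0 < N)
  refine iSup_le fun x => ?_
  have h1 : SN d N w x ≤ B := by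
    unfold SN
    rw [div_le_iff₀ hN0]
    calc ∑ i, w (x i) ≤ ∑ _i : Fin N, B := Finset.sum_le_sum fun i _ => hw (x i)
      _ = B * N := by simp [Finset.sum_const, mul_comm]
  calc ((SN d N w x : ℝ) : EReal) - ((pairCost d ℓ N x : ℝ≥0∞) : EReal)
      ≤ ((SN d N w x : ℝ) : EReal) - ((0 : ℝ≥0∞) : EReal) :=
        EReal.sub_le_sub le_rfl (EReal.coe_ennreal_nonneg _)
    _ = ((SN d N w x : ℝ) : EReal) := by
        rw [EReal.coe_ennreal_zero, sub_zero]
    _ ≤ (B : EReal) := by exact_mod_cast h1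

/-- the Fenchel conjugate of `C_N` is `M_N`; `M_N(v) = M_N(v₊)`;
and `(1/N) sup v₊ ≤ M_N(v) ≤ sup v₊`. -/
theorem statement_1 (d : ℕ) (hd : 1 ≤ d) (ℓ : ℝ → ℝ≥0∞)
    (hl_lsc : LowerSemicontinuousOn ℓ (Set.Ici 0))
    (hl0 : 0 < ℓ 0)
    (hl_decay : Filter.Tendsto ℓ Filter.atTop (nhds 0))
    (N : ℕ) (hN : 2 ≤ N)
    (v : C₀(EuclideanSpace ℝ (Fin d), ℝ)) :
    (⨆ ρ : {ρ : Measure (EuclideanSpace ℝ (Fin d)) // IsProbabilityMeasure ρ},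
        ((∫ x, v x ∂ρ.1 : ℝ) : EReal) - ((CN d ℓ N ρ.1 : ℝ≥0∞) : EReal))
      = MN d ℓ N (fun x => v x) ∧
    MN d ℓ N (fun x => v x) = MN d ℓ N (fun x => max (v x) 0) ∧
    (((1 / (N : ℝ)) * (⨆ x, max (v x) 0) : ℝ) : EReal) ≤ MN d ℓ N (fun x => v x) ∧
    MN d ℓ N (fun x => v x) ≤ (((⨆ x, max (v x) 0) : ℝ) : EReal) ∧
    (0 : EReal) ≤ MN d ℓ N (fun x => v x) := by
  classical
  haveI : NeZero N := ⟨by omega⟩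
  have hN0 : (0:ℝ) < N := by exact_mod_cast (by omega : 0 < N)
  set B : ℝ := ⨆ x, max (v x) 0 with hBdef
  have hBbd : ∀ y, max (v y) 0 ≤ ‖v.toBCF‖ := fun y =>
    max_le (le_trans (le_abs_self _)
      (by simpa using v.toBCF.norm_coe_le_norm y)) (norm_nonneg _)
  have hBdd : BddAbove (Set.range fun z : EuclideanSpace ℝ (Fin d) => max (v z) 0) :=
    ⟨‖v.toBCF‖, by rintro _ ⟨y, rfl⟩; exact hBbd y⟩
  have hle_B : ∀ y, max (v y) 0 ≤ B := fun y => le_ciSup hBdd y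
  have hB0 : 0 ≤ B := le_trans (le_max_right _ _) (hle_B 0)
  have hfB : ∀ y, v y ≤ B := fun y => (le_max_left _ _).trans (hle_B y)
  have hub : MN d ℓ N (fun x => v x) ≤ (B : EReal) := mn_le_bound d ℓ N hN _ B hfB
  have hubp : MN d ℓ N (fun x => max (v x) 0) ≤ (B : EReal) := mn_le_bound d ℓ N hN _ B hle_B
  -- the lower bound `B/N ≤ M_N(v)`
  have hlbBN : ((B / N : ℝ) : EReal) ≤ MN d ℓ N (fun x => v x) := by
    apply le_of_forall_sub_le'
    intro ε' hε'
    have hNpow : (0:ℝ) < 1 + N + N ^ 3 := by positivity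
    set η : ℝ := ε' * N / (1 + N + N ^ 3) with hηdef
    have hηpos : 0 < η := by apply div_pos (by positivity) hNpow
    have e3 : η / N + η + N ^ 2 * η = ε' := by
      rw [hηdef]
      field_simp
    obtain ⟨y, hy⟩ := exists_lt_of_lt_ciSup (show B - η < B by linarith)
    by_cases hvy : 0 ≤ v y
    · -- keep one point at `y`, move the rest far away
      rw [max_eq_left hvy] at hy
      have hK0 : (2 / ((N : ℝ≥0∞) * ((N : ℝ≥0∞) - 1))) *
          (∑ i : Fin N, ∑ j : Fin N,
            if i < j ∧ i ∉ (({(0 : Fin N)} : Finset (Fin N))ᶜ) ∧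
              j ∉ (({(0 : Fin N)} : Finset (Fin N))ᶜ)
            then ℓ (dist ((fun _ => y) i) ((fun _ => y) j)) else 0) ≤ 0 := by
        have hz : ∀ i j : Fin N,
            (if i < j ∧ i ∉ (({(0 : Fin N)} : Finset (Fin N))ᶜ) ∧
              j ∉ (({(0 : Fin N)} : Finset (Fin N))ᶜ)
            then ℓ (dist ((fun _ => y) i) ((fun _ => y) j)) else 0) = 0 := by
          intro i j
          rw [if_neg]
          rintro ⟨h1, h2, h3⟩
          simp only [Finset.notMem_compl, Finset.mem_singleton] at h2 h3
          rw [h2, h3] at h1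
          exact absurd h1 (lt_irrefl _)
        simp only [hz, Finset.sum_const_zero, mul_zero, le_refl]
      have hbound := mn_lower_bound d hd ℓ hl_decay N hN v (fun _ => y)
        (({(0 : Fin N)} : Finset (Fin N))ᶜ) hηpos 0 hK0 (by simp)
      refine le_trans ?_ hbound
      rw [EReal.coe_le_coe_iff, compl_compl, Finset.sum_singleton, ENNReal.toReal_zero, zero_add]
      have e1 : (v y - N * η) / N = v y / N - η := by field_simp
      have e2 : (B - η) / N = B / N - η / N := by ring
      have e4 : (B - η) / N ≤ v y / N := by
        apply (div_le_div_iff_of_pos_right hN0).mpr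
        linarith
      linarith
    · -- `B < η`: move all points far away
      push_neg at hvy
      rw [max_eq_right hvy.le] at hy
      have hBη : B < η := by linarith
      have hK0 : (2 / ((N : ℝ≥0∞) * ((N : ℝ≥0∞) - 1))) *
          (∑ i : Fin N, ∑ j : Fin N,
            if i < j ∧ i ∉ (Finset.univ : Finset (Fin N)) ∧ j ∉ (Finset.univ : Finset (Fin N))
            then ℓ (dist ((fun _ => y) i) ((fun _ => y) j)) else 0) ≤ 0 := by
        have hz : ∀ i j : Fin N,
            (if i < j ∧ i ∉ (Finset.univ : Finset (Fin N)) ∧ j ∉ (Finset.univ : Finset (Fin N))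
            then ℓ (dist ((fun _ => y) i) ((fun _ => y) j)) else 0) = 0 := by
          intro i j
          rw [if_neg]
          rintro ⟨-, h2, -⟩
          exact h2 (Finset.mem_univ i)
        simp only [hz, Finset.sum_const_zero, mul_zero, le_refl]
      have hbound := mn_lower_bound d hd ℓ hl_decay N hN v (fun _ => y)
        (Finset.univ : Finset (Fin N)) hηpos 0 hK0 (by simp)
      refine le_trans ?_ hbound
      rw [EReal.coe_le_coe_iff, Finset.compl_univ, Finset.sum_empty, ENNReal.toReal_zero, zero_add]
      have e1 : (0 - N * η) / N = -η := by field_simp; ring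
      have e5 : B / N ≤ η / N := (div_le_div_iff_of_pos_right hN0).mpr hBη.le
      linarith
  have h0 : (0 : EReal) ≤ MN d ℓ N (fun x => v x) := by
    refine le_trans ?_ hlbBN
    rw [show ((0:EReal) = ((0:ℝ) : EReal)) from rfl, EReal.coe_le_coe_iff]
    positivity
  have hne_top : MN d ℓ N (fun x => v x) ≠ ⊤ :=
    ne_top_of_le_ne_top (EReal.coe_ne_top B) hub
  have hne_bot : MN d ℓ N (fun x => v x) ≠ ⊥ := by
    intro h
    rw [h, le_bot_iff] at h0
    simp at h0
  set r : ℝ := (MN d ℓ N (fun x => v x)).toReal with hrdef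
  have hr : ((r : ℝ) : EReal) = MN d ℓ N (fun x => v x) := EReal.coe_toReal hne_top hne_bot
  -- part (b) : M_N(v) = M_N(v₊)
  have hb : MN d ℓ N (fun x => v x) = MN d ℓ N (fun x => max (v x) 0) := by
    apply le_antisymm
    · refine iSup_le fun x => ?_
      have hsn : SN d N (fun z => v z) x ≤ SN d N (fun z => max (v z) 0) x := by
        unfold SN
        exact (div_le_div_iff_of_pos_right hN0).mpr
          (Finset.sum_le_sum fun i _ => le_max_left _ _)
      refine le_trans (EReal.sub_le_sub (EReal.coe_le_coe_iff.2 hsn) le_rfl) ?_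
      exact le_iSup (fun y => ((SN d N (fun z => max (v z) 0) y : ℝ) : EReal)
        - ((pairCost d ℓ N y : ℝ≥0∞) : EReal)) x
    · refine iSup_le fun x => ?_
      by_cases hcx : pairCost d ℓ N x = ⊤
      · rw [hcx, EReal.coe_ennreal_top, EReal.sub_top]
        exact bot_le
      · rw [ereal_coe_ennreal_eq hcx, ← EReal.coe_sub]
        apply le_of_forall_sub_le'
        intro ε hε
        have hNpow2 : (0:ℝ) < 1 + N ^ 2 := by positivity
        set η : ℝ := ε / (1 + N ^ 2) with hηdef
        have hηpos : 0 < η := div_pos hε hNpow2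
        set S : Finset (Fin N) := Finset.univ.filter (fun i => v (x i) < 0) with hSdef
        have hKmono : (2 / ((N : ℝ≥0∞) * ((N : ℝ≥0∞) - 1))) *
            (∑ i : Fin N, ∑ j : Fin N,
              if i < j ∧ i ∉ S ∧ j ∉ S then ℓ (dist (x i) (x j)) else 0)
            ≤ pairCost d ℓ N x := by
          unfold pairCost
          apply mul_le_mul_right
          refine Finset.sum_le_sum fun i _ => Finset.sum_le_sum fun j _ => ?_
          split_ifs with h1 h2 h2
          · exact le_rfl
          · exact absurd h1.1 h2
          · exact zero_le
          · exact le_rfl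
        have hbound := mn_lower_bound d hd ℓ hl_decay N hN v x S hηpos
          (pairCost d ℓ N x) hKmono hcx
        refine le_trans ?_ hbound
        rw [EReal.coe_le_coe_iff]
        have hsum : ∑ i ∈ Sᶜ, v (x i) = ∑ i : Fin N, max (v (x i)) 0 := by
          rw [← Finset.sum_add_sum_compl S (fun i => max (v (x i)) 0)]
          have hS0 : ∑ i ∈ S, max (v (x i)) 0 = 0 := by
            apply Finset.sum_eq_zero
            intro i hi
            rw [hSdef, Finset.mem_filter] at hi
            exact max_eq_right hi.2.le
          have hSc : ∑ i ∈ Sᶜ, max (v (x i)) 0 = ∑ i ∈ Sᶜ, v (x i) := by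
            apply Finset.sum_congr rfl
            intro i hi
            rw [Finset.mem_compl, hSdef, Finset.mem_filter] at hi
            push_neg at hi
            exact max_eq_left (hi (Finset.mem_univ i))
          rw [hS0, hSc, zero_add]
        have hSNfp : SN d N (fun z => max (v z) 0) x = (∑ i : Fin N, max (v (x i)) 0) / N := rfl
        rw [hsum, hSNfp]
        have e1 : ((∑ i : Fin N, max (v (x i)) 0) - N * η) / N
            = (∑ i : Fin N, max (v (x i)) 0) / N - η := by field_simp
        have e3 : η + N ^ 2 * η = ε := by
          rw [hηdef]; field_simp
        rw [e1]
        linarith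
  -- part (a)
  have ha : (⨆ ρ : {ρ : Measure (EuclideanSpace ℝ (Fin d)) // IsProbabilityMeasure ρ},
        ((∫ x, v x ∂ρ.1 : ℝ) : EReal) - ((CN d ℓ N ρ.1 : ℝ≥0∞) : EReal))
      = MN d ℓ N (fun x => v x) := by
    apply le_antisymm
    · -- each `ρ` gives a value at most `M_N(v)`
      refine iSup_le fun ρ => ?_
      haveI hρprob : IsProbabilityMeasure ρ.1 := ρ.2
      by_cases hC : CN d ℓ N ρ.1 = ⊤
      · rw [hC, EReal.coe_ennreal_top, EReal.sub_top]
        exact bot_le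
      · rw [ereal_coe_ennreal_eq hC, ← EReal.coe_sub, ← hr]
        apply le_of_forall_sub_le'
        intro ε hε
        rw [EReal.coe_le_coe_iff]
        -- choose a near-optimal coupling
        have hlt : CN d ℓ N ρ.1 < CN d ℓ N ρ.1 + ENNReal.ofReal ε :=
          ENNReal.lt_add_right hC (by simp [ENNReal.ofReal_pos, hε])
        have hex : ∃ P ∈ couplings d N ρ.1,
            (∫⁻ y, pairCost d ℓ N y ∂P) < CN d ℓ N ρ.1 + ENNReal.ofReal ε := by
          by_contra hcon
          push_neg at hcon
          have : CN d ℓ N ρ.1 + ENNReal.ofReal ε ≤ CN d ℓ N ρ.1 :=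
            le_iInf₂ fun P hP => hcon P hP
          exact absurd (lt_of_lt_of_le hlt this) (lt_irrefl _)
        obtain ⟨P, hPmem, hPlt⟩ := hex
        haveI hPprob : IsProbabilityMeasure P := hPmem.1
        have hLP_ne : (∫⁻ y, pairCost d ℓ N y ∂P) ≠ ⊤ := ne_top_of_lt hPlt
        have hmeas := pairCost_measurable d ℓ hl_lsc N
        have hae : ∀ᵐ y ∂P, pairCost d ℓ N y < ⊤ := ae_lt_top hmeas hLP_ne
        have hint_i : ∀ i : Fin N,
            Integrable (fun y : Fin N → EuclideanSpace ℝ (Fin d) => v (y i)) P := by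
          intro i
          have := BoundedContinuousFunction.integrable (μ := P)
            (v.toBCF.compContinuous
              (⟨fun y : Fin N → EuclideanSpace ℝ (Fin d) => y i, continuous_apply i⟩ : C(_, _)))
          exact this
        have hint_SN : Integrable (SN d N (fun z => v z)) P := by
          have h2 : Integrable (fun y : Fin N → EuclideanSpace ℝ (Fin d)
              => (∑ i : Fin N, v (y i))) P :=
            integrable_finset_sum _ (fun i _ => hint_i i)
          have := h2.div_const (N : ℝ)
          exact this
        have hint_c : Integrable (fun y => (pairCost d ℓ N y).toReal) P :=
          integrable_toReal_of_lintegral_ne_top hmeas.aemeasurable hLP_ne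
        have hptw : ∀ᵐ y ∂P, SN d N (fun z => v z) y ≤ r + (pairCost d ℓ N y).toReal := by
          filter_upwards [hae] with y hy
          have h1 : ((SN d N (fun z => v z) y : ℝ) : EReal)
              - ((pairCost d ℓ N y : ℝ≥0∞) : EReal) ≤ ((r : ℝ) : EReal) := by
            rw [hr]
            exact le_iSup (fun w => ((SN d N (fun z => v z) w : ℝ) : EReal)
              - ((pairCost d ℓ N w : ℝ≥0∞) : EReal)) y
          rw [ereal_coe_ennreal_eq hy.ne, ← EReal.coe_sub, EReal.coe_le_coe_iff] at h1
          linarith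
        have hint2 : ∫ y, SN d N (fun z => v z) y ∂P
            ≤ r + (∫⁻ y, pairCost d ℓ N y ∂P).toReal := by
          have h3 := integral_mono_ae hint_SN ((integrable_const r).add hint_c) hptw
          simp only [Pi.add_apply] at h3
          rwa [integral_add (integrable_const r) hint_c, integral_const, probReal_univ,
            one_smul,
            integral_toReal hmeas.aemeasurable hae] at h3
        have hSNint : ∫ y, SN d N (fun z => v z) y ∂P = ∫ z, v z ∂ρ.1 := by
          unfold SN
          rw [integral_div, integral_finset_sum _ (fun i _ => hint_i i)]
          have hstep : ∀ i : Fin N, ∫ y, v (y i) ∂P = ∫ z, v z ∂ρ.1 := by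
            intro i
            rw [← hPmem.2 i, integral_map (measurable_pi_apply i).aemeasurable
              (v.continuous.aestronglyMeasurable)]
          simp_rw [hstep]
          rw [Finset.sum_const, Finset.card_univ, Fintype.card_fin, nsmul_eq_mul]
          field_simp
        have htr : (∫⁻ y, pairCost d ℓ N y ∂P).toReal ≤ (CN d ℓ N ρ.1).toReal + ε := by
          have h4 := ENNReal.toReal_mono
            (ENNReal.add_ne_top.2 ⟨hC, ENNReal.ofReal_ne_top⟩) hPlt.le
          rwa [ENNReal.toReal_add hC ENNReal.ofReal_ne_top,
            ENNReal.toReal_ofReal hε.le] at h4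
        rw [hSNint] at hint2
        linarith
    · -- `M_N(v)` is at most the supremum, via empirical measures
      refine iSup_le fun x => ?_
      obtain ⟨ρ₀, hρ₀prob, hρ₀int, hρ₀CN⟩ := empirical d ℓ hl_lsc N hN x
      have h1 : (SN d N (fun z => v z) x : ℝ) = ∫ z, v z ∂ρ₀ := by
        rw [hρ₀int v]
        rfl
      have hterm : ((SN d N (fun z => v z) x : ℝ) : EReal)
          - ((pairCost d ℓ N x : ℝ≥0∞) : EReal)
          ≤ ((∫ z, v z ∂ρ₀ : ℝ) : EReal) - ((CN d ℓ N ρ₀ : ℝ≥0∞) : EReal) := by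
        rw [h1]
        exact EReal.sub_le_sub le_rfl (EReal.coe_ennreal_le_coe_ennreal_iff.2 hρ₀CN)
      refine le_trans hterm ?_
      exact le_iSup (fun ρ : {ρ : Measure (EuclideanSpace ℝ (Fin d)) //
        IsProbabilityMeasure ρ} => ((∫ z, v z ∂ρ.1 : ℝ) : EReal)
          - ((CN d ℓ N ρ.1 : ℝ≥0∞) : EReal)) ⟨ρ₀, hρ₀prob⟩
  refine ⟨ha, hb, ?_, hub, h0⟩
  rw [show (1 / (N:ℝ)) * B = B / N by ring]
  exact hlbBN


end
end

section
/- For every v ∈ C_0(ℝ^d) and all integers 2 ≤ K ≤ N one has M_N(v) ≥ (K(K−1))/(N(N−1)) · M_K( ((N−1)/(K−1))·v ). -/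
open MeasureTheory ENNReal Filter Topology
open scoped ZeroAtInfty

noncomputable section

set_option maxHeartbeats 2000000 in
/-- `M_N(v) ≥ (K(K-1))/(N(N-1)) · M_K(((N-1)/(K-1)) v)`. -/
theorem statement_2 (d : ℕ) (hd : 1 ≤ d) (ℓ : ℝ → ℝ≥0∞)
    (hl_lsc : LowerSemicontinuousOn ℓ (Set.Ici 0))
    (hl0 : 0 < ℓ 0)
    (hl_decay : Filter.Tendsto ℓ Filter.atTop (nhds 0))
    (K N : ℕ) (hK : 2 ≤ K) (hKN : K ≤ N)
    (v : C₀(EuclideanSpace ℝ (Fin d), ℝ)) :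
    ((((K : ℝ) * ((K : ℝ) - 1)) / ((N : ℝ) * ((N : ℝ) - 1)) : ℝ) : EReal) *
        MN d ℓ K (fun x => (((N : ℝ) - 1) / ((K : ℝ) - 1)) * v x)
      ≤ MN d ℓ N (fun x => v x) := by
  classical
  have hN : 2 ≤ N := hK.trans hKN
  have hKR : (2:ℝ) ≤ (K:ℝ) := by exact_mod_cast hK
  have hNR : (2:ℝ) ≤ (N:ℝ) := by exact_mod_cast hN
  have hK0 : (0:ℝ) < K := by linarith
  have hN0 : (0:ℝ) < N := by linarith
  have hK1 : (0:ℝ) < (K:ℝ) - 1 := by linarith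
  have hN1 : (0:ℝ) < (N:ℝ) - 1 := by linarith
  set w : EuclideanSpace ℝ (Fin d) → ℝ :=
    fun x => (((N : ℝ) - 1) / ((K : ℝ) - 1)) * v x with hw
  set lam : ℝ := ((K : ℝ) * ((K : ℝ) - 1)) / ((N : ℝ) * ((N : ℝ) - 1)) with hlam
  have hlam_pos : 0 < lam := by positivity
  -- the key pointwise inequality
  have key : ∀ y : Fin K → EuclideanSpace ℝ (Fin d),
      ((lam : ℝ) : EReal) *
          (((SN d K w y : ℝ) : EReal) - ((pairCost d ℓ K y : ℝ≥0∞) : EReal))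
        ≤ MN d ℓ N (fun x => v x) := by
    intro y
    by_cases htop : pairCost d ℓ K y = ⊤
    · rw [htop]
      rw [show ((⊤ : ℝ≥0∞) : EReal) = ⊤ from rfl, EReal.sub_top,
        EReal.coe_mul_bot_of_pos hlam_pos]
      exact bot_le
    · -- finite case
      set c : ℝ := (pairCost d ℓ K y).toReal with hc
      have hcoe : ((pairCost d ℓ K y : ℝ≥0∞) : EReal) = ((c : ℝ) : EReal) := by
        rw [hc, ← EReal.toReal_coe_ennreal,
          EReal.coe_toReal (by simpa using htop) (EReal.coe_ennreal_ne_bot _)]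
      rw [hcoe, ← EReal.coe_sub, ← EReal.coe_mul]
      set r₀ : ℝ := lam * (SN d K w y - c) with hr₀
      set SY : ℝ := ∑ j : Fin K, v (y j) with hSYdef
      have main : ∀ ε : ℝ, 0 < ε → ((r₀ - ε : ℝ) : EReal) ≤ MN d ℓ N (fun x => v x) := by
        intro ε hε
        -- constants
        set C : ℝ := ((N:ℝ) - (K:ℝ))/(N:ℝ) + 2*((N:ℝ)*(N:ℝ))/((N:ℝ)*((N:ℝ)-1)) with hCdef
        have hNK : (0:ℝ) ≤ (N:ℝ) - (K:ℝ) := sub_nonneg.2 (by exact_mod_cast hKN)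
        have hC0 : 0 ≤ C := add_nonneg (div_nonneg hNK hN0.le) (by positivity)
        set ε' : ℝ := ε / (C + 1) with hε'def
        have hε' : 0 < ε' := div_pos hε (by linarith)
        -- tail bound for ℓ
        obtain ⟨R₁, hR₁⟩ : ∃ R₁ : ℝ, ∀ t ≥ R₁, ℓ t ≤ ENNReal.ofReal ε' := by
          have h0 : (0:ℝ≥0∞) < ENNReal.ofReal ε' := by simpa using hε'
          have h1 := hl_decay.eventually_lt_const h0
          rw [eventually_atTop] at h1
          obtain ⟨R₁, hR₁⟩ := h1
          exact ⟨R₁, fun t ht => (hR₁ t ht).le⟩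
        -- tail bound for v
        obtain ⟨R₂, hR₂⟩ : ∃ R₂ : ℝ, ∀ z : EuclideanSpace ℝ (Fin d), R₂ < ‖z‖ → |v z| ≤ ε' := by
          have hv : Tendsto (fun z => v z) (cocompact (EuclideanSpace ℝ (Fin d))) (nhds 0) :=
            zero_at_infty v
          have hev : ∀ᶠ z in cocompact (EuclideanSpace ℝ (Fin d)), |v z| ≤ ε' := by
            filter_upwards [Metric.tendsto_nhds.mp hv ε' hε'] with z hz
            simpa [Real.dist_eq] using hz.le
          rw [Filter.hasBasis_cocompact.eventually_iff] at hev
          obtain ⟨s, hs, hss⟩ := hev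
          obtain ⟨R₂, hR₂⟩ := hs.isBounded.subset_closedBall 0
          refine ⟨R₂, fun z hz => hss ?_⟩
          intro hzs
          have h2 := hR₂ hzs
          rw [Metric.mem_closedBall, dist_zero_right] at h2
          linarith
        set R : ℝ := max (max R₁ R₂) 0 + 1 with hRdef
        have hmax0 : (0:ℝ) ≤ max (max R₁ R₂) 0 := le_max_right _ _
        have hR0 : 0 < R := by rw [hRdef]; linarith
        have hRR₁ : R₁ ≤ R := by
          have h1 := le_max_left R₁ R₂
          have h2 := le_max_left (max R₁ R₂) (0:ℝ)
          rw [hRdef]; linarith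
        have hRR₂ : R₂ < R := by
          have h1 := le_max_right R₁ R₂
          have h2 := le_max_left (max R₁ R₂) (0:ℝ)
          rw [hRdef]; linarith
        -- the configuration
        have hd0 : 0 < d := hd
        set e : EuclideanSpace ℝ (Fin d) := EuclideanSpace.single (⟨0, hd0⟩ : Fin d) (1:ℝ)
          with he_def
        have he : ‖e‖ = 1 := by rw [he_def, EuclideanSpace.norm_single]; norm_num
        set M : ℝ := ∑ j : Fin K, ‖y j‖ with hMdef
        have hMy : ∀ j, ‖y j‖ ≤ M := fun j =>
          Finset.single_le_sum (f := fun j => ‖y j‖) (fun _ _ => norm_nonneg _)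
            (Finset.mem_univ j)
        have hM0 : 0 ≤ M := Finset.sum_nonneg fun _ _ => norm_nonneg _
        set X : ℕ → EuclideanSpace ℝ (Fin d) :=
          fun n => if h : n < K then y ⟨n, h⟩ else (M + n * R) • e with hXdef
        set x : Fin N → EuclideanSpace ℝ (Fin d) := fun i => X i with hxdef
        have hXy : ∀ (j : Fin K), X j = y j := fun j => by
          rw [hXdef]; simp [j.isLt]
        have hfar_norm : ∀ n, K ≤ n → ‖X n‖ = M + n * R := by
          intro n hn
          rw [hXdef]
          simp only [dif_neg (not_lt.mpr hn)]
          rw [norm_smul, he, mul_one, Real.norm_eq_abs, abs_of_nonneg]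
          have : (0:ℝ) ≤ (n:ℝ) * R := by positivity
          linarith
        have hfar_big : ∀ n, K ≤ n → R ≤ ‖X n‖ := by
          intro n hn
          rw [hfar_norm n hn]
          have h2 : (2:ℝ) ≤ (n:ℝ) := le_trans hKR (by exact_mod_cast hn)
          nlinarith
        have hvfar : ∀ n, K ≤ n → |v (X n)| ≤ ε' := fun n hn =>
          hR₂ _ (lt_of_lt_of_le hRR₂ (hfar_big n hn))
        have hldist : ∀ m n : ℕ, m < n → ¬ n < K →
            ℓ (dist (X m) (X n)) ≤ ENNReal.ofReal ε' := by
          intro m n hmn hnK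
          have hnK' : K ≤ n := not_lt.mp hnK
          apply hR₁
          have hnn : ‖X n‖ = M + n * R := hfar_norm n hnK'
          have hn2 : (2:ℝ) ≤ (n:ℝ) := le_trans hKR (by exact_mod_cast hnK')
          by_cases hmK : m < K
          · have h1 : ‖X m‖ ≤ M := by
              rw [hXdef]; simp only [dif_pos hmK]; exact hMy _
            have h2 : ‖X n‖ - ‖X m‖ ≤ ‖X n - X m‖ := norm_sub_norm_le _ _
            rw [dist_comm, dist_eq_norm]
            nlinarith
          · have hXm : X m = (M + m * R) • e := by rw [hXdef]; simp [hmK]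
            have hXn : X n = (M + n * R) • e := by rw [hXdef]; simp [not_lt.mp hnK]
            have hmn1 : (m:ℝ) + 1 ≤ (n:ℝ) := by exact_mod_cast hmn
            rw [dist_eq_norm, hXm, hXn, ← sub_smul, norm_smul, he, mul_one,
              Real.norm_eq_abs]
            have : (M + m * R) - (M + n * R) = -(((n:ℝ) - m) * R) := by ring
            rw [this, abs_neg, abs_of_nonneg (by nlinarith)]
            nlinarith
        -- lower bound for the linear part
        have hsum : SY - ((N:ℝ) - (K:ℝ)) * ε' ≤ ∑ i : Fin N, v (x i) := by
          have e1 : ∑ i : Fin N, v (x i) = ∑ n ∈ Finset.range N, v (X n) :=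
            Fin.sum_univ_eq_sum_range (fun n => v (X n)) N
          have e2 : (∑ n ∈ Finset.range N, v (X n)) =
              (∑ n ∈ Finset.range K, v (X n)) + ∑ n ∈ Finset.Ico K N, v (X n) := by
            rw [Finset.range_eq_Ico, ← Finset.sum_Ico_consecutive _ (Nat.zero_le K) hKN,
              ← Finset.range_eq_Ico]
          have e3 : (∑ n ∈ Finset.range K, v (X n)) = SY := by
            rw [← Fin.sum_univ_eq_sum_range (fun n => v (X n)) K, hSYdef]
            exact Finset.sum_congr rfl fun j _ => by rw [hXy j]
          have e4 : -(((N:ℝ) - (K:ℝ)) * ε') ≤ ∑ n ∈ Finset.Ico K N, v (X n) := by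
            have hterm : ∀ n ∈ Finset.Ico K N, -ε' ≤ v (X n) := by
              intro n hn
              rw [Finset.mem_Ico] at hn
              exact (abs_le.mp (hvfar n hn.1)).1
            calc -(((N:ℝ) - (K:ℝ)) * ε') = ∑ _n ∈ Finset.Ico K N, (-ε') := by
                  rw [Finset.sum_const, Nat.card_Ico, nsmul_eq_mul, Nat.cast_sub hKN]; ring
              _ ≤ _ := Finset.sum_le_sum hterm
          rw [e1, e2, e3]; linarith
        -- upper bound for the interaction part
        set ε₂ : ℝ≥0∞ := ENNReal.ofReal ε' with hε₂def
        set B : ℝ≥0∞ := ∑ i : Fin K, ∑ j : Fin K, if i < j then ℓ (dist (y i) (y j)) else 0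
          with hBdef
        set G : ℕ → ℕ → ℝ≥0∞ :=
          fun m n => if m < n ∧ n < K then ℓ (dist (X m) (X n)) else 0 with hGdef
        have hT : (∑ i : Fin N, ∑ j : Fin N, if i < j then ℓ (dist (x i) (x j)) else 0)
            ≤ B + (N * N : ℕ) * ε₂ := by
          have e1 : (∑ i : Fin N, ∑ j : Fin N, if i < j then ℓ (dist (x i) (x j)) else 0)
              = ∑ m ∈ Finset.range N, ∑ n ∈ Finset.range N,
                  (if m < n then ℓ (dist (X m) (X n)) else 0) := by
            rw [← Fin.sum_univ_eq_sum_range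
              (fun m => ∑ n ∈ Finset.range N, (if m < n then ℓ (dist (X m) (X n)) else 0)) N]
            refine Finset.sum_congr rfl fun i _ => ?_
            rw [← Fin.sum_univ_eq_sum_range
              (fun n => if (i:ℕ) < n then ℓ (dist (X i) (X n)) else 0) N]
            exact Finset.sum_congr rfl fun j _ => rfl
          have e2 : ∀ m n : ℕ,
              (if m < n then ℓ (dist (X m) (X n)) else 0) ≤ G m n + ε₂ := by
            intro m n
            by_cases hmn : m < n
            · by_cases hnK : n < K
              · rw [if_pos hmn]
                simp only [hGdef, if_pos (show m < n ∧ n < K from ⟨hmn, hnK⟩)]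
                exact le_self_add
              · rw [if_pos hmn]
                simp only [hGdef, if_neg (show ¬(m < n ∧ n < K) by tauto)]
                rw [zero_add]
                exact hldist m n hmn hnK
            · rw [if_neg hmn]; exact zero_le
          have e3 : (∑ m ∈ Finset.range N, ∑ n ∈ Finset.range N,
                  (if m < n then ℓ (dist (X m) (X n)) else 0))
              ≤ (∑ m ∈ Finset.range N, ∑ n ∈ Finset.range N, G m n) + (N*N : ℕ) * ε₂ := by
            have inner : ∀ m, (∑ n ∈ Finset.range N, (G m n + ε₂))
                = (∑ n ∈ Finset.range N, G m n) + (N:ℕ) * ε₂ := by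
              intro m
              rw [Finset.sum_add_distrib, Finset.sum_const, Finset.card_range, nsmul_eq_mul]
            calc (∑ m ∈ Finset.range N, ∑ n ∈ Finset.range N,
                    (if m < n then ℓ (dist (X m) (X n)) else 0))
                ≤ ∑ m ∈ Finset.range N, ∑ n ∈ Finset.range N, (G m n + ε₂) :=
                  Finset.sum_le_sum fun m _ => Finset.sum_le_sum fun n _ => e2 m n
              _ = (∑ m ∈ Finset.range N, ∑ n ∈ Finset.range N, G m n) + (N*N:ℕ) * ε₂ := by
                  rw [Finset.sum_congr rfl (fun m _ => inner m), Finset.sum_add_distrib,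
                    Finset.sum_const, Finset.card_range, nsmul_eq_mul, Nat.cast_mul, mul_assoc]
          have e4 : (∑ m ∈ Finset.range N, ∑ n ∈ Finset.range N, G m n) = B := by
            have step1 : ∀ m, (∑ n ∈ Finset.range N, G m n) = ∑ n ∈ Finset.range K, G m n := by
              intro m
              symm
              apply Finset.sum_subset (Finset.range_subset_range.mpr hKN)
              intro n _ hn
              simp only [Finset.mem_range] at hn
              simp only [hGdef]
              exact if_neg (by tauto)
            have step2 : (∑ m ∈ Finset.range N, ∑ n ∈ Finset.range K, G m n)
                = ∑ m ∈ Finset.range K, ∑ n ∈ Finset.range K, G m n := by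
              symm
              apply Finset.sum_subset (Finset.range_subset_range.mpr hKN)
              intro m _ hm
              simp only [Finset.mem_range] at hm
              apply Finset.sum_eq_zero
              intro n _
              simp only [hGdef]
              exact if_neg (fun hcon => hm (hcon.1.trans hcon.2))
            rw [Finset.sum_congr rfl (fun m _ => step1 m), step2, hBdef,
              ← Fin.sum_univ_eq_sum_range (fun m => ∑ n ∈ Finset.range K, G m n) K]
            refine Finset.sum_congr rfl fun i _ => ?_
            rw [← Fin.sum_univ_eq_sum_range (fun n => G (i:ℕ) n) K]
            refine Finset.sum_congr rfl fun j _ => ?_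
            simp only [hGdef]
            by_cases hij : (i:ℕ) < (j:ℕ)
            · rw [if_pos (show (i:ℕ) < (j:ℕ) ∧ (j:ℕ) < K from ⟨hij, j.isLt⟩),
                if_pos (show i < j from hij), hXy i, hXy j]
            · rw [if_neg (show ¬((i:ℕ) < (j:ℕ) ∧ (j:ℕ) < K) by tauto),
                if_neg (show ¬ i < j from hij)]
          rw [e1, ← e4]; exact e3
        have hPC : pairCost d ℓ N x ≤
            (2 / ((N:ℝ≥0∞) * ((N:ℝ≥0∞) - 1))) * (B + (N*N:ℕ) * ε₂) :=
          mul_le_mul_right hT _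
        -- finiteness
        have hcKtop : ((K:ℝ≥0∞) * ((K:ℝ≥0∞) - 1)) ≠ ⊤ :=
          ENNReal.mul_ne_top (ENNReal.natCast_ne_top K)
            ((tsub_le_self.trans_lt (ENNReal.natCast_lt_top K)).ne)
        have hBtop : B ≠ ⊤ := by
          intro hB
          apply htop
          have hcK0 : (2 / ((K:ℝ≥0∞) * ((K:ℝ≥0∞) - 1))) ≠ 0 :=
            (ENNReal.div_pos (by norm_num) hcKtop).ne'
          have hpc : pairCost d ℓ K y = (2 / ((K:ℝ≥0∞) * ((K:ℝ≥0∞) - 1))) * B := rfl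
          rw [hpc, hB, ENNReal.mul_top hcK0]
        have hdN0 : ((N:ℝ≥0∞) * ((N:ℝ≥0∞) - 1)) ≠ 0 := by
          apply mul_ne_zero
          · exact Nat.cast_ne_zero.mpr (by omega)
          · rw [← pos_iff_ne_zero, tsub_pos_iff_lt]
            exact_mod_cast one_lt_two.trans_le (by exact_mod_cast hN)
        have hRHS_top : (2 / ((N:ℝ≥0∞) * ((N:ℝ≥0∞) - 1))) * (B + (N*N:ℕ) * ε₂) ≠ ⊤ := by
          apply ENNReal.mul_ne_top
          · exact (ENNReal.div_lt_top (by norm_num) hdN0).ne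
          · exact ENNReal.add_ne_top.mpr
              ⟨hBtop, ENNReal.mul_ne_top (ENNReal.natCast_ne_top _) ENNReal.ofReal_ne_top⟩
        have hfin : pairCost d ℓ N x ≠ ⊤ := (lt_of_le_of_lt hPC hRHS_top.lt_top).ne
        have htoReal_dN : ((N:ℝ≥0∞) * ((N:ℝ≥0∞) - 1)).toReal = (N:ℝ) * ((N:ℝ) - 1) := by
          rw [ENNReal.toReal_mul, ENNReal.toReal_sub_of_le
            (by exact_mod_cast Nat.one_le_of_lt hN) (ENNReal.natCast_ne_top N)]
          simp
        have htoReal_dK : ((K:ℝ≥0∞) * ((K:ℝ≥0∞) - 1)).toReal = (K:ℝ) * ((K:ℝ) - 1) := by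
          rw [ENNReal.toReal_mul, ENNReal.toReal_sub_of_le
            (by exact_mod_cast Nat.one_le_of_lt hK) (ENNReal.natCast_ne_top K)]
          simp
        set b : ℝ := B.toReal with hbdef
        have hb0 : 0 ≤ b := ENNReal.toReal_nonneg
        have hPCR : (pairCost d ℓ N x).toReal
            ≤ (2 / ((N:ℝ) * ((N:ℝ) - 1))) * (b + ((N:ℝ) * (N:ℝ)) * ε') := by
          have h1 := ENNReal.toReal_mono hRHS_top hPC
          rw [ENNReal.toReal_mul, ENNReal.toReal_div, htoReal_dN,
            ENNReal.toReal_add hBtop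
              (ENNReal.mul_ne_top (ENNReal.natCast_ne_top _) ENNReal.ofReal_ne_top),
            ENNReal.toReal_mul, ENNReal.toReal_ofReal hε'.le, ENNReal.toReal_natCast] at h1
          have h2 : ((N*N : ℕ) : ℝ) = (N:ℝ) * (N:ℝ) := by push_cast; ring
          rw [h2] at h1
          simpa using h1
        have hcB : c = (2 / ((K:ℝ) * ((K:ℝ) - 1))) * b := by
          have hpc : pairCost d ℓ K y = (2 / ((K:ℝ≥0∞) * ((K:ℝ≥0∞) - 1))) * B := rfl
          rw [hc, hpc, ENNReal.toReal_mul, ENNReal.toReal_div, htoReal_dK]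
          norm_num
          exact Or.inl rfl
        have hSKw : SN d K w y = (((N:ℝ)-1)/((K:ℝ)-1)) * SY / K := by
          simp only [SN, hw, ← Finset.mul_sum, hSYdef]
        -- assembling
        have hSNx : (SY - ((N:ℝ)-(K:ℝ)) * ε') / N ≤ SN d N (fun x => v x) x := by
          simp only [SN]
          have := hsum
          gcongr
        have hCe : C * ε' ≤ ε := by
          rw [hε'def]
          have h1 : C / (C+1) ≤ 1 := (div_le_one (by linarith)).mpr (by linarith)
          calc C * (ε/(C+1)) = ε * (C/(C+1)) := by ring
            _ ≤ ε * 1 := mul_le_mul_of_nonneg_left h1 hε.le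
            _ = ε := mul_one ε
        have hid : r₀ = SY/(N:ℝ) - (2/((N:ℝ)*((N:ℝ)-1))) * b := by
          rw [hr₀, hSKw, hcB, hlam]
          field_simp
        have hterm : ((r₀ - ε : ℝ) : EReal) ≤
            ((SN d N (fun x => v x) x : ℝ) : EReal) - ((pairCost d ℓ N x : ℝ≥0∞) : EReal) := by
          have hco : ((pairCost d ℓ N x : ℝ≥0∞) : EReal)
              = (((pairCost d ℓ N x).toReal : ℝ) : EReal) := by
            rw [← EReal.toReal_coe_ennreal,
              EReal.coe_toReal (by simpa using hfin) (EReal.coe_ennreal_ne_bot _)]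
          rw [hco, ← EReal.coe_sub, EReal.coe_le_coe_iff]
          have final : r₀ - C * ε' ≤ SN d N (fun x => v x) x - (pairCost d ℓ N x).toReal := by
            have heq : r₀ - C*ε' = (SY - ((N:ℝ)-(K:ℝ))*ε')/N
                - (2/((N:ℝ)*((N:ℝ)-1))) * (b + ((N:ℝ)*(N:ℝ))*ε') := by
              rw [hid, hCdef]
              field_simp
              ring
            rw [heq]
            exact sub_le_sub hSNx hPCR
          linarith
        refine hterm.trans ?_
        unfold MN
        exact le_iSup (fun z => ((SN d N (fun x => v x) z : ℝ) : EReal)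
          - ((pairCost d ℓ N z : ℝ≥0∞) : EReal)) x
      have htends : Tendsto (fun n : ℕ => ((r₀ - 1 / ((n:ℝ) + 1) : ℝ) : EReal)) atTop
          (nhds ((r₀ : ℝ) : EReal)) := by
        have h1 : Tendsto (fun n : ℕ => (r₀ - 1 / ((n:ℝ) + 1) : ℝ)) atTop (nhds r₀) := by
          simpa using (tendsto_const_nhds (x := r₀)).sub tendsto_one_div_add_atTop_nhds_zero_nat
        exact (continuous_coe_real_ereal.tendsto r₀).comp h1
      exact le_of_tendsto htends (Eventually.of_forall fun n => main _ (by positivity))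
  -- conclude by dividing
  have hpos : (0:EReal) < ((lam : ℝ) : EReal) := EReal.coe_pos.2 hlam_pos
  rw [mul_comm, ← EReal.le_div_iff_mul_le hpos (EReal.coe_ne_top lam)]
  rw [MN]
  refine iSup_le fun y => ?_
  rw [EReal.le_div_iff_mul_le hpos (EReal.coe_ne_top lam), mul_comm]
  exact key y

end
end

section
/- Let L₀ ≥ L₁ ≥ 0 be real numbers. For integers k,l ≥ 0, split the square [k,k+1]×[l,l+1] into the two triangles T⁻_{kl} = {(u,v) ∈ [k,k+1]×[l,l+1] : u+v ≤ k+l+1} and T⁺_{kl} = {(u,v) ∈ [k,k+1]×[l,l+1] : u+v ≥ k+l+1}. Let g : [0,∞)² → ℝ be the unique continuous function which is affine on each triangle T⁻_{kl} and T⁺_{kl} (i.e., on each triangle g is the affine interpolation of its values at the three vertices) and which satisfies g(k,l) = L₀(k²+l²) + 2 L₁ k l for all (k,l) ∈ ℕ². Then g is convex on [0,∞)². -/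
open MeasureTheory ENNReal Filter Topology
open scoped ZeroAtInfty

noncomputable section

noncomputable def chiFun (x : ℝ) : ℝ := ⨆ n : ℕ, ((2 * (n:ℝ) + 1) * x - n * (n + 1))

lemma chi_bdd (x : ℝ) :
    BddAbove (Set.range fun n : ℕ => (2 * (n:ℝ) + 1) * x - n * (n + 1)) := by
  refine ⟨x ^ 2 + 1/4, ?_⟩
  rintro _ ⟨n, rfl⟩
  nlinarith [sq_nonneg (x - n - 1/2)]

lemma chi_le (x : ℝ) (n : ℕ) : (2 * (n:ℝ) + 1) * x - n * (n + 1) ≤ chiFun x :=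
  le_ciSup (chi_bdd x) n

lemma chi_eq (x : ℝ) (n : ℕ) (h1 : (n:ℝ) ≤ x) (h2 : x ≤ n + 1) :
    chiFun x = (2 * (n:ℝ) + 1) * x - n * (n + 1) := by
  refine le_antisymm (ciSup_le fun m => ?_) (chi_le x n)
  rcases lt_trichotomy m n with hmn | rfl | hmn
  · have hm : (m:ℝ) + 1 ≤ n := by exact_mod_cast hmn
    nlinarith [mul_nonneg (by linarith : (0:ℝ) ≤ (n:ℝ) - m)
      (by linarith : (0:ℝ) ≤ 2*x - n - m - 1)]
  · exact le_rfl
  · have hm : (n:ℝ) + 1 ≤ m := by exact_mod_cast hmn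
    nlinarith [mul_nonneg (by linarith : (0:ℝ) ≤ (m:ℝ) - n)
      (by linarith : (0:ℝ) ≤ n + m + 1 - 2*x)]

lemma chi_convex : ConvexOn ℝ Set.univ chiFun := by
  refine ⟨convex_univ, fun p _ q _ a b ha hb hab => ?_⟩
  simp only [smul_eq_mul]
  refine ciSup_le fun n => ?_
  have h1 := chi_le p n
  have h2 := chi_le q n
  have hb' : b = 1 - a := by linarith
  subst hb'
  nlinarith [mul_le_mul_of_nonneg_left h1 ha, mul_le_mul_of_nonneg_left h2 hb]

/-- convexity of the piecewise affine interpolant of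
`(k,l) ↦ L₀(k²+l²) + 2L₁kl` along the standard triangulation of `[0,∞)²`. -/
theorem statement_4 (L0 L1 : ℝ) (hL1 : 0 ≤ L1) (hL01 : L1 ≤ L0)
    (g : ℝ × ℝ → ℝ)
    (hcont : ContinuousOn g (Set.Ici (0 : ℝ) ×ˢ Set.Ici (0 : ℝ)))
    (hval : ∀ k l : ℕ,
      g ((k : ℝ), (l : ℝ)) = L0 * ((k : ℝ) ^ 2 + (l : ℝ) ^ 2) + 2 * L1 * (k : ℝ) * (l : ℝ))
    (haffminus : ∀ k l : ℕ, ∃ a b c : ℝ, ∀ p : ℝ × ℝ,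
      (k : ℝ) ≤ p.1 → p.1 ≤ (k : ℝ) + 1 → (l : ℝ) ≤ p.2 → p.2 ≤ (l : ℝ) + 1 →
      p.1 + p.2 ≤ (k : ℝ) + (l : ℝ) + 1 → g p = a * p.1 + b * p.2 + c)
    (haffplus : ∀ k l : ℕ, ∃ a b c : ℝ, ∀ p : ℝ × ℝ,
      (k : ℝ) ≤ p.1 → p.1 ≤ (k : ℝ) + 1 → (l : ℝ) ≤ p.2 → p.2 ≤ (l : ℝ) + 1 →
      (k : ℝ) + (l : ℝ) + 1 ≤ p.1 + p.2 → g p = a * p.1 + b * p.2 + c) :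
    ConvexOn ℝ (Set.Ici (0 : ℝ) ×ˢ Set.Ici (0 : ℝ)) g := by
  have hS : Convex ℝ (Set.Ici (0:ℝ) ×ˢ Set.Ici (0:ℝ)) := (convex_Ici 0).prod (convex_Ici 0)
  set h : ℝ × ℝ → ℝ := fun p =>
    (L0 - L1) * (chiFun p.1 + chiFun p.2) + L1 * chiFun (p.1 + p.2) with hh
  have hconv : ConvexOn ℝ (Set.Ici (0:ℝ) ×ˢ Set.Ici (0:ℝ)) h := by
    refine ⟨hS, fun p _ q _ a b ha hb hab => ?_⟩
    have c1 := chi_convex.2 (Set.mem_univ p.1) (Set.mem_univ q.1) ha hb hab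
    have c2 := chi_convex.2 (Set.mem_univ p.2) (Set.mem_univ q.2) ha hb hab
    have c3 := chi_convex.2 (Set.mem_univ (p.1+p.2)) (Set.mem_univ (q.1+q.2)) ha hb hab
    simp only [smul_eq_mul] at c1 c2 c3
    simp only [hh, Prod.smul_fst, Prod.smul_snd, Prod.fst_add, Prod.snd_add, smul_eq_mul]
    have harg : a * p.1 + b * q.1 + (a * p.2 + b * q.2)
        = a * (p.1 + p.2) + b * (q.1 + q.2) := by ring
    rw [harg]
    have d1 := mul_le_mul_of_nonneg_left c1 (sub_nonneg.2 hL01)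
    have d2 := mul_le_mul_of_nonneg_left c2 (sub_nonneg.2 hL01)
    have d3 := mul_le_mul_of_nonneg_left c3 hL1
    nlinarith [d1, d2, d3]
  have key : ∀ p ∈ Set.Ici (0:ℝ) ×ˢ Set.Ici (0:ℝ), g p = h p := by
    rintro ⟨u, v⟩ ⟨hu, hv⟩
    simp only [Set.mem_Ici] at hu hv
    set k := ⌊u⌋₊ with hk
    set l := ⌊v⌋₊ with hl
    have hk1 : (k:ℝ) ≤ u := Nat.floor_le hu
    have hk2 : u ≤ (k:ℝ) + 1 := (Nat.lt_floor_add_one u).le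
    have hl1 : (l:ℝ) ≤ v := Nat.floor_le hv
    have hl2 : v ≤ (l:ℝ) + 1 := (Nat.lt_floor_add_one v).le
    have hcu : chiFun u = (2*(k:ℝ)+1)*u - (k:ℝ)*((k:ℝ)+1) := chi_eq u k hk1 hk2
    have hcv : chiFun v = (2*(l:ℝ)+1)*v - (l:ℝ)*((l:ℝ)+1) := chi_eq v l hl1 hl2
    simp only [hh]
    rcases le_total (u + v) ((k:ℝ) + (l:ℝ) + 1) with hcase | hcase
    · obtain ⟨a, b, c, hab⟩ := haffminus k l
      have e0 : g ((k:ℝ), (l:ℝ)) = a*(k:ℝ) + b*(l:ℝ) + c :=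
        hab ((k:ℝ), (l:ℝ)) (show (k:ℝ) ≤ (k:ℝ) from le_rfl)
          (show (k:ℝ) ≤ (k:ℝ)+1 by linarith) (show (l:ℝ) ≤ (l:ℝ) from le_rfl)
          (show (l:ℝ) ≤ (l:ℝ)+1 by linarith)
          (show (k:ℝ) + (l:ℝ) ≤ (k:ℝ)+(l:ℝ)+1 by linarith)
      have e1 : g ((k:ℝ)+1, (l:ℝ)) = a*((k:ℝ)+1) + b*(l:ℝ) + c :=
        hab ((k:ℝ)+1, (l:ℝ)) (show (k:ℝ) ≤ (k:ℝ)+1 by linarith)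
          (show (k:ℝ)+1 ≤ (k:ℝ)+1 from le_rfl) (show (l:ℝ) ≤ (l:ℝ) from le_rfl)
          (show (l:ℝ) ≤ (l:ℝ)+1 by linarith)
          (show (k:ℝ)+1 + (l:ℝ) ≤ (k:ℝ)+(l:ℝ)+1 by linarith)
      have e2 : g ((k:ℝ), (l:ℝ)+1) = a*(k:ℝ) + b*((l:ℝ)+1) + c :=
        hab ((k:ℝ), (l:ℝ)+1) (show (k:ℝ) ≤ (k:ℝ) from le_rfl)
          (show (k:ℝ) ≤ (k:ℝ)+1 by linarith) (show (l:ℝ) ≤ (l:ℝ)+1 by linarith)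
          (show (l:ℝ)+1 ≤ (l:ℝ)+1 from le_rfl)
          (show (k:ℝ) + ((l:ℝ)+1) ≤ (k:ℝ)+(l:ℝ)+1 by linarith)
      have ep : g (u, v) = a*u + b*v + c := hab (u, v) hk1 hk2 hl1 hl2 hcase
      have v0 := hval k l
      have v1 := hval (k+1) l
      have v2 := hval k (l+1)
      push_cast at v1 v2
      rw [v0] at e0
      rw [v1] at e1
      rw [v2] at e2
      have hcs : chiFun (u+v) = (2*((k:ℝ)+(l:ℝ))+1)*(u+v)
          - ((k:ℝ)+(l:ℝ))*((k:ℝ)+(l:ℝ)+1) := by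
        have hx := chi_eq (u+v) (k+l) (by push_cast; linarith) (by push_cast; linarith)
        push_cast at hx
        linarith [hx]
      rw [ep, hcu, hcv, hcs]
      linear_combination -(e0 + (u - (k:ℝ)) * (e1 - e0) + (v - (l:ℝ)) * (e2 - e0))
    · obtain ⟨a, b, c, hab⟩ := haffplus k l
      have e1 : g ((k:ℝ)+1, (l:ℝ)) = a*((k:ℝ)+1) + b*(l:ℝ) + c :=
        hab ((k:ℝ)+1, (l:ℝ)) (show (k:ℝ) ≤ (k:ℝ)+1 by linarith)
          (show (k:ℝ)+1 ≤ (k:ℝ)+1 from le_rfl) (show (l:ℝ) ≤ (l:ℝ) from le_rfl)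
          (show (l:ℝ) ≤ (l:ℝ)+1 by linarith)
          (show (k:ℝ)+(l:ℝ)+1 ≤ (k:ℝ)+1 + (l:ℝ) by linarith)
      have e2 : g ((k:ℝ), (l:ℝ)+1) = a*(k:ℝ) + b*((l:ℝ)+1) + c :=
        hab ((k:ℝ), (l:ℝ)+1) (show (k:ℝ) ≤ (k:ℝ) from le_rfl)
          (show (k:ℝ) ≤ (k:ℝ)+1 by linarith) (show (l:ℝ) ≤ (l:ℝ)+1 by linarith)
          (show (l:ℝ)+1 ≤ (l:ℝ)+1 from le_rfl)
          (show (k:ℝ)+(l:ℝ)+1 ≤ (k:ℝ) + ((l:ℝ)+1) by linarith)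
      have e3 : g ((k:ℝ)+1, (l:ℝ)+1) = a*((k:ℝ)+1) + b*((l:ℝ)+1) + c :=
        hab ((k:ℝ)+1, (l:ℝ)+1) (show (k:ℝ) ≤ (k:ℝ)+1 by linarith)
          (show (k:ℝ)+1 ≤ (k:ℝ)+1 from le_rfl) (show (l:ℝ) ≤ (l:ℝ)+1 by linarith)
          (show (l:ℝ)+1 ≤ (l:ℝ)+1 from le_rfl)
          (show (k:ℝ)+(l:ℝ)+1 ≤ (k:ℝ)+1 + ((l:ℝ)+1) by linarith)
      have ep : g (u, v) = a*u + b*v + c := hab (u, v) hk1 hk2 hl1 hl2 hcase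
      have v1 := hval (k+1) l
      have v2 := hval k (l+1)
      have v3 := hval (k+1) (l+1)
      push_cast at v1 v2 v3
      rw [v1] at e1
      rw [v2] at e2
      rw [v3] at e3
      have hcs : chiFun (u+v) = (2*((k:ℝ)+(l:ℝ)+1)+1)*(u+v)
          - ((k:ℝ)+(l:ℝ)+1)*((k:ℝ)+(l:ℝ)+2) := by
        have hx := chi_eq (u+v) (k+l+1) (by push_cast; linarith) (by push_cast; linarith)
        push_cast at hx
        linarith [hx]
      rw [ep, hcu, hcv, hcs]
      linear_combination
        -(e3 + (u - ((k:ℝ)+1)) * (e3 - e2) + (v - ((l:ℝ)+1)) * (e3 - e1))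
  refine ⟨hS, fun p hp q hq a b ha hb hab => ?_⟩
  have hz : a • p + b • q ∈ Set.Ici (0:ℝ) ×ˢ Set.Ici (0:ℝ) := hS hp hq ha hb hab
  rw [key _ hz, key _ hp, key _ hq]
  exact hconv.2 hp hq ha hb hab

end
end

section
/- Assume in addition that ℓ(r) > 0 for every r ∈ [0,∞). Then for every v ∈ C_0(ℝ^d), lim_{t→0⁺} M_∞(t v)/t = 0. -/
open MeasureTheory ENNReal Filter Topology
open scoped ZeroAtInfty

noncomputable section

/- Auxiliary lemmas -/

lemma ell_lowerBound {ℓ : ℝ → ℝ≥0∞}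
    (hl_lsc : LowerSemicontinuousOn ℓ (Set.Ici 0))
    (hlpos : ∀ r : ℝ, 0 ≤ r → 0 < ℓ r) (M : ℝ) (hM : 0 ≤ M) :
    ∃ c : ℝ, 0 < c ∧ c ≤ 1 ∧ ∀ r : ℝ, 0 ≤ r → r ≤ M → ENNReal.ofReal c ≤ ℓ r := by
  set b : ℝ → ℝ≥0∞ := fun x => min (ℓ x) 1 / 2 with hb
  have hb_pos : ∀ x : ℝ, 0 ≤ x → 0 < b x := fun x hx =>
    ENNReal.div_pos (lt_min (hlpos x hx) (by norm_num)).ne' (by norm_num)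
  have hb_lt : ∀ x : ℝ, 0 ≤ x → b x < ℓ x := by
    intro x hx
    rcases le_total (ℓ x) 1 with h | h
    · have : min (ℓ x) 1 = ℓ x := min_eq_left h
      rw [hb]; simp only [this]
      exact ENNReal.half_lt_self (hlpos x hx).ne' (h.trans_lt (by norm_num)).ne
    · have : min (ℓ x) 1 = 1 := min_eq_right h
      rw [hb]; simp only [this]
      calc (1:ℝ≥0∞)/2 < 1 := ENNReal.half_lt_self one_ne_zero one_ne_top
        _ ≤ ℓ x := h
  have hb_le : ∀ x : ℝ, b x ≤ 2⁻¹ := by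
    intro x
    rw [hb]
    simp only [ENNReal.div_le_iff (two_ne_zero) (ofNat_ne_top)]
    calc min (ℓ x) 1 ≤ 1 := min_le_right _ _
      _ = 2⁻¹ * 2 := by norm_num [ENNReal.inv_mul_cancel]
  have key : ∀ x ∈ Set.Icc (0:ℝ) M, ∃ u : Set ℝ, IsOpen u ∧ x ∈ u ∧
      ∀ y ∈ u ∩ Set.Ici 0, b x < ℓ y := by
    intro x hx
    have h1 := hl_lsc x (Set.mem_Ici.2 hx.1) (b x) (hb_lt x hx.1)
    obtain ⟨u, huo, hxu, hsub⟩ := mem_nhdsWithin.1 h1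
    exact ⟨u, huo, hxu, fun y hy => hsub hy⟩
  choose U hUo hUx hU using key
  obtain ⟨t, ht⟩ := isCompact_Icc.elim_nhds_subcover' U
    (fun x hx => (hUo x hx).mem_nhds (hUx x hx))
  have h0 : (0:ℝ) ∈ Set.Icc 0 M := ⟨le_refl 0, hM⟩
  have hmem := ht h0
  rw [Set.mem_iUnion₂] at hmem
  obtain ⟨x0, hx0t, -⟩ := hmem
  obtain ⟨z, hzt, hz⟩ := t.exists_min_image (fun x => (b x.1).toReal) ⟨x0, hx0t⟩
  have hbzne : b z.1 ≠ ⊤ := ((hb_le z.1).trans_lt (by norm_num)).ne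
  refine ⟨(b z.1).toReal, ENNReal.toReal_pos (hb_pos z.1 z.2.1).ne' hbzne, ?_, ?_⟩
  · have := ENNReal.toReal_mono (by norm_num) (hb_le z.1)
    simp only [ENNReal.toReal_inv] at this
    norm_num at this ⊢
    linarith
  · intro r hr0 hrM
    have hmemr := ht ⟨hr0, hrM⟩
    rw [Set.mem_iUnion₂] at hmemr
    obtain ⟨x1, hx1t, hrx1⟩ := hmemr
    have hlt : b x1.1 < ℓ r := hU x1.1 x1.2 r ⟨hrx1, Set.mem_Ici.2 hr0⟩
    have h2 : b z.1 ≤ b x1.1 := by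
      have := hz x1 hx1t
      exact (ENNReal.toReal_le_toReal hbzne (((hb_le x1.1).trans_lt (by norm_num)).ne)).1 this
    calc ENNReal.ofReal (b z.1).toReal = b z.1 := ENNReal.ofReal_toReal hbzne
      _ ≤ b x1.1 := h2
      _ ≤ ℓ r := hlt.le


lemma star_core (A n t V ε c : ℝ) (hε : 0 < ε) (ht : 0 < t) (hV0 : 0 < V)
    (hc0 : 0 < c) (hc1 : c ≤ 1) (hA2 : 2 < A) (hAn : A ≤ n) (hn2 : 2 ≤ n)
    (hεn : ε*n < 2*A*V) (htδ : t ≤ c*ε/(4*(V+1)^2)) :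
    A*t*V/n ≤ c*A*(A-1)/(n*(n-1)) := by
  have hn0 : (0:ℝ) < n := by linarith
  have key : t*V*(n-1) ≤ c*(A-1) := by
    have e1 : t*V*(n-1) ≤ t*V*n := by nlinarith
    have e2 : t*V*n ≤ (c*ε/(4*(V+1)^2))*V*n := by
      have h0 : (0:ℝ) ≤ V*n := by positivity
      nlinarith
    have e3 : (c*ε/(4*(V+1)^2))*V*n = c*(ε*n)*V/(4*(V+1)^2) := by ring
    have e4 : c*(ε*n)*V/(4*(V+1)^2) ≤ c*(2*A*V)*V/(4*(V+1)^2) := by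
      gcongr c*?_*V/(4*(V+1)^2)
      all_goals exact hεn.le
    have e5 : c*(2*A*V)*V/(4*(V+1)^2) ≤ c*A*(1/2) := by
      rw [div_le_iff₀ (by positivity)]
      have h1 : V^2 ≤ (V+1)^2 := by nlinarith
      have h2 : 0 ≤ c*A := mul_nonneg hc0.le (by linarith)
      nlinarith [mul_le_mul_of_nonneg_left h1 h2]
    have e6 : c*A*(1/2) ≤ c*(A-1) := by nlinarith
    linarith
  rw [div_le_div_iff₀ hn0 (by nlinarith)]
  nlinarith [mul_le_mul_of_nonneg_left key (show (0:ℝ) ≤ A*n by positivity)]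

-- The key real-number inequality
lemma star_ineq (k N : ℕ) (t V ε c : ℝ) (hε : 0 < ε) (ht : 0 < t) (hV0 : 0 ≤ V)
    (hc0 : 0 < c) (hc1 : c ≤ 1) (hkN : k ≤ N) (hN2 : 2 ≤ N)
    (hNb : 4*(V+1)/ε + 2 ≤ (N:ℝ)) (htδ : t ≤ c*ε/(4*(V+1)^2)) :
    (k:ℝ)*t*V/N + t*ε/2 ≤ ε*t + ((k*(k-1):ℕ):ℝ)*c/((N*(N-1):ℕ):ℝ) := by
  have hN0 : (0:ℝ) < N := by exact_mod_cast lt_of_lt_of_le (by norm_num) hN2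
  have hNN1 : ((N*(N-1):ℕ):ℝ) = (N:ℝ)*((N:ℝ)-1) := by
    rw [Nat.cast_mul, Nat.cast_sub (by omega), Nat.cast_one]
  have hQ0 : 0 ≤ ((k*(k-1):ℕ):ℝ)*c/((N*(N-1):ℕ):ℝ) := by positivity
  by_cases hcase : (k:ℝ)*V/N ≤ ε/2
  · have : (k:ℝ)*t*V/N = t*((k:ℝ)*V/N) := by ring
    rw [this]
    have h1 : t*((k:ℝ)*V/N) ≤ t*(ε/2) := mul_le_mul_of_nonneg_left hcase ht.le
    nlinarith
  · push_neg at hcase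
    have hNen : 4*(V+1) + 2*ε ≤ (N:ℝ)*ε := by
      have := mul_le_mul_of_nonneg_right hNb hε.le
      rw [add_mul, div_mul_cancel₀ _ hε.ne'] at this
      linarith
    have hεn : ε*(N:ℝ) < 2*(k:ℝ)*V := by
      have h2 : ε/2 * (N:ℝ) < ((k:ℝ)*V/N) * N := mul_lt_mul_of_pos_right hcase hN0
      rw [div_mul_cancel₀ _ hN0.ne'] at h2
      linarith
    have hV0' : 0 < V := by nlinarith
    have hk2 : (2:ℝ) < (k:ℝ) := by nlinarith
    have hk2' : 2 ≤ k := by exact_mod_cast hk2.le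
    have hkk1 : ((k*(k-1):ℕ):ℝ) = (k:ℝ)*((k:ℝ)-1) := by
      rw [Nat.cast_mul, Nat.cast_sub (by omega), Nat.cast_one]
    rw [hkk1, hNN1]
    have hcore := star_core (k:ℝ) (N:ℝ) t V ε c hε ht hV0' hc0 hc1 hk2
      ((Nat.cast_le (α:=ℝ)).2 hkN) (by exact_mod_cast hN2) hεn htδ
    have heq : (k:ℝ)*((k:ℝ)-1)*c/((N:ℝ)*((N:ℝ)-1)) = c*(k:ℝ)*((k:ℝ)-1)/((N:ℝ)*((N:ℝ)-1)) := by
      ring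
    rw [heq]
    nlinarith [hcore, mul_pos ht hε]

lemma Minf_upper (d : ℕ) (ℓ : ℝ → ℝ≥0∞) (v : C₀(EuclideanSpace ℝ (Fin d), ℝ))
    (ε t R c V : ℝ) (N : ℕ)
    (hε : 0 < ε) (ht : 0 < t) (hV0 : 0 ≤ V)
    (hVb : ∀ z, |v z| ≤ V)
    (hR : ∀ z : EuclideanSpace ℝ (Fin d), R < ‖z‖ → |v z| < ε/2)
    (hc0 : 0 < c) (hc1 : c ≤ 1)
    (hcb : ∀ r : ℝ, 0 ≤ r → r ≤ 2*R → ENNReal.ofReal c ≤ ℓ r)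
    (hN2 : 2 ≤ N) (hNb : 4*(V+1)/ε + 2 ≤ (N:ℝ))
    (htδ : t ≤ c*ε/(4*(V+1)^2)) :
    Minf d ℓ (fun x => t * v x) ≤ ((ε * t : ℝ) : EReal) := by
  refine le_trans (iInf_le_of_le N (iInf_le_of_le hN2 le_rfl)) ?_
  rw [MN]
  refine iSup_le fun x => ?_
  classical
  set S : Finset (Fin N) := Finset.univ.filter (fun i => ‖x i‖ ≤ R) with hSdef
  set k := S.card with hkdef
  have hkN : k ≤ N := by
    calc k ≤ Finset.univ.card := Finset.card_filter_le _ _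
      _ = N := by simp
  have hN0 : (0:ℝ) < N := by exact_mod_cast lt_of_lt_of_le (by norm_num) hN2
  -- SN bound
  have hSN : SN d N (fun z => t * v z) x ≤ (k:ℝ)*t*V/N + t*ε/2 := by
    have h1 : ∑ i ∈ S, t * v (x i) ≤ k • (t*V) :=
      Finset.sum_le_card_nsmul S _ (t*V) (fun i _ => by
        have h := (abs_le.1 (hVb (x i))).2
        nlinarith)
    have h2 : ∑ i ∈ Finset.univ.filter (fun i : Fin N => ¬ (‖x i‖ ≤ R)), t * v (x i)
        ≤ (Finset.univ.filter (fun i : Fin N => ¬ (‖x i‖ ≤ R))).card • (t*(ε/2)) :=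
      Finset.sum_le_card_nsmul _ _ _ (fun i hi => by
        have hi' : R < ‖x i‖ := not_le.1 (by simpa using (Finset.mem_filter.1 hi).2)
        have := (abs_lt.1 (hR _ hi')).2
        nlinarith)
    have hcard2 : ((Finset.univ.filter (fun i : Fin N => ¬ (‖x i‖ ≤ R))).card : ℝ) ≤ (N:ℝ) := by
      have : (Finset.univ.filter (fun i : Fin N => ¬ (‖x i‖ ≤ R))).card ≤ N := by
        calc _ ≤ Finset.univ.card := Finset.card_filter_le _ _
          _ = N := by simp
      exact_mod_cast this
    have hsplit : ∑ i : Fin N, t * v (x i)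
        = ∑ i ∈ S, t * v (x i)
          + ∑ i ∈ Finset.univ.filter (fun i : Fin N => ¬ (‖x i‖ ≤ R)), t * v (x i) :=
      (Finset.sum_filter_add_sum_filter_not _ _ _).symm
    have hsum : ∑ i : Fin N, t * v (x i) ≤ (k:ℝ)*(t*V) + (N:ℝ)*(t*(ε/2)) := by
      rw [hsplit]
      rw [nsmul_eq_mul] at h1 h2
      have h2' : ((Finset.univ.filter (fun i : Fin N => ¬ (‖x i‖ ≤ R))).card : ℝ) * (t*(ε/2))
          ≤ (N:ℝ)*(t*(ε/2)) := mul_le_mul_of_nonneg_right hcard2 (by positivity)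
      linarith
    rw [SN, div_le_iff₀ hN0]
    have hBN : ((k:ℝ)*t*V/N + t*ε/2) * N = (k:ℝ)*(t*V) + (N:ℝ)*(t*(ε/2)) := by
      field_simp
    rw [hBN]
    exact hsum
  -- cost bound
  set c' := ENNReal.ofReal c with hc'def
  set Sig := ∑ i : Fin N, ∑ j : Fin N, if i < j then ℓ (dist (x i) (x j)) else 0 with hSig
  set X := ∑ i ∈ S, ∑ j ∈ S, if i < j then c' else 0 with hX
  have hXle : X ≤ Sig := by
    rw [hX, hSig]
    calc ∑ i ∈ S, ∑ j ∈ S, (if i < j then c' else 0)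
        ≤ ∑ i ∈ S, ∑ j ∈ S, (if i < j then ℓ (dist (x i) (x j)) else 0) := by
          refine Finset.sum_le_sum fun i hi => Finset.sum_le_sum fun j hj => ?_
          split_ifs with hij
          · refine hcb _ dist_nonneg ?_
            have h1 : ‖x i‖ ≤ R := by simpa using (Finset.mem_filter.1 hi).2
            have h2 : ‖x j‖ ≤ R := by simpa using (Finset.mem_filter.1 hj).2
            calc dist (x i) (x j) = ‖x i - x j‖ := dist_eq_norm _ _
              _ ≤ ‖x i‖ + ‖x j‖ := norm_sub_le _ _
              _ ≤ 2*R := by linarith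
          · exact le_rfl
      _ ≤ ∑ i ∈ S, ∑ j : Fin N, (if i < j then ℓ (dist (x i) (x j)) else 0) :=
          Finset.sum_le_sum fun i _ =>
            Finset.sum_le_sum_of_subset (Finset.subset_univ S)
      _ ≤ ∑ i : Fin N, ∑ j : Fin N, (if i < j then ℓ (dist (x i) (x j)) else 0) :=
          Finset.sum_le_sum_of_subset (Finset.subset_univ S)
  have h2X : X + X = ((k*(k-1):ℕ):ℝ≥0∞) * c' := by
    have hpt : ∀ i j : Fin N, (if i < j then c' else 0) + (if j < i then c' else 0)
        = (if i ≠ j then c' else 0) := by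
      intro i j
      rcases lt_trichotomy i j with h|h|h
      · simp [h, not_lt.2 h.le, h.ne]
      · simp [h]
      · simp [h, not_lt.2 h.le, h.ne']
    have hswap : (∑ i ∈ S, ∑ j ∈ S, if j < i then c' else 0) = X := by
      rw [hX, Finset.sum_comm]
    have hsplit2 : X + X
        = ∑ i ∈ S, ∑ j ∈ S, ((if i < j then c' else 0) + (if j < i then c' else 0)) := by
      simp only [Finset.sum_add_distrib]
      rw [hswap, hX]
    rw [hsplit2]
    have hinner : ∀ i ∈ S, (∑ j ∈ S, ((if i < j then c' else 0) + (if j < i then c' else 0)))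
        = (k-1) • c' := by
      intro i hi
      rw [Finset.sum_congr rfl (fun j _ => hpt i j)]
      have : (∑ j ∈ S, if i ≠ j then c' else 0) = ∑ j ∈ S.filter (fun j => i ≠ j), c' :=
        (Finset.sum_filter _ _).symm
      rw [this, Finset.filter_ne, Finset.sum_const, Finset.card_erase_of_mem hi]
    rw [Finset.sum_congr rfl hinner, Finset.sum_const, smul_smul, nsmul_eq_mul]
  have hDcast : ((N : ℝ≥0∞) * ((N : ℝ≥0∞) - 1)) = ((N * (N-1) : ℕ) : ℝ≥0∞) := by
    rw [Nat.cast_mul, ENNReal.natCast_sub, Nat.cast_one]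
  have hcost : (((k*(k-1):ℕ):ℝ≥0∞) * c') / ((N*(N-1):ℕ):ℝ≥0∞) ≤ pairCost d ℓ N x := by
    rw [pairCost, ← hSig, hDcast]
    calc (((k*(k-1):ℕ):ℝ≥0∞) * c') / ((N*(N-1):ℕ):ℝ≥0∞)
        = (X + X) / ((N*(N-1):ℕ):ℝ≥0∞) := by rw [h2X]
      _ = 2/((N*(N-1):ℕ):ℝ≥0∞) * X := by
          rw [div_eq_mul_inv, div_eq_mul_inv, two_mul]; ring
      _ ≤ 2/((N*(N-1):ℕ):ℝ≥0∞) * Sig := mul_le_mul_right hXle _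
  set Q := ((k*(k-1):ℕ):ℝ) * c / ((N*(N-1):ℕ):ℝ) with hQdef
  have hQ0 : 0 ≤ Q := by positivity
  have hQeq : (((k*(k-1):ℕ):ℝ≥0∞) * c') / ((N*(N-1):ℕ):ℝ≥0∞) = ENNReal.ofReal Q := by
    have hpos : (0:ℝ) < ((N*(N-1):ℕ):ℝ) := by
      have : 0 < N*(N-1) := by
        have : 1 ≤ N - 1 := by omega
        calc 0 < 1*1 := by norm_num
          _ ≤ N*(N-1) := Nat.mul_le_mul (by omega) this
      exact_mod_cast this
    rw [hQdef, ENNReal.ofReal_div_of_pos hpos, ENNReal.ofReal_mul (Nat.cast_nonneg _),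
      ENNReal.ofReal_natCast, ENNReal.ofReal_natCast, hc'def]
  have hstar := star_ineq k N t V ε c hε ht hV0 hc0 hc1 hkN hN2 hNb htδ
  have hcE : ((Q:ℝ):EReal) ≤ ((pairCost d ℓ N x : ℝ≥0∞):EReal) := by
    calc ((Q:ℝ):EReal) = ((ENNReal.ofReal Q : ℝ≥0∞):EReal) := by
          rw [EReal.coe_ennreal_ofReal, max_eq_left hQ0]
      _ ≤ _ := EReal.coe_ennreal_le_coe_ennreal_iff.2 (hQeq ▸ hcost)
  have hsE : ((SN d N (fun z => t * v z) x : ℝ):EReal) ≤ (((k:ℝ)*t*V/N + t*ε/2 : ℝ):EReal) :=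
    EReal.coe_le_coe_iff.2 hSN
  calc ((SN d N (fun z => t * v z) x : ℝ):EReal) - ((pairCost d ℓ N x : ℝ≥0∞):EReal)
      ≤ (((k:ℝ)*t*V/N + t*ε/2 : ℝ):EReal) - ((Q:ℝ):EReal) := EReal.sub_le_sub hsE hcE
    _ = (((k:ℝ)*t*V/N + t*ε/2 - Q : ℝ):EReal) := (EReal.coe_sub _ _).symm
    _ ≤ ((ε*t : ℝ):EReal) := EReal.coe_le_coe_iff.2 (by rw [hQdef]; linarith [hstar])

lemma Minf_lower (d : ℕ) (hd : 1 ≤ d) (ℓ : ℝ → ℝ≥0∞)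
    (hl_decay : Filter.Tendsto ℓ Filter.atTop (nhds 0))
    (v : C₀(EuclideanSpace ℝ (Fin d), ℝ)) (ε t R : ℝ) (hε : 0 < ε) (ht : 0 < t)
    (hR0 : 0 < R) (hR : ∀ z : EuclideanSpace ℝ (Fin d), R < ‖z‖ → |v z| < ε/2) :
    ((-(ε * t) : ℝ) : EReal) ≤ Minf d ℓ (fun x => t * v x) := by
  refine le_iInf fun N => le_iInf fun hN => ?_
  set η : ℝ≥0∞ := ENNReal.ofReal (t*ε/8) with hηdef
  have hη : (0:ℝ≥0∞) < η := ENNReal.ofReal_pos.2 (by positivity)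
  have hev : ∀ᶠ r in atTop, ℓ r < η := hl_decay.eventually (gt_mem_nhds hη)
  obtain ⟨Rℓ, hRℓ⟩ := eventually_atTop.1 hev
  set a : ℝ := max R Rℓ + 1 with hadef
  have haR : R < a := lt_of_le_of_lt (le_max_left _ _) (lt_add_one _)
  have haRℓ : Rℓ ≤ a := le_of_lt (lt_of_le_of_lt (le_max_right _ _) (lt_add_one _))
  have ha0 : 0 < a := lt_trans hR0 haR
  set e : EuclideanSpace ℝ (Fin d) := EuclideanSpace.single (⟨0, hd⟩ : Fin d) (1:ℝ) with hedef
  have he : ‖e‖ = 1 := by simp [hedef, EuclideanSpace.norm_single]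
  set x : Fin N → EuclideanSpace ℝ (Fin d) :=
    fun i => ((((i : ℕ) : ℝ) + 1) * a) • e with hxdef
  have hnorm : ∀ i : Fin N, a ≤ ‖x i‖ := by
    intro i
    rw [hxdef]
    simp only [norm_smul, Real.norm_eq_abs, he, mul_one]
    rw [abs_of_nonneg (by positivity)]
    nlinarith [(Nat.cast_nonneg (i : ℕ) : (0:ℝ) ≤ ((i:ℕ):ℝ)), ha0]
  have hdist : ∀ i j : Fin N, i ≠ j → a ≤ dist (x i) (x j) := by
    intro i j hij
    rw [hxdef]
    have : dist (((((i : ℕ) : ℝ) + 1) * a) • e) (((((j : ℕ) : ℝ) + 1) * a) • e)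
        = |(((i:ℕ):ℝ) - ((j:ℕ):ℝ)) * a| := by
      rw [dist_eq_norm, ← sub_smul, norm_smul, Real.norm_eq_abs, he, mul_one]
      ring_nf
    rw [this, abs_mul, abs_of_pos ha0]
    have h1 : (1:ℝ) ≤ |((i:ℕ):ℝ) - ((j:ℕ):ℝ)| := by
      have hne : (i:ℕ) ≠ (j:ℕ) := fun h => hij (Fin.ext h)
      rcases lt_or_gt_of_ne hne with h | h
      · have h' : ((i:ℕ):ℝ) + 1 ≤ ((j:ℕ):ℝ) := by exact_mod_cast Nat.succ_le_of_lt h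
        rw [abs_sub_comm, abs_of_pos (by linarith)]
        linarith
      · have h' : ((j:ℕ):ℝ) + 1 ≤ ((i:ℕ):ℝ) := by exact_mod_cast Nat.succ_le_of_lt h
        rw [abs_of_pos (by linarith)]
        linarith
    nlinarith
  -- cost bound
  have hcost : pairCost d ℓ N x ≤ ENNReal.ofReal (t*ε/2) := by
    have hterm : ∀ i j : Fin N, (if i < j then ℓ (dist (x i) (x j)) else 0) ≤ η := by
      intro i j
      split_ifs with h
      · exact (hRℓ _ ((haRℓ.trans (hdist i j h.ne)))).le
      · exact zero_le
    have hsum : ∑ i : Fin N, ∑ j : Fin N, (if i < j then ℓ (dist (x i) (x j)) else 0)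
        ≤ (N*N : ℕ) * η := by
      calc ∑ i : Fin N, ∑ j : Fin N, (if i < j then ℓ (dist (x i) (x j)) else 0)
          ≤ ∑ _i : Fin N, ∑ _j : Fin N, η :=
            Finset.sum_le_sum fun i _ => Finset.sum_le_sum fun j _ => hterm i j
        _ = (N*N : ℕ) * η := by
            rw [Finset.sum_const, Finset.sum_const, Finset.card_univ, Fintype.card_fin,
              smul_smul, nsmul_eq_mul]
    have hfac : (2 / ((N : ℝ≥0∞) * ((N : ℝ≥0∞) - 1))) * ((N*N : ℕ) * η) ≤ 4 * η := by
      have hDcast : ((N : ℝ≥0∞) * ((N : ℝ≥0∞) - 1)) = ((N * (N-1) : ℕ) : ℝ≥0∞) := by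
        rw [Nat.cast_mul, ENNReal.natCast_sub, Nat.cast_one]
      rw [hDcast]
      have hD0 : ((N * (N-1) : ℕ) : ℝ≥0∞) ≠ 0 := by
        simp only [ne_eq, Nat.cast_eq_zero, Nat.mul_eq_zero, not_or]
        omega
      have hDt : ((N * (N-1) : ℕ) : ℝ≥0∞) ≠ ⊤ := ENNReal.natCast_ne_top _
      have h1 : 2 / ((N * (N-1) : ℕ) : ℝ≥0∞) * ((N*N : ℕ) * η)
          = ((2 * (N * N) : ℕ) : ℝ≥0∞) / ((N * (N-1) : ℕ) : ℝ≥0∞) * η := by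
        rw [div_eq_mul_inv, div_eq_mul_inv]
        push_cast
        ring
      rw [h1]
      have h2 : ((2 * (N * N) : ℕ) : ℝ≥0∞) / ((N * (N-1) : ℕ) : ℝ≥0∞) ≤ 4 := by
        rw [ENNReal.div_le_iff hD0 hDt]
        have : ((4:ℝ≥0∞) : ℝ≥0∞) * ((N * (N-1) : ℕ) : ℝ≥0∞) = ((4 * (N * (N-1)) : ℕ) : ℝ≥0∞) := by
          push_cast; ring
        rw [this, Nat.cast_le]
        obtain ⟨m, rfl⟩ : ∃ m, N = m + 2 := ⟨N-2, by omega⟩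
        have hm : m + 2 - 1 = m + 1 := by omega
        rw [hm]
        nlinarith
      exact mul_le_mul_left h2 η
    calc pairCost d ℓ N x ≤ (2 / ((N : ℝ≥0∞) * ((N : ℝ≥0∞) - 1))) * ((N*N : ℕ) * η) :=
          mul_le_mul_right hsum _
      _ ≤ 4 * η := hfac
      _ = ENNReal.ofReal (t*ε/2) := by
          rw [hηdef, ← ENNReal.ofReal_ofNat, ← ENNReal.ofReal_mul (by norm_num)]
          congr 1
          ring
  -- SN bound
  have hSN : -(t*ε/2) ≤ SN d N (fun z => t * v z) x := by
    have hterm : ∀ i : Fin N, -(t*ε/2) ≤ t * v (x i) := by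
      intro i
      have hv : |v (x i)| < ε/2 := hR _ (lt_of_lt_of_le haR (hnorm i))
      have : -(ε/2) ≤ v (x i) := by cases abs_lt.1 hv; linarith
      nlinarith
    have hsum : (N : ℝ) * (-(t*ε/2)) ≤ ∑ i : Fin N, t * v (x i) := by
      calc (N : ℝ) * (-(t*ε/2)) = ∑ _i : Fin N, (-(t*ε/2)) := by
            simp [Finset.sum_const, mul_comm]
        _ ≤ ∑ i : Fin N, t * v (x i) := Finset.sum_le_sum fun i _ => hterm i
    have hN0 : (0:ℝ) < N := by exact_mod_cast lt_of_lt_of_le (by norm_num) hN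
    rw [SN]
    rw [le_div_iff₀ hN0]
    linarith [hsum]
  -- assemble
  refine le_trans ?_ (le_iSup _ x)
  have hc1 : ((pairCost d ℓ N x : ℝ≥0∞) : EReal) ≤ ((t*ε/2 : ℝ) : EReal) := by
    calc ((pairCost d ℓ N x : ℝ≥0∞) : EReal) ≤ ((ENNReal.ofReal (t*ε/2) : ℝ≥0∞) : EReal) :=
          EReal.coe_ennreal_le_coe_ennreal_iff.2 hcost
      _ = ((t*ε/2 : ℝ) : EReal) := by
          rw [EReal.coe_ennreal_ofReal, max_eq_left (by positivity)]
  have hc2 : ((-(t*ε/2) : ℝ) : EReal) ≤ ((SN d N (fun z => t * v z) x : ℝ) : EReal) :=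
    EReal.coe_le_coe_iff.2 hSN
  calc ((-(ε*t) : ℝ) : EReal) = ((-(t*ε/2) - t*ε/2 : ℝ) : EReal) := congrArg _ (by ring)
    _ = ((-(t*ε/2) : ℝ) : EReal) - ((t*ε/2 : ℝ) : EReal) := EReal.coe_sub _ _
    _ ≤ ((SN d N (fun z => t * v z) x : ℝ) : EReal) - ((pairCost d ℓ N x : ℝ≥0∞) : EReal) :=
        EReal.sub_le_sub hc2 hc1


/-- if `ℓ > 0` everywhere, then `M_∞(tv)/t → 0` as `t → 0⁺`. -/
theorem statement_7 (d : ℕ) (hd : 1 ≤ d) (ℓ : ℝ → ℝ≥0∞)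
    (hl_lsc : LowerSemicontinuousOn ℓ (Set.Ici 0))
    (hl0 : 0 < ℓ 0)
    (hl_decay : Filter.Tendsto ℓ Filter.atTop (nhds 0))
    (hlpos : ∀ r : ℝ, 0 ≤ r → 0 < ℓ r)
    (v : C₀(EuclideanSpace ℝ (Fin d), ℝ)) :
    ∀ ε : ℝ, 0 < ε → ∃ δ : ℝ, 0 < δ ∧ ∀ t : ℝ, 0 < t → t ≤ δ →
      ((-(ε * t) : ℝ) : EReal) ≤ Minf d ℓ (fun x => t * v x) ∧
      Minf d ℓ (fun x => t * v x) ≤ ((ε * t : ℝ) : EReal) := by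
  intro ε hε
  set V : ℝ := ‖v‖ with hVdef
  have hV0 : 0 ≤ V := norm_nonneg _
  have hVb : ∀ z, |v z| ≤ V := by
    intro z
    have h := BoundedContinuousFunction.norm_coe_le_norm v.toBCF z
    rw [ZeroAtInftyContinuousMap.norm_toBCF_eq_norm] at h
    simpa [Real.norm_eq_abs] using h
  obtain ⟨R, hR0, hRp⟩ : ∃ R : ℝ, 0 < R ∧
      ∀ z : EuclideanSpace ℝ (Fin d), R < ‖z‖ → |v z| < ε/2 := by
    have hev : ∀ᶠ z in Filter.cocompact (EuclideanSpace ℝ (Fin d)), dist (v z) 0 < ε/2 :=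
      Metric.tendsto_nhds.1 v.zero_at_infty' (ε/2) (by positivity)
    obtain ⟨K, hK, hKs⟩ := Filter.mem_cocompact.mp hev
    obtain ⟨R₀, hR₀⟩ := hK.isBounded.subset_closedBall 0
    refine ⟨max R₀ 1, lt_of_lt_of_le one_pos (le_max_right _ _), fun z hz => ?_⟩
    have hzK : z ∉ K := by
      intro hzK
      have h1 := hR₀ hzK
      rw [Metric.mem_closedBall, dist_zero_right] at h1
      have h2 := le_max_left R₀ 1
      linarith
    have := hKs hzK
    simpa [Real.dist_eq] using this
  obtain ⟨c, hc0, hc1, hcb⟩ := ell_lowerBound hl_lsc hlpos (2*R) (by linarith)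
  obtain ⟨N, hNb⟩ := exists_nat_ge (4*(V+1)/ε + 2)
  have hN2 : 2 ≤ N := by
    have h0 : (0:ℝ) ≤ 4*(V+1)/ε := by positivity
    have h2 : (2:ℝ) ≤ (N:ℝ) := by linarith
    exact_mod_cast h2
  refine ⟨c*ε/(4*(V+1)^2), by positivity, fun t ht htδ => ⟨?_, ?_⟩⟩
  · exact Minf_lower d hd ℓ hl_decay v ε t R hε ht hR0 hRp
  · exact Minf_upper d ℓ v ε t R c V N hε ht hV0 hVb hRp hc0 hc1 hcb hN2 hNb htδ


end
end

section
/- For every Borel probability measure ρ on ℝ^d and every θ ∈ [0,1], one has C_∞(θ ρ) ≤ θ² C_∞(ρ). -/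
open MeasureTheory ENNReal Filter Topology
open scoped ZeroAtInfty

noncomputable section

namespace Stmt9

def Tsum (d : ℕ) (ℓ : ℝ → ℝ≥0∞) (N : ℕ) (x : Fin N → EuclideanSpace ℝ (Fin d)) : ℝ≥0∞ :=
  ∑ i : Fin N, ∑ j : Fin N, if i < j then ℓ (dist (x i) (x j)) else 0

lemma pairCost_eq (d : ℕ) (ℓ : ℝ → ℝ≥0∞) (N : ℕ) (x : Fin N → EuclideanSpace ℝ (Fin d)) :
    pairCost d ℓ N x = (2 / ((N : ℝ≥0∞) * ((N : ℝ≥0∞) - 1))) * Tsum d ℓ N x := rfl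


lemma kappa_eq (N : ℕ) (hN : 2 ≤ N) :
    (2 / ((N : ℝ≥0∞) * ((N : ℝ≥0∞) - 1))) = ENNReal.ofReal (2 / ((N : ℝ) * ((N : ℝ) - 1))) := by
  have hpos : (0:ℝ) < (N : ℝ) * ((N : ℝ) - 1) := by
    have h2 : (2:ℝ) ≤ (N:ℝ) := by exact_mod_cast hN
    nlinarith
  rw [ENNReal.ofReal_div_of_pos hpos]
  congr 1
  · norm_num
  · have h1 : ((N : ℝ≥0∞) - 1) = ((N - 1 : ℕ) : ℝ≥0∞) := by
      rw [ENNReal.natCast_sub]; norm_num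
    rw [h1, ← Nat.cast_mul, ← ENNReal.ofReal_natCast (N * (N-1))]
    congr 1
    push_cast [Nat.cast_sub (by omega : 1 ≤ N)]
    ring

lemma kappa_toReal (N : ℕ) (hN : 2 ≤ N) :
    (2 / ((N : ℝ≥0∞) * ((N : ℝ≥0∞) - 1))).toReal = 2 / ((N : ℝ) * ((N : ℝ) - 1)) := by
  have h2 : (2:ℝ) ≤ (N:ℝ) := by exact_mod_cast hN
  rw [kappa_eq N hN, ENNReal.toReal_ofReal]
  apply div_nonneg (by norm_num)
  nlinarith

lemma kappa_ne_zero (N : ℕ) (hN : 2 ≤ N) :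
    (2 / ((N : ℝ≥0∞) * ((N : ℝ≥0∞) - 1))) ≠ 0 := by
  have h2 : (2:ℝ) ≤ (N:ℝ) := by exact_mod_cast hN
  rw [kappa_eq N hN]
  simp only [ne_eq, ENNReal.ofReal_eq_zero, not_le]
  apply div_pos (by norm_num)
  nlinarith

lemma kappa_ne_top (N : ℕ) (hN : 2 ≤ N) :
    (2 / ((N : ℝ≥0∞) * ((N : ℝ≥0∞) - 1))) ≠ ⊤ := by
  rw [kappa_eq N hN]; exact ENNReal.ofReal_ne_top

lemma coe_ennreal_toReal {c : ℝ≥0∞} (h : c ≠ ⊤) : ((c.toReal : ℝ) : EReal) = (c : EReal) := by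
  rw [← EReal.toReal_coe_ennreal]
  refine EReal.coe_toReal (fun hc => h (EReal.coe_ennreal_eq_top_iff.mp hc)) ?_
  exact ne_of_gt (lt_of_lt_of_le (EReal.bot_lt_coe 0) (by simpa using EReal.coe_ennreal_nonneg c))

-- sum over succAbove equals sum over erase
lemma sum_succAbove_erase {M : Type*} [AddCommMonoid M] {N : ℕ} (m : Fin (N+1))
    (h : Fin (N+1) → M) :
    ∑ i : Fin N, h (m.succAbove i) = ∑ a ∈ Finset.univ.erase m, h a := by
  refine Finset.sum_bij (fun i _ => m.succAbove i) ?_ ?_ ?_ ?_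
  · intro i _; exact Finset.mem_erase.mpr ⟨Fin.succAbove_ne m i, Finset.mem_univ _⟩
  · intro i _ j _ hij; exact Fin.succAbove_right_injective hij
  · intro a ha
    obtain ⟨i, hi⟩ := Fin.exists_succAbove_eq ((Finset.mem_erase.mp ha).1)
    exact ⟨i, Finset.mem_univ _, hi⟩
  · intro i _; rfl

lemma count_pairs (N : ℕ) (G : Fin (N+1) → Fin (N+1) → ℝ≥0∞) (hG : ∀ a, G a a = 0) :
    ∑ m : Fin (N+1), ∑ a ∈ Finset.univ.erase m, ∑ b ∈ Finset.univ.erase m, G a b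
      = ((N - 1 : ℕ) : ℝ≥0∞) * ∑ a, ∑ b, G a b := by
  have key : ∀ m : Fin (N+1), ∑ a ∈ Finset.univ.erase m, ∑ b ∈ Finset.univ.erase m, G a b
      = ∑ a : Fin (N+1), ∑ b : Fin (N+1), if a ≠ m ∧ b ≠ m then G a b else 0 := by
    intro m
    have e1 : ∀ a : Fin (N+1), ∑ b ∈ Finset.univ.erase m, G a b
        = ∑ b : Fin (N+1), if b ≠ m then G a b else 0 := by
      intro a
      rw [← Finset.filter_ne' Finset.univ m, Finset.sum_filter]
    calc ∑ a ∈ Finset.univ.erase m, ∑ b ∈ Finset.univ.erase m, G a b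
        = ∑ a : Fin (N+1), if a ≠ m then ∑ b ∈ Finset.univ.erase m, G a b else 0 := by
          rw [← Finset.filter_ne' Finset.univ m, Finset.sum_filter]
      _ = ∑ a : Fin (N+1), ∑ b : Fin (N+1), if a ≠ m ∧ b ≠ m then G a b else 0 := by
          refine Finset.sum_congr rfl fun a _ => ?_
          by_cases ha : a ≠ m
          · rw [if_pos ha, e1 a]
            refine Finset.sum_congr rfl fun b _ => ?_
            simp [ha]
          · rw [if_neg ha]
            symm
            refine Finset.sum_eq_zero fun b _ => ?_
            simp [ha]
  simp only [key]
  rw [Finset.sum_comm, Finset.mul_sum]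
  refine Finset.sum_congr rfl fun a _ => ?_
  rw [Finset.sum_comm, Finset.mul_sum]
  refine Finset.sum_congr rfl fun b _ => ?_
  by_cases hab : a = b
  · subst hab
    simp [hG a]
  · have hm : ∀ m : Fin (N+1), (if a ≠ m ∧ b ≠ m then G a b else 0)
        = if m ∈ ({a, b} : Finset (Fin (N+1)))ᶜ then G a b else 0 := by
      intro m
      rcases eq_or_ne m a with rfl | h1
      · simp
      · rcases eq_or_ne m b with rfl | h2
        · simp
        · simp [Ne.symm h1, Ne.symm h2, h1, h2]
    have hcard : (({a, b} : Finset (Fin (N+1)))ᶜ).card = N - 1 := by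
      rw [Finset.card_compl, Finset.card_insert_of_notMem (by simp [hab]),
        Finset.card_singleton, Fintype.card_fin]
      omega
    simp only [hm]
    rw [Finset.sum_ite_mem, Finset.univ_inter, Finset.sum_const, nsmul_eq_mul, hcard]

lemma Tsum_del (d : ℕ) (ℓ : ℝ → ℝ≥0∞) (N : ℕ) (x : Fin (N+1) → EuclideanSpace ℝ (Fin d)) :
    ∑ m : Fin (N+1), Tsum d ℓ N (x ∘ m.succAbove)
      = ((N - 1 : ℕ) : ℝ≥0∞) * Tsum d ℓ (N+1) x := by
  set G : Fin (N+1) → Fin (N+1) → ℝ≥0∞ :=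
    fun a b => if a < b then ℓ (dist (x a) (x b)) else 0 with hGdef
  have hG : ∀ a, G a a = 0 := by intro a; simp [hGdef]
  have inner : ∀ m : Fin (N+1), Tsum d ℓ N (x ∘ m.succAbove)
      = ∑ a ∈ Finset.univ.erase m, ∑ b ∈ Finset.univ.erase m, G a b := by
    intro m
    have step1 : Tsum d ℓ N (x ∘ m.succAbove)
        = ∑ i : Fin N, ∑ j : Fin N, G (m.succAbove i) (m.succAbove j) := by
      unfold Tsum
      refine Finset.sum_congr rfl fun i _ => Finset.sum_congr rfl fun j _ => ?_
      simp only [hGdef, Function.comp_apply, Fin.succAbove_lt_succAbove_iff]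
    rw [step1]
    calc ∑ i : Fin N, ∑ j : Fin N, G (m.succAbove i) (m.succAbove j)
        = ∑ i : Fin N, ∑ b ∈ Finset.univ.erase m, G (m.succAbove i) b := by
          refine Finset.sum_congr rfl fun i _ => ?_
          exact sum_succAbove_erase m (fun b => G (m.succAbove i) b)
      _ = ∑ a ∈ Finset.univ.erase m, ∑ b ∈ Finset.univ.erase m, G a b :=
          sum_succAbove_erase m (fun a => ∑ b ∈ Finset.univ.erase m, G a b)
  simp only [inner]
  rw [count_pairs N G hG]
  rfl

lemma SN_del (d : ℕ) (N : ℕ) (hN : 0 < N) (v : EuclideanSpace ℝ (Fin d) → ℝ)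
    (x : Fin (N+1) → EuclideanSpace ℝ (Fin d)) :
    ∑ m : Fin (N+1), SN d N v (x ∘ m.succAbove) = (N + 1 : ℝ) * SN d (N+1) v x := by
  unfold SN
  have hsum : ∀ m : Fin (N+1), ∑ i : Fin N, v ((x ∘ m.succAbove) i)
      = (∑ a : Fin (N+1), v (x a)) - v (x m) := by
    intro m
    have := Fin.sum_univ_succAbove (fun a => v (x a)) m
    simp only [Function.comp_apply]
    linarith [this]
  simp only [hsum]
  rw [← Finset.sum_div, Finset.sum_sub_distrib, Finset.sum_const, Finset.card_univ,
    Fintype.card_fin, nsmul_eq_mul]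
  push_cast
  have hN' : (N:ℝ) ≠ 0 := by positivity
  field_simp
  ring

lemma MN_succ_le (d : ℕ) (ℓ : ℝ → ℝ≥0∞) (N : ℕ) (hN : 2 ≤ N)
    (v : EuclideanSpace ℝ (Fin d) → ℝ) : MN d ℓ (N+1) v ≤ MN d ℓ N v := by
  conv_lhs => rw [MN]
  apply iSup_le
  intro x
  by_cases hc : pairCost d ℓ (N+1) x = ⊤
  · rw [hc, EReal.coe_ennreal_top, EReal.sub_top]
    exact bot_le
  have hNR : (2:ℝ) ≤ (N:ℝ) := by exact_mod_cast hN
  have hT : Tsum d ℓ (N+1) x ≠ ⊤ := by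
    intro h
    exact hc (by rw [pairCost_eq, h, ENNReal.mul_top (kappa_ne_zero (N+1) (by omega))])
  have hdel := Tsum_del d ℓ N x
  have hTm : ∀ m : Fin (N+1), Tsum d ℓ N (x ∘ m.succAbove) ≠ ⊤ := by
    intro m h
    have hle : Tsum d ℓ N (x ∘ m.succAbove) ≤ ∑ m' : Fin (N+1), Tsum d ℓ N (x ∘ m'.succAbove) :=
      Finset.single_le_sum (f := fun m' : Fin (N+1) => Tsum d ℓ N (x ∘ m'.succAbove))
        (fun _ _ => zero_le) (Finset.mem_univ m)
    rw [h, top_le_iff, hdel] at hle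
    exact ENNReal.mul_ne_top (ENNReal.natCast_ne_top _) hT hle
  have hcm : ∀ m : Fin (N+1), pairCost d ℓ N (x ∘ m.succAbove) ≠ ⊤ := by
    intro m
    rw [pairCost_eq]
    exact ENNReal.mul_ne_top (kappa_ne_top N hN) (hTm m)
  set t := (Tsum d ℓ (N+1) x).toReal with ht
  set tm := fun m : Fin (N+1) => (Tsum d ℓ N (x ∘ m.succAbove)).toReal with htm
  have hsum_t : ∑ m : Fin (N+1), tm m = ((N:ℝ) - 1) * t := by
    have h2 := congrArg ENNReal.toReal hdel
    rw [ENNReal.toReal_mul, ENNReal.toReal_natCast, ENNReal.toReal_sum (fun m _ => hTm m)] at h2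
    rw [htm]
    rw [h2, Nat.cast_sub (by omega : 1 ≤ N)]
    norm_num
    left; rfl
  set c' := (pairCost d ℓ (N+1) x).toReal with hc'
  set cm := fun m : Fin (N+1) => (pairCost d ℓ N (x ∘ m.succAbove)).toReal with hcmdef
  have hc'_eq : c' = 2 / (((N:ℝ)+1) * (((N:ℝ)+1) - 1)) * t := by
    rw [hc', pairCost_eq, ENNReal.toReal_mul, kappa_toReal (N+1) (by omega)]
    push_cast
    try ring
  have hcm_eq : ∀ m, cm m = 2 / ((N:ℝ) * ((N:ℝ) - 1)) * tm m := by
    intro m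
    rw [hcmdef]
    simp only
    rw [pairCost_eq, ENNReal.toReal_mul, kappa_toReal N hN]
  have hS := SN_del d N (by omega) v x
  have hsum_eq : ∑ m : Fin (N+1), (SN d (N+1) v x - c')
      ≤ ∑ m : Fin (N+1), (SN d N v (x ∘ m.succAbove) - cm m) := by
    apply le_of_eq
    rw [Finset.sum_sub_distrib, Finset.sum_sub_distrib, hS, Finset.sum_const,
      Finset.card_univ, Fintype.card_fin, nsmul_eq_mul]
    have h1 : ∑ m : Fin (N+1), cm m = 2 / ((N:ℝ) * ((N:ℝ) - 1)) * (((N:ℝ) - 1) * t) := by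
      simp only [hcm_eq]
      rw [← Finset.mul_sum, hsum_t]
    rw [h1, hc'_eq]
    simp only [Finset.sum_const, Finset.card_univ, Fintype.card_fin, nsmul_eq_mul]
    have hN0 : (N:ℝ) ≠ 0 := by positivity
    have hN1 : (N:ℝ) - 1 ≠ 0 := by nlinarith
    have hN2 : (N:ℝ) + 1 ≠ 0 := by positivity
    push_cast
    field_simp
    rw [show (N:ℝ) + 1 - 1 = N by ring, mul_sub, mul_div_assoc', mul_comm (N:ℝ) (2 * t),
      mul_div_assoc, div_self hN0, mul_one]
    ring
  obtain ⟨m, -, hm⟩ := Finset.exists_le_of_sum_le Finset.univ_nonempty hsum_eq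
  have step1 : ((SN d (N+1) v x : ℝ) : EReal) - ((pairCost d ℓ (N+1) x : ℝ≥0∞) : EReal)
      = ((SN d (N+1) v x - c' : ℝ) : EReal) := by
    rw [EReal.coe_sub, coe_ennreal_toReal hc]
  have step2 : ((SN d N v (x ∘ m.succAbove) - cm m : ℝ) : EReal)
      = ((SN d N v (x ∘ m.succAbove) : ℝ) : EReal)
        - ((pairCost d ℓ N (x ∘ m.succAbove) : ℝ≥0∞) : EReal) := by
    rw [EReal.coe_sub, coe_ennreal_toReal (hcm m)]
  rw [step1]
  refine le_trans (EReal.coe_le_coe_iff.mpr hm) ?_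
  rw [step2]
  exact le_iSup (fun y => ((SN d N v y : ℝ) : EReal)
    - ((pairCost d ℓ N y : ℝ≥0∞) : EReal)) (x ∘ m.succAbove)

lemma MN_mono (d : ℕ) (ℓ : ℝ → ℝ≥0∞) {N N' : ℕ} (hN : 2 ≤ N) (h : N ≤ N')
    (v : EuclideanSpace ℝ (Fin d) → ℝ) : MN d ℓ N' v ≤ MN d ℓ N v := by
  induction N', h using Nat.le_induction with
  | base => exact le_refl _
  | succ n hn ih => exact le_trans (MN_succ_le d ℓ n (le_trans hN hn) v) ih

lemma coe_le_MN (d : ℕ) (ℓ : ℝ → ℝ≥0∞) (N : ℕ) (v : EuclideanSpace ℝ (Fin d) → ℝ)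
    (x : Fin N → EuclideanSpace ℝ (Fin d)) (S' c' : ℝ) (hc'0 : 0 ≤ c')
    (hS : S' ≤ SN d N v x) (hc : pairCost d ℓ N x ≤ ENNReal.ofReal c') :
    ((S' - c' : ℝ) : EReal) ≤ MN d ℓ N v := by
  have hfin : pairCost d ℓ N x ≠ ⊤ := ne_top_of_le_ne_top ENNReal.ofReal_ne_top hc
  have h1 : (pairCost d ℓ N x).toReal ≤ c' := by
    rw [← ENNReal.toReal_ofReal hc'0]
    exact ENNReal.toReal_mono ENNReal.ofReal_ne_top hc
  have h2 : S' - c' ≤ SN d N v x - (pairCost d ℓ N x).toReal := by linarith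
  refine le_trans (EReal.coe_le_coe_iff.mpr h2) ?_
  rw [EReal.coe_sub, coe_ennreal_toReal hfin]
  exact le_iSup (fun y => ((SN d N v y : ℝ) : EReal)
    - ((pairCost d ℓ N y : ℝ≥0∞) : EReal)) x

lemma SN_abs_le (d : ℕ) (N : ℕ) (v : EuclideanSpace ℝ (Fin d) → ℝ) (V : ℝ) (hV0 : 0 ≤ V)
    (hV : ∀ x, |v x| ≤ V) (x : Fin N → EuclideanSpace ℝ (Fin d)) :
    |SN d N v x| ≤ V := by
  rcases Nat.eq_zero_or_pos N with h | h
  · subst h; simp [SN, hV0]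
  have h1 : |∑ i, v (x i)| ≤ (N : ℝ) * V := by
    refine le_trans (Finset.abs_sum_le_sum_abs _ _) ?_
    refine le_trans (Finset.sum_le_sum fun i _ => hV (x i)) ?_
    rw [Finset.sum_const, Finset.card_univ, Fintype.card_fin, nsmul_eq_mul]
  have hN : (0:ℝ) < N := by exact_mod_cast h
  rw [SN, abs_div, abs_of_pos hN, div_le_iff₀ hN]
  linarith [h1]

lemma MN_le_coe (d : ℕ) (ℓ : ℝ → ℝ≥0∞) (N : ℕ) (v : EuclideanSpace ℝ (Fin d) → ℝ)
    (V : ℝ) (hV0 : 0 ≤ V) (hV : ∀ x, |v x| ≤ V) : MN d ℓ N v ≤ (V : EReal) := by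
  rw [MN]
  apply iSup_le
  intro x
  have h1 : ((SN d N v x : ℝ) : EReal) - ((pairCost d ℓ N x : ℝ≥0∞) : EReal)
      ≤ ((SN d N v x : ℝ) : EReal) := by
    have := EReal.sub_le_sub (le_refl ((SN d N v x : ℝ) : EReal))
      (EReal.coe_ennreal_nonneg (pairCost d ℓ N x))
    simpa using this
  refine le_trans h1 ?_
  exact_mod_cast (abs_le.mp (SN_abs_le d N v V hV0 hV x)).2

lemma ereal_le_of_forall_sub {a : ℝ} {x : EReal}
    (h : ∀ ε : ℝ, 0 < ε → ((a - ε : ℝ) : EReal) ≤ x) : (a : EReal) ≤ x := by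
  by_contra hlt
  push_neg at hlt
  induction x using EReal.rec with
  | bot =>
    have h1 := h 1 one_pos
    rw [le_bot_iff] at h1
    exact EReal.coe_ne_bot _ h1
  | coe r =>
    have hr : r < a := EReal.coe_lt_coe_iff.mp hlt
    have := EReal.coe_le_coe_iff.mp (h ((a - r)/2) (by linarith))
    linarith
  | top => exact absurd hlt (not_lt.2 le_top)

lemma exists_decay (ℓ : ℝ → ℝ≥0∞) (hl : Filter.Tendsto ℓ Filter.atTop (nhds 0))
    (e : ℝ≥0∞) (he : 0 < e) : ∃ R : ℝ, 0 < R ∧ ∀ r, R ≤ r → ℓ r ≤ e := by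
  have := (ENNReal.tendsto_nhds_zero.mp hl) e he
  rw [Filter.eventually_atTop] at this
  obtain ⟨R, hR⟩ := this
  exact ⟨max R 1, lt_of_lt_of_le one_pos (le_max_right _ _),
    fun r hr => hR r (le_trans (le_max_left _ _) hr)⟩

lemma single_dist (d : ℕ) (hd : 0 < d) (s t : ℝ) :
    dist (EuclideanSpace.single (⟨0, hd⟩ : Fin d) s)
      (EuclideanSpace.single (⟨0, hd⟩ : Fin d) t) = |s - t| := by
  rw [EuclideanSpace.dist_single_same]
  rfl

lemma single_norm (d : ℕ) (hd : 0 < d) (t : ℝ) :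
    ‖EuclideanSpace.single (⟨0, hd⟩ : Fin d) t‖ = |t| := by
  rw [EuclideanSpace.norm_single]
  rfl

lemma Tsum_le_of_far (d : ℕ) (ℓ : ℝ → ℝ≥0∞) (N : ℕ)
    (x : Fin N → EuclideanSpace ℝ (Fin d)) (e : ℝ≥0∞)
    (h : ∀ i j : Fin N, i < j → ℓ (dist (x i) (x j)) ≤ e) :
    Tsum d ℓ N x ≤ ((N * N : ℕ) : ℝ≥0∞) * e := by
  have h1 : Tsum d ℓ N x ≤ ∑ _i : Fin N, ∑ _j : Fin N, e := by
    refine Finset.sum_le_sum fun i _ => Finset.sum_le_sum fun j _ => ?_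
    by_cases hij : i < j
    · rw [if_pos hij]; exact h i j hij
    · rw [if_neg hij]; exact zero_le
  refine le_trans h1 (le_of_eq ?_)
  simp only [Finset.sum_const, Finset.card_univ, Fintype.card_fin, smul_smul, nsmul_eq_mul,
    Nat.cast_mul]
  ring

lemma pairCost_le_of_Tsum (d : ℕ) (ℓ : ℝ → ℝ≥0∞) (N : ℕ) (hN : 2 ≤ N)
    (x : Fin N → EuclideanSpace ℝ (Fin d)) (a : ℝ) (ha : 0 ≤ a)
    (hT : Tsum d ℓ N x ≤ ENNReal.ofReal a) :
    pairCost d ℓ N x ≤ ENNReal.ofReal (2 / ((N:ℝ) * ((N:ℝ) - 1)) * a) := by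
  have h2 : (2:ℝ) ≤ (N:ℝ) := by exact_mod_cast hN
  have hk : (0:ℝ) ≤ 2 / ((N:ℝ) * ((N:ℝ) - 1)) := by
    apply div_nonneg (by norm_num)
    nlinarith
  rw [pairCost_eq, kappa_eq N hN, ENNReal.ofReal_mul hk]
  exact mul_le_mul_right hT _

lemma Tsum_append (d : ℕ) (ℓ : ℝ → ℝ≥0∞) (K L : ℕ)
    (y : Fin K → EuclideanSpace ℝ (Fin d)) (z : Fin L → EuclideanSpace ℝ (Fin d))
    (e : ℝ≥0∞)
    (h1 : ∀ (i : Fin K) (j : Fin L), ℓ (dist (y i) (z j)) ≤ e)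
    (h2 : ∀ i j : Fin L, i ≠ j → ℓ (dist (z i) (z j)) ≤ e) :
    Tsum d ℓ (K + L) (Fin.append y z)
      ≤ Tsum d ℓ K y + ((K * L + L * L : ℕ) : ℝ≥0∞) * e := by
  unfold Tsum
  rw [Fin.sum_univ_add]
  have inner_split : ∀ F : Fin (K + L) → ℝ≥0∞,
      ∑ j : Fin (K+L), F j = ∑ j : Fin K, F (Fin.castAdd L j) + ∑ j : Fin L, F (Fin.natAdd K j) :=
    fun F => Fin.sum_univ_add F
  simp only [inner_split]
  rw [Finset.sum_add_distrib, Finset.sum_add_distrib]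
  have hLL : ∑ i : Fin K, ∑ j : Fin K,
      (if Fin.castAdd L i < Fin.castAdd L j then
        ℓ (dist (Fin.append y z (Fin.castAdd L i)) (Fin.append y z (Fin.castAdd L j))) else 0)
      = ∑ i : Fin K, ∑ j : Fin K, (if i < j then ℓ (dist (y i) (y j)) else 0) := by
    refine Finset.sum_congr rfl fun i _ => Finset.sum_congr rfl fun j _ => ?_
    rw [Fin.append_left, Fin.append_left]
    simp only [Fin.lt_def, Fin.coe_castAdd]
  have hLR : ∑ i : Fin K, ∑ j : Fin L,
      (if Fin.castAdd L i < Fin.natAdd K j then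
        ℓ (dist (Fin.append y z (Fin.castAdd L i)) (Fin.append y z (Fin.natAdd K j))) else 0)
      ≤ ((K * L : ℕ) : ℝ≥0∞) * e := by
    have : ∀ (i : Fin K) (j : Fin L),
        (if Fin.castAdd L i < Fin.natAdd K j then
          ℓ (dist (Fin.append y z (Fin.castAdd L i)) (Fin.append y z (Fin.natAdd K j))) else 0)
        ≤ e := by
      intro i j
      rw [Fin.append_left, Fin.append_right]
      by_cases hij : Fin.castAdd L i < Fin.natAdd K j
      · rw [if_pos hij]; exact h1 i j
      · rw [if_neg hij]; exact zero_le
    refine le_trans (Finset.sum_le_sum fun i _ => Finset.sum_le_sum fun j _ => this i j) ?_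
    refine le_of_eq ?_
    simp only [Finset.sum_const, Finset.card_univ, Fintype.card_fin, smul_smul, nsmul_eq_mul,
      Nat.cast_mul]
    ring
  have hRL : ∑ i : Fin L, ∑ j : Fin K,
      (if Fin.natAdd K i < Fin.castAdd L j then
        ℓ (dist (Fin.append y z (Fin.natAdd K i)) (Fin.append y z (Fin.castAdd L j))) else 0)
      = 0 := by
    refine Finset.sum_eq_zero fun i _ => Finset.sum_eq_zero fun j _ => ?_
    rw [if_neg]
    simp only [Fin.lt_def, Fin.coe_natAdd, Fin.coe_castAdd, not_lt]
    omega
  have hRR : ∑ i : Fin L, ∑ j : Fin L,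
      (if Fin.natAdd K i < Fin.natAdd K j then
        ℓ (dist (Fin.append y z (Fin.natAdd K i)) (Fin.append y z (Fin.natAdd K j))) else 0)
      ≤ ((L * L : ℕ) : ℝ≥0∞) * e := by
    have : ∀ i j : Fin L,
        (if Fin.natAdd K i < Fin.natAdd K j then
          ℓ (dist (Fin.append y z (Fin.natAdd K i)) (Fin.append y z (Fin.natAdd K j))) else 0)
        ≤ e := by
      intro i j
      rw [Fin.append_right, Fin.append_right]
      by_cases hij : Fin.natAdd K i < Fin.natAdd K j
      · rw [if_pos hij]
        refine h2 i j fun hEq => ?_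
        rw [hEq] at hij
        exact lt_irrefl _ hij
      · rw [if_neg hij]; exact zero_le
    refine le_trans (Finset.sum_le_sum fun i _ => Finset.sum_le_sum fun j _ => this i j) ?_
    refine le_of_eq ?_
    simp only [Finset.sum_const, Finset.card_univ, Fintype.card_fin, smul_smul, nsmul_eq_mul,
      Nat.cast_mul]
    ring
  rw [hLL, hRL]
  calc (∑ i : Fin K, ∑ j : Fin K, (if i < j then ℓ (dist (y i) (y j)) else 0))
        + (∑ i : Fin K, ∑ j : Fin L, (if Fin.castAdd L i < Fin.natAdd K j then
            ℓ (dist (Fin.append y z (Fin.castAdd L i)) (Fin.append y z (Fin.natAdd K j))) else 0))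
        + (0 + ∑ i : Fin L, ∑ j : Fin L,
          (if Fin.natAdd K i < Fin.natAdd K j then
            ℓ (dist (Fin.append y z (Fin.natAdd K i)) (Fin.append y z (Fin.natAdd K j))) else 0))
      ≤ (∑ i : Fin K, ∑ j : Fin K, (if i < j then ℓ (dist (y i) (y j)) else 0))
        + ((K * L : ℕ) : ℝ≥0∞) * e + (0 + ((L * L : ℕ) : ℝ≥0∞) * e) := by
        gcongr
    _ = Tsum d ℓ K y + ((K * L + L * L : ℕ) : ℝ≥0∞) * e := by
        rw [zero_add, add_assoc, ← add_mul, ← Nat.cast_add]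
        rfl

lemma abs_coe_fin_ge_one {N : ℕ} {i j : Fin N} (h : i ≠ j) :
    (1:ℝ) ≤ |(i.val:ℝ) - (j.val:ℝ)| := by
  have hne : i.val ≠ j.val := fun hc => h (Fin.ext hc)
  rcases lt_or_gt_of_ne hne with hlt | hlt
  · have : (i.val:ℝ) + 1 ≤ (j.val:ℝ) := by exact_mod_cast hlt
    rw [abs_sub_comm, abs_of_nonneg (by linarith)]
    linarith
  · have : (j.val:ℝ) + 1 ≤ (i.val:ℝ) := by exact_mod_cast hlt
    rw [abs_of_nonneg (by linarith)]
    linarith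

lemma neg_le_MN (d : ℕ) (hd : 0 < d) (ℓ : ℝ → ℝ≥0∞)
    (hl_decay : Filter.Tendsto ℓ Filter.atTop (nhds 0))
    (v : EuclideanSpace ℝ (Fin d) → ℝ)
    (hvan : ∀ ε : ℝ, 0 < ε → ∃ R : ℝ, 0 < R ∧ ∀ x, R ≤ ‖x‖ → |v x| ≤ ε)
    (N : ℕ) (hN : 2 ≤ N) (ε : ℝ) (hε : 0 < ε) :
    ((-(5*ε) : ℝ) : EReal) ≤ MN d ℓ N v := by
  obtain ⟨R₁, hR₁, hℓR⟩ := exists_decay ℓ hl_decay (ENNReal.ofReal ε) (ENNReal.ofReal_pos.mpr hε)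
  obtain ⟨R₂, hR₂, hvR⟩ := hvan ε hε
  set R := max R₁ R₂ with hRdef
  have hR0 : 0 < R := lt_of_lt_of_le hR₁ (le_max_left _ _)
  set x : Fin N → EuclideanSpace ℝ (Fin d) :=
    fun j => EuclideanSpace.single (⟨0, hd⟩ : Fin d) (R * ((j:ℝ)+1)) with hxdef
  have hnorm : ∀ j : Fin N, R ≤ ‖x j‖ := by
    intro j
    rw [hxdef]
    simp only
    rw [single_norm d hd, abs_of_nonneg (by positivity)]
    nlinarith [j.val.cast_nonneg (α := ℝ)]
  have hdist : ∀ i j : Fin N, i ≠ j → R ≤ dist (x i) (x j) := by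
    intro i j hij
    rw [hxdef]
    simp only
    rw [single_dist d hd]
    have h1 := abs_coe_fin_ge_one hij
    calc R = R * 1 := by ring
      _ ≤ R * |(i.val:ℝ) - (j.val:ℝ)| := by nlinarith
      _ = |R * ((i:ℝ)+1) - R * ((j:ℝ)+1)| := by
          rw [show R * ((i:ℝ)+1) - R * ((j:ℝ)+1) = R * ((i.val:ℝ) - (j.val:ℝ)) from by ring,
            abs_mul, abs_of_nonneg hR0.le]
  have hS : -ε ≤ SN d N v x := by
    have h1 : ∀ j : Fin N, -ε ≤ v (x j) := by
      intro j
      have h2 := hvR (x j) (le_trans (le_max_right R₁ R₂) (hnorm j))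
      have := neg_abs_le (v (x j))
      linarith
    have h2 : (-ε) * N ≤ ∑ j, v (x j) := by
      calc (-ε) * N = ∑ _j : Fin N, (-ε) := by
            rw [Finset.sum_const, Finset.card_univ, Fintype.card_fin, nsmul_eq_mul]
            ring
        _ ≤ ∑ j, v (x j) := Finset.sum_le_sum fun j _ => h1 j
    have hN0 : (0:ℝ) < N := by
      have : (2:ℝ) ≤ (N:ℝ) := by exact_mod_cast hN
      linarith
    rw [SN, le_div_iff₀ hN0]
    exact h2
  have hNR : (2:ℝ) ≤ (N:ℝ) := by exact_mod_cast hN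
  have hT : Tsum d ℓ N x ≤ ((N*N : ℕ) : ℝ≥0∞) * ENNReal.ofReal ε :=
    Tsum_le_of_far d ℓ N x _ (fun i j hij =>
      hℓR _ (le_trans (le_max_left R₁ R₂) (hdist i j (ne_of_lt hij))))
  have hT' : Tsum d ℓ N x ≤ ENNReal.ofReal (((N*N : ℕ):ℝ) * ε) := by
    rw [ENNReal.ofReal_mul (Nat.cast_nonneg _), ENNReal.ofReal_natCast]
    exact hT
  have hc := pairCost_le_of_Tsum d ℓ N hN x _ (by positivity) hT'
  have hc4 : pairCost d ℓ N x ≤ ENNReal.ofReal (4*ε) := by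
    refine le_trans hc (ENNReal.ofReal_le_ofReal ?_)
    rw [div_mul_eq_mul_div, div_le_iff₀ (by nlinarith)]
    push_cast
    have key : (0:ℝ) ≤ ε * ((N:ℝ) - 2) * N :=
      mul_nonneg (mul_nonneg hε.le (by linarith)) (by positivity)
    nlinarith [key]
  have hfinal := coe_le_MN d ℓ N v x (-ε) (4*ε) (by positivity) hS hc4
  have heq : (-(5*ε) : ℝ) = -ε - 4*ε := by ring
  rw [heq]
  exact hfinal

lemma MN_nonneg (d : ℕ) (hd : 0 < d) (ℓ : ℝ → ℝ≥0∞)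
    (hl_decay : Filter.Tendsto ℓ Filter.atTop (nhds 0))
    (v : EuclideanSpace ℝ (Fin d) → ℝ)
    (hvan : ∀ ε : ℝ, 0 < ε → ∃ R : ℝ, 0 < R ∧ ∀ x, R ≤ ‖x‖ → |v x| ≤ ε)
    (N : ℕ) (hN : 2 ≤ N) : (0 : EReal) ≤ MN d ℓ N v := by
  have h := ereal_le_of_forall_sub (a := 0) (x := MN d ℓ N v) (fun ε hε => by
    have h1 := neg_le_MN d hd ℓ hl_decay v hvan N hN (ε/5) (by linarith)
    have heq : (0 - ε : ℝ) = -(5*(ε/5)) := by ring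
    rw [heq]
    exact h1)
  simpa using h

lemma Minf_nonneg (d : ℕ) (hd : 0 < d) (ℓ : ℝ → ℝ≥0∞)
    (hl_decay : Filter.Tendsto ℓ Filter.atTop (nhds 0))
    (v : EuclideanSpace ℝ (Fin d) → ℝ)
    (hvan : ∀ ε : ℝ, 0 < ε → ∃ R : ℝ, 0 < R ∧ ∀ x, R ≤ ‖x‖ → |v x| ≤ ε) :
    (0 : EReal) ≤ Minf d ℓ v :=
  le_iInf fun N => le_iInf fun hN => MN_nonneg d hd ℓ hl_decay v hvan N hN

lemma Minf_le_MN (d : ℕ) (ℓ : ℝ → ℝ≥0∞) (v : EuclideanSpace ℝ (Fin d) → ℝ)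
    (N : ℕ) (hN : 2 ≤ N) : Minf d ℓ v ≤ MN d ℓ N v :=
  iInf_le_of_le N (iInf_le _ hN)

set_option maxHeartbeats 1600000 in
lemma core (d : ℕ) (hd : 0 < d) (ℓ : ℝ → ℝ≥0∞)
    (hl_decay : Filter.Tendsto ℓ Filter.atTop (nhds 0))
    (v : EuclideanSpace ℝ (Fin d) → ℝ) (V : ℝ)
    (hV : ∀ x, |v x| ≤ V)
    (hvan : ∀ ε : ℝ, 0 < ε → ∃ R : ℝ, 0 < R ∧ ∀ x, R ≤ ‖x‖ → |v x| ≤ ε)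
    (θ : ℝ) (hθ0 : 0 < θ) (hθ1 : θ ≤ 1)
    (b : ℝ) (hb0 : 0 ≤ b)
    (hbM : ∀ K : ℕ, 2 ≤ K → (b : EReal) ≤ MN d ℓ K v)
    (ε : ℝ) (hε : 0 < ε) (N : ℕ) (hN2 : 2 ≤ N)
    (hNθ : 2 ≤ θ * N) (hNV : 4 * (V + ε) ≤ (ε/4) * ((N:ℝ) - 1)) :
    ((θ^2 * b - ε : ℝ) : EReal) ≤ MN d ℓ N (fun x => θ * v x) := by
  have hV0 : 0 ≤ V := le_trans (abs_nonneg _) (hV 0)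
  set δ := ε/8 with hδdef
  set ε₁ := ε/16 with hε₁def
  have hδ0 : 0 < δ := by rw [hδdef]; linarith only [hε]
  have hε₁0 : 0 < ε₁ := by rw [hε₁def]; linarith only [hε]
  have hNR : (2:ℝ) ≤ (N:ℝ) := by exact_mod_cast hN2
  have hNpos : (0:ℝ) < (N:ℝ) := by linarith only [hNR]
  -- choice of K and L
  set K := ⌈θ * (N:ℝ)⌉₊ with hKdef
  have hKge : θ * (N:ℝ) ≤ (K:ℝ) := Nat.le_ceil _
  have hKlt : (K:ℝ) < θ * (N:ℝ) + 1 := Nat.ceil_lt_add_one (by positivity)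
  have hKR : (2:ℝ) ≤ (K:ℝ) := le_trans hNθ hKge
  have hK2 : 2 ≤ K := by exact_mod_cast hKR
  have hKN : K ≤ N := by
    rw [hKdef]
    refine Nat.ceil_le.mpr ?_
    linarith only [mul_nonneg (sub_nonneg.mpr hθ1) hNpos.le]
  set L := N - K with hLdef
  have hKL : K + L = N := by omega
  have hLR : (L:ℝ) = (N:ℝ) - (K:ℝ) := by
    rw [hLdef]
    push_cast [Nat.cast_sub hKN]
    ring
  have hL0 : (0:ℝ) ≤ (L:ℝ) := Nat.cast_nonneg _
  have hLN : (L:ℝ) ≤ (N:ℝ) := by rw [hLR]; linarith only [hKR]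
  -- near-optimal configuration for M_K(v)
  have hlt : ((b - δ : ℝ) : EReal) < MN d ℓ K v :=
    lt_of_lt_of_le (EReal.coe_lt_coe_iff.mpr (by linarith only [hδ0])) (hbM K hK2)
  rw [MN, lt_iSup_iff] at hlt
  obtain ⟨y, hy⟩ := hlt
  have hcy_ne : pairCost d ℓ K y ≠ ⊤ := by
    intro hcont
    rw [hcont, EReal.coe_ennreal_top, EReal.sub_top] at hy
    exact not_lt_bot hy
  set Sy := SN d K v y with hSydef
  set cy := (pairCost d ℓ K y).toReal with hcydef
  have hy' : b - δ < Sy - cy := by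
    rw [← coe_ennreal_toReal hcy_ne, ← EReal.coe_sub] at hy
    exact EReal.coe_lt_coe_iff.mp hy
  have hcy0 : 0 ≤ cy := ENNReal.toReal_nonneg
  have hSyV : |Sy| ≤ V := SN_abs_le d K v V hV0 hV y
  have hSyub : Sy ≤ V := (abs_le.mp hSyV).2
  have hcyV : cy ≤ V + δ := by linarith only [hy', hSyub, hb0]
  have hSy_ge : -δ ≤ Sy := by linarith only [hy', hcy0, hb0]
  have hT_ne : Tsum d ℓ K y ≠ ⊤ := by
    intro h
    exact hcy_ne (by rw [pairCost_eq, h, ENNReal.mul_top (kappa_ne_zero K hK2)])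
  set t := (Tsum d ℓ K y).toReal with htdef
  have ht0 : 0 ≤ t := ENNReal.toReal_nonneg
  have hcy_eq : cy = 2 / ((K:ℝ) * ((K:ℝ) - 1)) * t := by
    rw [hcydef, pairCost_eq, ENNReal.toReal_mul, kappa_toReal K hK2]
  -- far away points
  obtain ⟨R₁, hR₁, hℓR⟩ := exists_decay ℓ hl_decay (ENNReal.ofReal ε₁)
    (ENNReal.ofReal_pos.mpr hε₁0)
  obtain ⟨R₂, hR₂, hvR⟩ := hvan ε₁ hε₁0
  set R := max R₁ R₂ with hRdef
  have hR0 : 0 < R := lt_of_lt_of_le hR₁ (le_max_left _ _)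
  set B := ∑ i : Fin K, ‖y i‖ with hBdef
  have hB0 : 0 ≤ B := Finset.sum_nonneg fun i _ => norm_nonneg _
  have hBy : ∀ i : Fin K, ‖y i‖ ≤ B := fun i =>
    Finset.single_le_sum (f := fun i => ‖y i‖) (fun _ _ => norm_nonneg _) (Finset.mem_univ i)
  set z : Fin L → EuclideanSpace ℝ (Fin d) :=
    fun j => EuclideanSpace.single (⟨0, hd⟩ : Fin d) (B + R * ((j:ℝ)+1)) with hzdef
  have hz_norm : ∀ j : Fin L, ‖z j‖ = B + R * ((j:ℝ)+1) := by
    intro j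
    rw [hzdef]
    simp only
    rw [single_norm d hd, abs_of_nonneg (by
      linarith only [hB0, hR0, mul_nonneg hR0.le (j.val.cast_nonneg (α := ℝ))])]
  have hz_far : ∀ j : Fin L, R ≤ ‖z j‖ := by
    intro j
    rw [hz_norm j]
    linarith only [hB0, mul_nonneg hR0.le (j.val.cast_nonneg (α := ℝ))]
  have hvz : ∀ j : Fin L, |v (z j)| ≤ ε₁ := fun j =>
    hvR _ (le_trans (le_max_right R₁ R₂) (hz_far j))
  have hcross : ∀ (i : Fin K) (j : Fin L), ℓ (dist (y i) (z j)) ≤ ENNReal.ofReal ε₁ := by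
    intro i j
    refine hℓR _ ?_
    have h1 : ‖z j‖ - ‖y i‖ ≤ ‖z j - y i‖ := norm_sub_norm_le _ _
    have h2 : dist (y i) (z j) = ‖z j - y i‖ := by rw [dist_comm, dist_eq_norm]
    have h3 : R * ((j:ℝ)+1) ≤ ‖z j‖ - ‖y i‖ := by
      rw [hz_norm j]
      linarith only [hBy i]
    have h4 : R ≤ R * ((j:ℝ)+1) := by
      linarith only [mul_nonneg hR0.le (j.val.cast_nonneg (α := ℝ))]
    rw [h2]
    calc R₁ ≤ R := le_max_left _ _
      _ ≤ R * ((j:ℝ)+1) := h4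
      _ ≤ ‖z j‖ - ‖y i‖ := h3
      _ ≤ ‖z j - y i‖ := h1
  have hzz : ∀ i j : Fin L, i ≠ j → ℓ (dist (z i) (z j)) ≤ ENNReal.ofReal ε₁ := by
    intro i j hij
    refine hℓR _ ?_
    rw [hzdef]
    simp only
    rw [single_dist d hd]
    have h1 := abs_coe_fin_ge_one hij
    have heq : B + R * ((i:ℝ)+1) - (B + R * ((j:ℝ)+1)) = R * ((i.val:ℝ) - (j.val:ℝ)) := by ring
    rw [heq, abs_mul, abs_of_nonneg hR0.le]
    calc R₁ ≤ R := le_max_left _ _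
      _ ≤ R * |(i.val:ℝ) - (j.val:ℝ)| := by
          linarith only [mul_nonneg hR0.le (sub_nonneg.mpr h1), hR0]
  -- cost bound
  have hTapp := Tsum_append d ℓ K L y z (ENNReal.ofReal ε₁) hcross hzz
  have hm_eq : ((K*L + L*L : ℕ):ℝ) = (K:ℝ)*(L:ℝ) + (L:ℝ)*(L:ℝ) := by push_cast; ring
  have hTapp' : Tsum d ℓ (K+L) (Fin.append y z)
      ≤ ENNReal.ofReal (t + ((K:ℝ)*(L:ℝ) + (L:ℝ)*(L:ℝ)) * ε₁) := by
    refine le_trans hTapp ?_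
    rw [ENNReal.ofReal_add ht0 (by positivity), ENNReal.ofReal_mul (by positivity)]
    rw [← hm_eq, ENNReal.ofReal_natCast]
    gcongr
    exact le_of_eq (ENNReal.ofReal_toReal hT_ne).symm
  have hcost := pairCost_le_of_Tsum d ℓ (K+L) (by omega) (Fin.append y z) _
    (by positivity) hTapp'
  have hcast : ((K+L : ℕ):ℝ) = (N:ℝ) := by exact_mod_cast congrArg (Nat.cast : ℕ → ℝ) hKL
  rw [hcast] at hcost
  set c' := 2 / ((N:ℝ) * ((N:ℝ) - 1)) * (t + ((K:ℝ)*(L:ℝ) + (L:ℝ)*(L:ℝ)) * ε₁) with hc'def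
  have hD : (0:ℝ) < (N:ℝ) * ((N:ℝ) - 1) := by
    have h1 : (0:ℝ) < (N:ℝ) - 1 := by linarith only [hNR]
    exact mul_pos hNpos h1
  have hc'0 : 0 ≤ c' := by
    rw [hc'def]
    refine mul_nonneg (div_nonneg (by norm_num) hD.le) ?_
    refine add_nonneg ht0 (mul_nonneg ?_ hε₁0.le)
    exact add_nonneg (mul_nonneg (Nat.cast_nonneg _) (Nat.cast_nonneg _))
      (mul_nonneg (Nat.cast_nonneg _) (Nat.cast_nonneg _))
  -- the configuration value bounds
  set S' := θ * ((K:ℝ) * Sy - (L:ℝ) * ε₁) / (N:ℝ) with hS'def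
  have hS' : S' ≤ SN d (K+L) (fun x => θ * v x) (Fin.append y z) := by
    rw [SN, Fin.sum_univ_add]
    simp only [Fin.append_left, Fin.append_right]
    have h1 : ∑ i : Fin K, θ * v (y i) = θ * ((K:ℝ) * Sy) := by
      rw [← Finset.mul_sum]
      congr 1
      rw [hSydef, SN]
      have hKpos : (0:ℝ) < (K:ℝ) := by linarith only [hKR]
      field_simp
    have h2 : -(θ * ((L:ℝ) * ε₁)) ≤ ∑ j : Fin L, θ * v (z j) := by
      rw [← Finset.mul_sum]
      have h3 : -((L:ℝ) * ε₁) ≤ ∑ j : Fin L, v (z j) := by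
        have h4 : ∑ _j : Fin L, (-ε₁) ≤ ∑ j : Fin L, v (z j) :=
          Finset.sum_le_sum fun j _ => by
            linarith only [neg_abs_le (v (z j)), hvz j]
        rw [Finset.sum_const, Finset.card_univ, Fintype.card_fin, nsmul_eq_mul] at h4
        linarith only [h4]
      linarith only [mul_le_mul_of_nonneg_left h3 hθ0.le]
    have hnum : θ * ((K:ℝ) * Sy - (L:ℝ) * ε₁)
        ≤ ∑ i : Fin K, θ * v (y i) + ∑ j : Fin L, θ * v (z j) := by
      rw [h1]
      linarith only [h2]
    rw [hcast, hS'def]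
    exact div_le_div_of_nonneg_right hnum hNpos.le
  have hMN := coe_le_MN d ℓ (K+L) (fun x => θ * v x) (Fin.append y z) S' c' hc'0 hS' hcost
  rw [hKL] at hMN
  refine le_trans (EReal.coe_le_coe_iff.mpr ?_) hMN
  -- the real inequality
  have hKK : (0:ℝ) < (K:ℝ) * ((K:ℝ) - 1) := by
    have h1 : (0:ℝ) < (K:ℝ) - 1 := by linarith only [hKR]
    exact mul_pos (by linarith only [hKR]) h1
  have ht_eq : 2 * t = (K:ℝ) * ((K:ℝ) - 1) * cy := by
    rw [hcy_eq]
    have hK1 : (K:ℝ) - 1 ≠ 0 := ne_of_gt (by linarith only [hKR])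
    field_simp
  have hKsq : (K:ℝ)*(K:ℝ) ≤ (θ*(N:ℝ)+1)*(θ*(N:ℝ)+1) :=
    mul_le_mul hKlt.le hKlt.le (Nat.cast_nonneg _) (by positivity)
  have hp1 : (0:ℝ) ≤ (1 - θ) * (N:ℝ) := mul_nonneg (sub_nonneg.mpr hθ1) hNpos.le
  have hp2 : (0:ℝ) ≤ (1 - θ^2) * (N:ℝ) := by
    refine mul_nonneg ?_ hNpos.le
    have hmm : (0:ℝ) ≤ (1-θ)*(1+θ) :=
      mul_nonneg (by linarith only [hθ1]) (by linarith only [hθ0.le])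
    linarith only [hmm]
  have h2 : (K:ℝ)*((K:ℝ)-1) ≤ θ^2*(N:ℝ)*((N:ℝ)-1) + 4*(N:ℝ) := by
    linarith only [hKsq, hKge, hp1, hp2, hNR]
  have hq1 : 2 / ((N:ℝ)*((N:ℝ)-1)) * t ≤ θ^2 * cy + ε/4 := by
    rw [div_mul_eq_mul_div, div_le_iff₀ hD]
    have e1 := mul_le_mul_of_nonneg_right h2 hcy0
    have e2 := mul_le_mul_of_nonneg_right hNV hNpos.le
    have hcyV2 : cy ≤ V + ε/8 := by rw [hδdef] at hcyV; exact hcyV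
    have e3 := mul_le_mul_of_nonneg_left hcyV2 (by positivity : (0:ℝ) ≤ 4*(N:ℝ))
    have e5 : (0:ℝ) ≤ (N:ℝ) * ε := mul_nonneg hNpos.le hε.le
    linarith only [ht_eq, e1, e2, e3, e5]
  have hq2 : 2 / ((N:ℝ)*((N:ℝ)-1)) * (((K:ℝ)*(L:ℝ) + (L:ℝ)*(L:ℝ)) * ε₁) ≤ 4 * ε₁ := by
    rw [div_mul_eq_mul_div, div_le_iff₀ hD]
    have hKLsum : (K:ℝ)*(L:ℝ) + (L:ℝ)*(L:ℝ) = (L:ℝ) * (N:ℝ) := by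
      rw [hLR]; ring
    rw [hKLsum]
    have e0 : (2:ℝ)*(L:ℝ) ≤ 4*((N:ℝ)-1) := by linarith only [hLN, hNR]
    have e1 := mul_le_mul_of_nonneg_right e0 (mul_nonneg hNpos.le hε₁0.le)
    linarith only [e1]
  have hc'le : c' ≤ θ^2 * cy + ε/4 + 4*ε₁ := by
    rw [hc'def, mul_add]
    linarith only [hq1, hq2]
  have haS : θ^2 * Sy - δ ≤ θ * (K:ℝ) * Sy / (N:ℝ) := by
    rw [le_div_iff₀ hNpos]
    have h1 : θ^2 * (N:ℝ) ≤ θ * (K:ℝ) := by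
      have hmm := mul_le_mul_of_nonneg_left hKge hθ0.le
      linarith only [hmm]
    have h2' : θ * (K:ℝ) ≤ θ^2 * (N:ℝ) + 1 := by
      have hmm := mul_le_mul_of_nonneg_left hKlt.le hθ0.le
      linarith only [hmm, hθ1]
    rcases le_or_gt 0 Sy with hS0 | hS0
    · have e1 := mul_le_mul_of_nonneg_right h1 hS0
      have e2 : (0:ℝ) ≤ δ * (N:ℝ) := mul_nonneg hδ0.le hNpos.le
      linarith only [e1, e2]
    · have e1 := mul_le_mul_of_nonpos_right h2' hS0.le
      have e2 : (0:ℝ) ≤ δ * ((N:ℝ) - 1) :=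
        mul_nonneg hδ0.le (by linarith only [hNR])
      linarith only [e1, e2, hSy_ge]
  have hcrossS : θ * ((L:ℝ) * ε₁) / (N:ℝ) ≤ ε₁ := by
    rw [div_le_iff₀ hNpos]
    have e1 := mul_le_mul_of_nonneg_right hθ1 (mul_nonneg hL0 hε₁0.le)
    have e2 := mul_le_mul_of_nonneg_right hLN hε₁0.le
    linarith only [e1, e2]
  have hS'eq : S' = θ * (K:ℝ) * Sy / (N:ℝ) - θ * ((L:ℝ) * ε₁) / (N:ℝ) := by
    rw [hS'def]; ring
  have s1 : θ^2*Sy - δ - ε₁ - (θ^2 * cy + ε/4 + 4*ε₁) ≤ S' - c' := by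
    rw [hS'eq]
    linarith only [haS, hcrossS, hc'le]
  have s2 : θ^2*(b - δ) ≤ θ^2*(Sy - cy) :=
    mul_le_mul_of_nonneg_left hy'.le (by positivity)
  have hθsq : θ^2 ≤ 1 := by
    have hmm := mul_le_mul hθ1 hθ1 hθ0.le zero_le_one
    linarith only [hmm]
  have s3 : θ^2 * δ ≤ δ := mul_le_of_le_one_left hδ0.le hθsq
  linarith only [s1, s2, s3, hδdef, hε₁def, hε]

lemma Minf_real (d : ℕ) (hd : 0 < d) (ℓ : ℝ → ℝ≥0∞)
    (hl_decay : Filter.Tendsto ℓ Filter.atTop (nhds 0))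
    (v : EuclideanSpace ℝ (Fin d) → ℝ) (V : ℝ)
    (hV : ∀ x, |v x| ≤ V)
    (hvan : ∀ ε : ℝ, 0 < ε → ∃ R : ℝ, 0 < R ∧ ∀ x, R ≤ ‖x‖ → |v x| ≤ ε) :
    ∃ b : ℝ, 0 ≤ b ∧ Minf d ℓ v = (b : EReal) := by
  have hV0 : 0 ≤ V := le_trans (abs_nonneg _) (hV 0)
  have h0 : (0:EReal) ≤ Minf d ℓ v := Minf_nonneg d hd ℓ hl_decay v hvan
  have hub : Minf d ℓ v ≤ (V:EReal) :=
    le_trans (Minf_le_MN d ℓ v 2 le_rfl) (MN_le_coe d ℓ 2 v V hV0 hV)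
  have hne_top : Minf d ℓ v ≠ ⊤ := ne_top_of_le_ne_top (EReal.coe_ne_top V) hub
  have hblt : (⊥:EReal) < Minf d ℓ v :=
    lt_of_lt_of_le (by simpa using EReal.bot_lt_coe 0) h0
  refine ⟨(Minf d ℓ v).toReal, ?_, (EReal.coe_toReal hne_top hblt.ne').symm⟩
  have := EReal.coe_toReal hne_top hblt.ne'
  rw [← EReal.coe_nonneg (x := (Minf d ℓ v).toReal), this]
  exact h0

lemma minf_scale (d : ℕ) (hd : 0 < d) (ℓ : ℝ → ℝ≥0∞)
    (hl_decay : Filter.Tendsto ℓ Filter.atTop (nhds 0))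
    (v : EuclideanSpace ℝ (Fin d) → ℝ) (V : ℝ)
    (hV : ∀ x, |v x| ≤ V)
    (hvan : ∀ ε : ℝ, 0 < ε → ∃ R : ℝ, 0 < R ∧ ∀ x, R ≤ ‖x‖ → |v x| ≤ ε)
    (θ : ℝ) (hθ0 : 0 < θ) (hθ1 : θ ≤ 1)
    (b : ℝ) (hb0 : 0 ≤ b) (hbeq : Minf d ℓ v = (b : EReal)) :
    ((θ^2 * b : ℝ) : EReal) ≤ Minf d ℓ (fun x => θ * v x) := by
  have hV0 : 0 ≤ V := le_trans (abs_nonneg _) (hV 0)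
  have hbM : ∀ K : ℕ, 2 ≤ K → (b : EReal) ≤ MN d ℓ K v := fun K hK =>
    hbeq ▸ Minf_le_MN d ℓ v K hK
  refine le_iInf fun N => le_iInf fun hN => ?_
  refine ereal_le_of_forall_sub fun ε hε => ?_
  -- choose a large index N'
  set N' := max N (max (⌈2/θ⌉₊ + 1) (⌈16*(V+ε)/ε⌉₊ + 2)) with hN'def
  have hNN' : N ≤ N' := le_max_left _ _
  have hN'2 : 2 ≤ N' := le_trans hN hNN'
  have hA : (⌈2/θ⌉₊ + 1 : ℕ) ≤ N' := le_trans (le_max_left _ _) (le_max_right _ _)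
  have hC : (⌈16*(V+ε)/ε⌉₊ + 2 : ℕ) ≤ N' := le_trans (le_max_right _ _) (le_max_right _ _)
  have hcond1 : 2 ≤ θ * (N':ℝ) := by
    have h1 : 2/θ ≤ (N':ℝ) := by
      refine le_trans (Nat.le_ceil _) ?_
      have : ((⌈2/θ⌉₊ : ℕ):ℝ) ≤ ((N':ℕ):ℝ) := by
        exact_mod_cast le_trans (Nat.le_succ _) hA
      exact this
    have h2 := mul_le_mul_of_nonneg_left h1 hθ0.le
    rw [mul_div_cancel₀ _ (ne_of_gt hθ0)] at h2
    exact h2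
  have hcond2 : 4 * (V + ε) ≤ (ε/4) * ((N':ℝ) - 1) := by
    have h1 : 16*(V+ε)/ε + 2 ≤ (N':ℝ) := by
      have hcast : ((⌈16*(V+ε)/ε⌉₊ + 2 : ℕ):ℝ) ≤ ((N':ℕ):ℝ) := by exact_mod_cast hC
      push_cast at hcast
      have := Nat.le_ceil (16*(V+ε)/ε)
      linarith only [this, hcast]
    have h2 := mul_le_mul_of_nonneg_left h1 (by positivity : (0:ℝ) ≤ ε/4)
    have h3 : (ε/4) * (16*(V+ε)/ε + 2) = 4*(V+ε) + ε/2 := by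
      field_simp
      ring
    rw [h3] at h2
    nlinarith [h2, hε]
  have hcore := core d hd ℓ hl_decay v V hV hvan θ hθ0 hθ1 b hb0 hbM ε hε N' hN'2
    hcond1 hcond2
  exact le_trans hcore (MN_mono d ℓ hN hNN' (fun x => θ * v x))

lemma c0_vanish (d : ℕ) (v : ZeroAtInftyContinuousMap (EuclideanSpace ℝ (Fin d)) ℝ) :
    ∀ ε : ℝ, 0 < ε → ∃ R : ℝ, 0 < R ∧ ∀ x, R ≤ ‖x‖ → |v x| ≤ ε := by
  intro ε hε
  have h := v.zero_at_infty'
  rw [← Metric.cobounded_eq_cocompact] at h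
  have h2 := Metric.tendsto_nhds.mp h ε hε
  rw [(Metric.hasBasis_cobounded_compl_closedBall
    (0 : EuclideanSpace ℝ (Fin d))).eventually_iff] at h2
  obtain ⟨R, -, hR⟩ := h2
  refine ⟨max R 1 + 1, by positivity, fun x hx => ?_⟩
  have hx' : x ∈ (Metric.closedBall (0:EuclideanSpace ℝ (Fin d)) R)ᶜ := by
    simp only [Set.mem_compl_iff, Metric.mem_closedBall, dist_zero_right, not_le]
    nlinarith [le_max_left R 1, le_max_right R 1]
  have h3 := hR hx'
  rw [dist_zero_right] at h3
  exact le_of_lt (by simpa using h3)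

lemma c0_bound (d : ℕ) (v : ZeroAtInftyContinuousMap (EuclideanSpace ℝ (Fin d)) ℝ)
    (x : EuclideanSpace ℝ (Fin d)) : |v x| ≤ ‖v‖ := by
  have h := v.toBCF.norm_coe_le_norm x
  simpa [ZeroAtInftyContinuousMap.norm_toBCF_eq_norm] using h

end Stmt9

/-- `C_∞(θρ) ≤ θ² C_∞(ρ)` for probabilities `ρ` and `θ ∈ [0,1]`. -/
theorem statement_9 (d : ℕ) (hd : 1 ≤ d) (ℓ : ℝ → ℝ≥0∞)
    (hl_lsc : LowerSemicontinuousOn ℓ (Set.Ici 0))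
    (hl0 : 0 < ℓ 0)
    (hl_decay : Filter.Tendsto ℓ Filter.atTop (nhds 0))
    (ρ : Measure (EuclideanSpace ℝ (Fin d))) (hρ : IsProbabilityMeasure ρ)
    (θ : ℝ) (hθ0 : 0 ≤ θ) (hθ1 : θ ≤ 1) :
    Cinf d ℓ (ENNReal.ofReal θ • ρ) ≤ ((θ ^ 2 : ℝ) : EReal) * Cinf d ℓ ρ := by
  have hd0 : 0 < d := hd
  rcases eq_or_lt_of_le hθ0 with hθeq | hθpos
  · -- θ = 0
    rw [← hθeq]
    have hz : ENNReal.ofReal (0:ℝ) = 0 := by simp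
    have hz2 : (((0:ℝ)^2 : ℝ) : EReal) = (0:EReal) := by norm_num
    rw [hz, zero_smul, hz2, zero_mul]
    refine iSup_le fun v => ?_
    rw [integral_zero_measure]
    have h0 := Stmt9.Minf_nonneg d hd0 ℓ hl_decay (fun x => v x) (Stmt9.c0_vanish d v)
    calc ((0:ℝ):EReal) - Minf d ℓ (fun x => v x) ≤ ((0:ℝ):EReal) - 0 :=
          EReal.sub_le_sub le_rfl h0
      _ = 0 := by simp
  · -- 0 < θ
    refine iSup_le fun v => ?_
    set w : ZeroAtInftyContinuousMap (EuclideanSpace ℝ (Fin d)) ℝ := θ⁻¹ • v with hwdef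
    have hvw : ∀ x, v x = θ * w x := by
      intro x
      have h1 : w x = θ⁻¹ * v x := by rw [hwdef]; simp
      rw [h1]
      field_simp
    have hfun : (fun x => v x) = (fun x => θ * w x) := funext hvw
    have hI : (∫ x, v x ∂(ENNReal.ofReal θ • ρ)) = θ * ∫ x, v x ∂ρ := by
      rw [integral_smul_measure, ENNReal.toReal_ofReal hθ0, smul_eq_mul]
    have hIvw : ∫ x, v x ∂ρ = θ * ∫ x, w x ∂ρ := by
      simp_rw [hvw]
      exact integral_const_mul θ _
    obtain ⟨b, hb0, hbeq⟩ := Stmt9.Minf_real d hd0 ℓ hl_decay (fun x => w x) ‖w‖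
      (Stmt9.c0_bound d w) (Stmt9.c0_vanish d w)
    have hscale := Stmt9.minf_scale d hd0 ℓ hl_decay (fun x => w x) ‖w‖
      (Stmt9.c0_bound d w) (Stmt9.c0_vanish d w) θ hθpos hθ1 b hb0 hbeq
    have hstep : ((∫ x, v x ∂(ENNReal.ofReal θ • ρ) : ℝ):EReal) - Minf d ℓ (fun x => v x)
        ≤ ((θ^2 * ∫ x, w x ∂ρ : ℝ):EReal) - ((θ^2 * b : ℝ):EReal) := by
      refine EReal.sub_le_sub (le_of_eq ?_) ?_
      · rw [hI, hIvw]
        congr 1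
        ring
      · rw [hfun]
        exact hscale
    refine le_trans hstep ?_
    have hmul : ((θ^2 * ∫ x, w x ∂ρ : ℝ):EReal) - ((θ^2 * b : ℝ):EReal)
        = ((θ^2:ℝ):EReal) * (((∫ x, w x ∂ρ : ℝ):EReal) - ((b:ℝ):EReal)) := by
      calc ((θ^2 * ∫ x, w x ∂ρ : ℝ):EReal) - ((θ^2 * b : ℝ):EReal)
          = ((θ^2 * (∫ x, w x ∂ρ) - θ^2 * b : ℝ):EReal) := (EReal.coe_sub _ _).symm
        _ = ((θ^2 * ((∫ x, w x ∂ρ) - b) : ℝ):EReal) := by congr 1; ring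
        _ = ((θ^2:ℝ):EReal) * (((∫ x, w x ∂ρ) - b : ℝ):EReal) := EReal.coe_mul _ _
        _ = ((θ^2:ℝ):EReal) * (((∫ x, w x ∂ρ : ℝ):EReal) - ((b:ℝ):EReal)) := by
            rw [EReal.coe_sub]
    rw [hmul, ← hbeq]
    refine mul_le_mul_of_nonneg_left ?_ (EReal.coe_nonneg.mpr (by positivity))
    exact le_iSup (fun u : ZeroAtInftyContinuousMap (EuclideanSpace ℝ (Fin d)) ℝ =>
      ((∫ x, u x ∂ρ : ℝ):EReal) - Minf d ℓ (fun x => u x)) w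

end
end
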